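/- arXiv:0908.0165 — 8 statements merged into one kernel-verified Lean document; each statement's English description precedes it below -/
import Mathlib

section
/- Let C be an open nondegenerate convex cone in a finite-dimensional real vector space V, let F be a face of the closure of C, and let V^F denote the common zero set of all linear forms ξ ∈ C* (the dual cone) that vanish on F. Then for any p ∈ C + V^F and any q in the relative interior of F, there exists λ > 0 such that p + λq ∈ C. -/
open scoped Pointwise

set_option maxHeartbeats 1000000

/-- Let `C` be an open nondegenerate convex cone in a finite-dimensional
real vector space `V`, `F` a face of `closure C`, and `V^F` the common zero set of
all linear forms in the dual cone `C*` that vanish on `F`. Then for any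
`p ∈ C + V^F` and any `q` in the relative interior of `F`, there is `λ > 0` with
`p + λ • q ∈ C`. -/
theorem stmt_1 {V : Type*} [NormedAddCommGroup V] [NormedSpace ℝ V]
    [FiniteDimensional ℝ V]
    (C : Set V) (hCopen : IsOpen C) (hCconv : Convex ℝ C) (hCne : C.Nonempty)
    (hCcone : ∀ x ∈ C, ∀ t : ℝ, 0 < t → t • x ∈ C)
    (hCnd : ∀ x v : V, v ≠ 0 → ¬ ∀ t : ℝ, x + t • v ∈ C)
    (F : Set V) (hF : IsExtreme ℝ (closure C) F)
    (p : V)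
    (hp : p ∈ C + {v : V | ∀ ξ : Module.Dual ℝ V,
      (∀ x ∈ C, 0 ≤ ξ x) → (∀ x ∈ F, ξ x = 0) → ξ v = 0})
    (q : V) (hq : q ∈ intrinsicInterior ℝ F) :
    ∃ l : ℝ, 0 < l ∧ p + l • q ∈ C := by
  obtain ⟨c, hc, v, hv, rfl⟩ := hp
  -- `q ∈ F ⊆ closure C`
  have hqF : q ∈ F := intrinsicInterior_subset hq
  have hqcl : q ∈ closure C := hF.1 hqF
  -- sum of an element of `C` and an element of `closure C` lies in `C`
  have hadd : ∀ x ∈ C, ∀ y ∈ closure C, x + y ∈ C := by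
    intro x hx y hy
    have hx' : x ∈ interior C := by rwa [hCopen.interior_eq]
    have hmid : (1/2 : ℝ) • x + (1/2 : ℝ) • y ∈ interior C :=
      hCconv.combo_interior_closure_mem_interior hx' hy (by norm_num) (by norm_num)
        (by norm_num)
    have := hCcone _ (by rwa [hCopen.interior_eq] at hmid) 2 two_pos
    have h2 : (2:ℝ) • ((1/2 : ℝ) • x + (1/2 : ℝ) • y) = x + y := by
      rw [smul_add, smul_smul, smul_smul]; norm_num
    rwa [h2] at this
  -- `closure C` is stable under positive scaling
  have hclsmul : ∀ y ∈ closure C, ∀ m : ℝ, 0 < m → m • y ∈ closure C := by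
    intro y hy m hm
    have h1 : m • y ∈ (fun z => m • z) '' closure C := ⟨y, hy, rfl⟩
    have h2 : (fun z => m • z) '' closure C ⊆ closure ((fun z => m • z) '' C) :=
      image_closure_subset_closure_image (continuous_const_smul m)
    have h3 : (fun z => m • z) '' C ⊆ C := by
      rintro _ ⟨w, hw, rfl⟩; exact hCcone _ hw m hm
    exact closure_mono h3 (h2 h1)
  -- the open convex set `K = C + ℝ q`
  set K : Set V := C + (Submodule.span ℝ {q} : Set V) with hK
  by_cases hpK : c + v ∈ K
  · -- `p` is already in `C` up to a multiple of `q`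
    obtain ⟨c', hc', w, hw, hcw⟩ := hpK
    obtain ⟨t, rfl⟩ := Submodule.mem_span_singleton.1 hw
    have hcw' : c' + t • q = c + v := hcw
    refine ⟨1 + |t|, by positivity, ?_⟩
    show c + v + (1 + |t|) • q ∈ C
    rw [show c + v = c' + t • q from hcw'.symm]
    have hsum : c' + t • q + (1 + |t|) • q = c' + (t + (1 + |t|)) • q := by
      rw [add_assoc, ← add_smul]
    rw [hsum]
    rcases eq_or_lt_of_le (by have := neg_abs_le t; linarith : (0:ℝ) ≤ t + (1 + |t|)) with h0 | h0
    · rw [← h0, zero_smul, add_zero]; exact hc'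
    · exact hadd _ hc' _ (hclsmul _ hqcl _ h0)
  · -- otherwise separate `p` from `K` and derive a contradiction
    exfalso
    have hKopen : IsOpen K := hCopen.add_right
    have hKconv : Convex ℝ K := hCconv.add (Submodule.span ℝ {q}).convex
    obtain ⟨f, hf⟩ := geometric_hahn_banach_point_open hKconv hKopen hpK
    have hmemK : ∀ x ∈ C, ∀ t : ℝ, x + t • q ∈ K := fun x hx t =>
      ⟨x, hx, t • q, Submodule.mem_span_singleton.2 ⟨t, rfl⟩, rfl⟩
    have hmemC : ∀ x ∈ C, x ∈ K := fun x hx => by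
      have := hmemK x hx 0; rwa [zero_smul, add_zero] at this
    -- `f q = 0`
    have hfq : f q = 0 := by
      by_contra h
      have h1 : ∀ t : ℝ, f (c + v) < f c + t * f q := by
        intro t
        have h2 := hf _ (hmemK c hc t)
        calc f (c + v) < f (c + t • q) := h2
          _ = f c + t * f q := by rw [map_add, map_smul, smul_eq_mul]
      have := h1 ((f (c + v) - f c - 1) / f q)
      rw [div_mul_cancel₀ _ h] at this
      linarith
    -- `f ≥ 0` on `C`
    have hfC : ∀ x ∈ C, 0 ≤ f x := by
      intro x hx
      by_contra h
      push_neg at h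
      set t : ℝ := (min (f (c + v)) 0 - 1) / f x with ht
      have htpos : 0 < t := div_pos_of_neg_of_neg (by have := min_le_right (f (c+v)) (0:ℝ); linarith) h
      have h1 := hf _ (hmemC _ (hCcone x hx t htpos))
      have h2 : f (t • x) = min (f (c + v)) 0 - 1 := by
        rw [map_smul, smul_eq_mul, ht, div_mul_cancel₀ _ (ne_of_lt h)]
      have := min_le_left (f (c + v)) (0:ℝ)
      linarith
    -- `f ≥ 0` on `closure C`
    have hfcl : ∀ x ∈ closure C, 0 ≤ f x := by
      intro x hx
      have hcl : closure C ⊆ {z | 0 ≤ f z} :=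
        closure_minimal hfC (isClosed_le continuous_const f.continuous)
      exact hcl hx
    -- `f` vanishes on `F` since `f q = 0` and `q` is in the relative interior of `F`
    have hfF : ∀ x ∈ F, f x = 0 := by
      intro x hx
      obtain ⟨y, hy, hyq⟩ := hq
      have hxA : x ∈ affineSpan ℝ F := subset_affineSpan ℝ F hx
      -- the path `t ↦ q + t • (q - x)` inside the affine span
      have hmem : ∀ t : ℝ, q + t • (q - x) ∈ affineSpan ℝ F := by
        intro t
        have := AffineSubspace.smul_vsub_vadd_mem (affineSpan ℝ F) t
          (subset_affineSpan ℝ F hqF) hxA (subset_affineSpan ℝ F hqF)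
        simpa [vsub_eq_sub, vadd_eq_add, add_comm] using this
      set g : ℝ → affineSpan ℝ F := fun t => ⟨q + t • (q - x), hmem t⟩ with hg
      have hgc : Continuous g :=
        Continuous.subtype_mk (continuous_const.add (continuous_id.smul continuous_const)) _
      have hg0 : g 0 = y := by
        apply Subtype.ext
        show q + (0:ℝ) • (q - x) = ↑y
        rw [zero_smul, add_zero, hyq]
      have hopen : IsOpen (g ⁻¹' interior (((↑) : affineSpan ℝ F → V) ⁻¹' F)) :=
        isOpen_interior.preimage hgc
      have h0mem : (0:ℝ) ∈ g ⁻¹' interior (((↑) : affineSpan ℝ F → V) ⁻¹' F) := by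
        simp only [Set.mem_preimage, hg0]; exact hy
      obtain ⟨ε, hε, hball⟩ := Metric.isOpen_iff.1 hopen 0 h0mem
      have hε2 : (ε/2 : ℝ) ∈ Metric.ball (0:ℝ) ε := by
        rw [Metric.mem_ball, Real.dist_eq, sub_zero, abs_of_pos (by linarith)]
        linarith
      have hgε : g (ε/2) ∈ interior (((↑) : affineSpan ℝ F → V) ⁻¹' F) := hball hε2
      have hFmem0 := interior_subset hgε
      have hFmem : q + (ε/2) • (q - x) ∈ F := hFmem0
      have h1 : 0 ≤ f (q + (ε/2) • (q - x)) := hfcl _ (hF.1 hFmem)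
      have h2 : f (q + (ε/2) • (q - x)) = -(ε/2) * f x := by
        rw [map_add, map_smul, map_sub, hfq, smul_eq_mul]; ring
      have hx0 : 0 ≤ f x := hfcl _ (hF.1 hx)
      nlinarith
    -- `f v = 0` by the defining property of `v`
    have hfv : f v = 0 := hv (f : V →ₗ[ℝ] ℝ) hfC hfF
    have := hf _ (hmemC c hc)
    rw [map_add, hfv, add_zero] at this
    exact lt_irrefl _ this
end

section
/- Let C be an open nondegenerate convex cone in a finite-dimensional real vector space V and let K ⊆ closure(C) be a kernel for C, i.e., a nonempty convex subset with 0 ∉ closure(K) and K + C ⊆ K. Define K^∨ = {ξ ∈ V* : ξ(x) ≥ 1 for all x ∈ K}. Then (K^∨)^∨ = closure(K) (where the second dual is taken back in V via the canonical identification V** ≅ V). -/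
open scoped Pointwise

/-- If `K` is a kernel for the open nondegenerate convex cone `C`
(a nonempty convex subset of `closure C` with `0 ∉ closure K` and `K + C ⊆ K`),
then the double dual `(K^∨)^∨` (taken in `V` via `V** ≅ V`) equals `closure K`,
where `K^∨ = {ξ ∈ V* | ξ ≥ 1 on K}`. -/
theorem stmt_2 {V : Type*} [NormedAddCommGroup V] [NormedSpace ℝ V]
    [FiniteDimensional ℝ V]
    (C : Set V) (hCopen : IsOpen C) (hCconv : Convex ℝ C) (hCne : C.Nonempty)
    (hCcone : ∀ x ∈ C, ∀ t : ℝ, 0 < t → t • x ∈ C)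
    (hCnd : ∀ x v : V, v ≠ 0 → ¬ ∀ t : ℝ, x + t • v ∈ C)
    (K : Set V) (hKne : K.Nonempty) (hKconv : Convex ℝ K)
    (hKsub : K ⊆ closure C) (hK0 : (0 : V) ∉ closure K)
    (hKC : K + C ⊆ K) :
    {x : V | ∀ ξ : Module.Dual ℝ V, (∀ y ∈ K, 1 ≤ ξ y) → 1 ≤ ξ x} = closure K := by
  -- scaling lemma: (1+t) • y ∈ closure K for y ∈ K, t ≥ 0
  have hKCl : ∀ y ∈ K, ∀ v ∈ closure C, y + v ∈ closure K := by
    intro y hy v hv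
    have h1 : (y + ·) '' closure C ⊆ closure ((y + ·) '' C) :=
      image_closure_subset_closure_image (continuous_add_left y)
    have h2 : (y + ·) '' C ⊆ K := by
      rintro _ ⟨c, hc, rfl⟩
      exact hKC (Set.add_mem_add hy hc)
    exact (closure_mono h2) (h1 ⟨v, hv, rfl⟩)
  have hClC : ∀ v ∈ closure C, ∀ t : ℝ, 0 < t → t • v ∈ closure C := by
    intro v hv t ht
    have h1 : (t • ·) '' closure C ⊆ closure ((t • ·) '' C) :=
      image_closure_subset_closure_image (continuous_const_smul t)
    have h2 : (t • ·) '' C ⊆ C := by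
      rintro _ ⟨c, hc, rfl⟩
      exact hCcone c hc t ht
    exact (closure_mono h2) (h1 ⟨v, hv, rfl⟩)
  have hscale : ∀ y ∈ K, ∀ t : ℝ, 0 ≤ t → y + t • y ∈ closure K := by
    intro y hy t ht
    rcases eq_or_lt_of_le ht with rfl | ht
    · simpa using subset_closure hy
    · exact hKCl y hy _ (hClC y (hKsub hy) t ht)
  ext x
  simp only [Set.mem_setOf_eq]
  constructor
  · intro hx
    by_contra hxK
    obtain ⟨f, c, hfx, hfK⟩ :=
      geometric_hahn_banach_point_closed hKconv.closure isClosed_closure hxK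
    obtain ⟨g, d, hg0, hgK⟩ :=
      geometric_hahn_banach_point_closed hKconv.closure isClosed_closure hK0
    have hd : 0 < d := by simpa using hg0
    have hf0 : ∀ y ∈ K, 0 ≤ f y := by
      intro y hy
      by_contra h
      push_neg at h
      have hcy : c < f y := hfK y (subset_closure hy)
      have hc0 : c < 0 := hcy.trans h
      have hdiv : 1 < c / f y := (one_lt_div_of_neg h).2 hcy
      have ht0 : (0:ℝ) ≤ c / f y - 1 := by linarith
      have h2 := hfK _ (hscale y hy _ ht0)
      rw [map_add, map_smul, smul_eq_mul] at h2
      have hne : f y ≠ 0 := h.ne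
      have h3 : f y + (c / f y - 1) * f y = c := by
        field_simp
        ring
      linarith
    rcases lt_or_ge 0 c with hc | hc
    · have h1 := hx (c⁻¹ • (f : V →ₗ[ℝ] ℝ)) ?_
      · simp only [LinearMap.smul_apply, ContinuousLinearMap.coe_coe, smul_eq_mul] at h1
        nlinarith [mul_inv_cancel₀ hc.ne', inv_pos.2 hc]
      · intro y hy
        have := hfK y (subset_closure hy)
        simp only [LinearMap.smul_apply, ContinuousLinearMap.coe_coe, smul_eq_mul]
        nlinarith [mul_inv_cancel₀ hc.ne', inv_pos.2 hc]
    · have hfx0 : f x < 0 := lt_of_lt_of_le hfx hc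
      have hgKd : ∀ y ∈ K, 1 ≤ d⁻¹ * g y := by
        intro y hy
        have := hgK y (subset_closure hy)
        nlinarith [mul_inv_cancel₀ hd.ne', inv_pos.2 hd]
      by_cases hgx : g x < d
      · have h1 := hx (d⁻¹ • (g : V →ₗ[ℝ] ℝ)) ?_
        · simp only [LinearMap.smul_apply, ContinuousLinearMap.coe_coe, smul_eq_mul] at h1
          nlinarith [mul_inv_cancel₀ hd.ne', inv_pos.2 hd]
        · intro y hy
          simpa using hgKd y hy
      · push_neg at hgx
        set t : ℝ := (d⁻¹ * g x + 1) / (-f x) with htdef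
        have ht0 : 0 < t := by
          apply div_pos
          · nlinarith [inv_pos.2 hd]
          · linarith
        have h1 := hx (d⁻¹ • (g : V →ₗ[ℝ] ℝ) + t • (f : V →ₗ[ℝ] ℝ)) ?_
        · simp only [LinearMap.add_apply, LinearMap.smul_apply,
            ContinuousLinearMap.coe_coe, smul_eq_mul] at h1
          have h2 : t * (-f x) = d⁻¹ * g x + 1 := by
            rw [htdef]
            exact div_mul_cancel₀ _ (neg_ne_zero.2 hfx0.ne)
          nlinarith
        · intro y hy
          simp only [LinearMap.add_apply, LinearMap.smul_apply,
            ContinuousLinearMap.coe_coe, smul_eq_mul]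
          have h2 := hgKd y hy
          have h3 := hf0 y hy
          nlinarith
  · intro hx ξ hξ
    have hcont : Continuous ξ := LinearMap.continuous_of_finiteDimensional ξ
    have hsub : closure K ⊆ {y | 1 ≤ ξ y} :=
      closure_minimal hξ (isClosed_le continuous_const hcont)
    exact hsub hx
end

section
/- Let C be an open nondegenerate convex cone in a finite-dimensional real vector space V, and let Λ be a discrete subset of closure(C). Then the set [Λ] + closure(C) (the Minkowski sum of the convex hull of Λ with the closed cone) is closed in V, and every extreme point of [Λ] + closure(C) belongs to Λ. -/
open scoped Pointwise
open Filter Topology Set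

private lemma stmt3_sum_transfer {N : ℕ} {ι : Type*} [Fintype ι] (f : ι ↪ Fin N)
    {β : Type*} [AddCommMonoid β] (F : Fin N → β)
    (hF : ∀ j, (¬ ∃ i, f i = j) → F j = 0) :
    ∑ j, F j = ∑ i, F (f i) := by
  rw [← Finset.sum_map Finset.univ f F]
  refine (Finset.sum_subset (Finset.subset_univ _) ?_).symm
  intro j _ hj
  exact hF j (by simpa [Finset.mem_map] using hj)

private lemma stmt3_pad {V : Type*} [NormedAddCommGroup V] [NormedSpace ℝ V]
    [FiniteDimensional ℝ V] {Λ : Set V} {l0 : V} (hl0 : l0 ∈ Λ) {a : V}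
    (ha : a ∈ convexHull ℝ Λ) :
    ∃ (w : Fin (Module.finrank ℝ V + 1) → ℝ) (g : Fin (Module.finrank ℝ V + 1) → V),
      (∀ i, 0 ≤ w i) ∧ ∑ i, w i = 1 ∧ (∀ i, g i ∈ Λ) ∧ ∑ i, w i • g i = a := by
  classical
  obtain ⟨ι, hι, z, w, hrange, hindep, hpos, hsum1, hsum⟩ :=
    eq_pos_convex_span_of_mem_convexHull ha
  have hcard : Fintype.card ι ≤ Module.finrank ℝ V + 1 := by
    calc Fintype.card ι ≤ Module.finrank ℝ (vectorSpan ℝ (Set.range z)) + 1 :=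
          hindep.card_le_finrank_succ
      _ ≤ Module.finrank ℝ V + 1 := Nat.add_le_add_right (Submodule.finrank_le _) 1
  obtain ⟨f⟩ : Nonempty (ι ↪ Fin (Module.finrank ℝ V + 1)) :=
    Function.Embedding.nonempty_of_card_le (by simpa using hcard)
  have hWf : ∀ i, Function.extend f w (fun _ => 0) (f i) = w i :=
    fun i => f.injective.extend_apply _ _ _
  have hGf : ∀ i, Function.extend f z (fun _ => l0) (f i) = z i :=
    fun i => f.injective.extend_apply _ _ _
  refine ⟨Function.extend f w (fun _ => 0), Function.extend f z (fun _ => l0), ?_, ?_, ?_, ?_⟩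
  · intro j
    by_cases h : ∃ i, f i = j
    · obtain ⟨i, rfl⟩ := h; rw [hWf]; exact (hpos i).le
    · rw [Function.extend_apply' _ _ _ h]
  · rw [stmt3_sum_transfer f (Function.extend (⇑f) w (fun _ => 0))
      (fun j hj => Function.extend_apply' _ _ _ hj)]
    simp_rw [hWf]; exact hsum1
  · intro j
    by_cases h : ∃ i, f i = j
    · obtain ⟨i, rfl⟩ := h; rw [hGf]; exact hrange (Set.mem_range_self i)
    · rw [Function.extend_apply' _ _ _ h]; exact hl0
  · rw [stmt3_sum_transfer f
      (fun j => Function.extend f w (fun _ => 0) j • Function.extend f z (fun _ => l0) j)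
      (fun j hj => by
        show Function.extend (⇑f) w (fun _ => 0) j • _ = 0
        rw [Function.extend_apply' _ _ _ hj, zero_smul])]
    simp_rw [hWf, hGf]; exact hsum

/-- If `Λ` is a discrete subset of the closure of an open
nondegenerate convex cone `C`, then `convexHull Λ + closure C` is closed and
each of its extreme points belongs to `Λ`. -/
theorem stmt_3 {V : Type*} [NormedAddCommGroup V] [NormedSpace ℝ V]
    [FiniteDimensional ℝ V]
    (C : Set V) (hCopen : IsOpen C) (hCconv : Convex ℝ C) (hCne : C.Nonempty)
    (hCcone : ∀ x ∈ C, ∀ t : ℝ, 0 < t → t • x ∈ C)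
    (hCnd : ∀ x v : V, v ≠ 0 → ¬ ∀ t : ℝ, x + t • v ∈ C)
    (Λ : Set V) (hΛsub : Λ ⊆ closure C)
    (hΛdisc : ∀ v : V, ∃ U ∈ nhds v, (U ∩ Λ).Subsingleton) :
    IsClosed (convexHull ℝ Λ + closure C) ∧
      Set.extremePoints ℝ (convexHull ℝ Λ + closure C) ⊆ Λ := by
  classical
  obtain ⟨c, hc⟩ := hCne
  set K := closure C with hKdef
  have hKclosed : IsClosed K := isClosed_closure
  have hKconv : Convex ℝ K := hCconv.closure
  have hK0 : (0 : V) ∈ K := by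
    have h1 : Tendsto (fun n : ℕ => (1 / ((n : ℝ) + 1)) • c) atTop (𝓝 ((0:ℝ) • c)) :=
      tendsto_one_div_add_atTop_nhds_zero_nat.smul_const c
    rw [zero_smul] at h1
    exact mem_closure_of_tendsto h1
      (Filter.Eventually.of_forall fun n => hCcone c hc _ (by positivity))
  have hKsmul : ∀ s : ℝ, 0 ≤ s → ∀ x ∈ K, s • x ∈ K := by
    intro s hs x hx
    rcases hs.eq_or_lt with h | h
    · rw [← h, zero_smul]; exact hK0
    · have himg := image_closure_subset_closure_image (s := C) (continuous_const_smul s)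
      have h2 := himg ⟨x, hx, rfl⟩
      refine closure_mono ?_ h2
      rintro _ ⟨y, hy, rfl⟩; exact hCcone y hy s h
  have hKadd : ∀ a ∈ K, ∀ b ∈ K, a + b ∈ K := by
    intro a ha b hb
    have h1 : (1/2 : ℝ) • a + (1/2 : ℝ) • b ∈ K :=
      hKconv ha hb (by norm_num) (by norm_num) (by norm_num)
    have h2 := hKsmul 2 (by norm_num) _ h1
    rwa [smul_add, smul_smul, smul_smul, (by norm_num : (2:ℝ) * (1/2) = 1), one_smul,
      one_smul] at h2
  have hpointed : ∀ x ∈ K, -x ∈ K → x = 0 := by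
    intro x hx hnx
    by_contra hne
    refine hCnd c x hne ?_
    intro s
    have hsx : s • x ∈ K := by
      rcases le_or_gt 0 s with h | h
      · exact hKsmul s h x hx
      · have h2 := hKsmul (-s) (by linarith) _ hnx
        rwa [neg_smul_neg] at h2
    have hmem : (1/2 : ℝ) • c + (1/2 : ℝ) • (s • x) ∈ interior C :=
      hCconv.combo_interior_closure_mem_interior (by rwa [hCopen.interior_eq]) hsx
        (by norm_num) (by norm_num) (by norm_num)
    rw [hCopen.interior_eq] at hmem
    have h2 := hCcone _ hmem 2 (by norm_num)
    rwa [smul_add, smul_smul, smul_smul, (by norm_num : (2:ℝ) * (1/2) = 1), one_smul,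
      one_smul] at h2
  -- the separation constant
  obtain ⟨c₀, hc₀pos, hsep⟩ :
      ∃ c₀ : ℝ, 0 < c₀ ∧ ∀ a ∈ K, ∀ b ∈ K, c₀ * (‖a‖ + ‖b‖) ≤ ‖a + b‖ := by
    set S : Set (V × V) := {p | p.1 ∈ K ∧ p.2 ∈ K ∧ ‖p.1‖ + ‖p.2‖ = 1} with hSdef
    have hSclosed : IsClosed S := by
      refine ((hKclosed.preimage continuous_fst).inter
        ((hKclosed.preimage continuous_snd).inter (isClosed_eq (by fun_prop) continuous_const)))
    have hSbdd : Bornology.IsBounded S := by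
      refine (Metric.isBounded_closedBall (x := (0 : V × V)) (r := 1)).subset ?_
      rintro ⟨p, q⟩ ⟨-, -, h⟩
      simp only [Metric.mem_closedBall, dist_zero_right, Prod.norm_def]
      have := norm_nonneg p; have := norm_nonneg q
      exact max_le (by linarith) (by linarith)
    have hScompact : IsCompact S := Metric.isCompact_of_isClosed_isBounded hSclosed hSbdd
    obtain ⟨m, hmpos, hkey⟩ : ∃ m : ℝ, 0 < m ∧ ∀ p ∈ S, m ≤ ‖p.1 + p.2‖ := by
      rcases S.eq_empty_or_nonempty with hS | hS
      · exact ⟨1, one_pos, by simp [hS]⟩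
      · obtain ⟨p₀, hp₀S, hp₀min⟩ :=
          hScompact.exists_isMinOn hS (by fun_prop : Continuous fun p : V × V => ‖p.1 + p.2‖).continuousOn
        refine ⟨‖p₀.1 + p₀.2‖, ?_, fun p hp => hp₀min hp⟩
        rcases (norm_nonneg (p₀.1 + p₀.2)).eq_or_lt with h0 | h0
        · exfalso
          have hsum0 : p₀.1 + p₀.2 = 0 := by
            rwa [eq_comm, norm_eq_zero] at h0
          have hneg : p₀.1 = -p₀.2 := eq_neg_of_add_eq_zero_left hsum0
          have h2 : p₀.2 = 0 := hpointed _ hp₀S.2.1 (hneg ▸ hp₀S.1)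
          have h1 : p₀.1 = 0 := by rw [hneg, h2, neg_zero]
          have := hp₀S.2.2
          rw [h1, h2] at this; simp at this
        · exact h0
    refine ⟨m, hmpos, fun a ha b hb => ?_⟩
    rcases eq_or_lt_of_le (by positivity : (0:ℝ) ≤ ‖a‖ + ‖b‖) with h | h
    · have ha0 : a = 0 := by
        rw [← norm_eq_zero]; nlinarith [norm_nonneg a, norm_nonneg b]
      have hb0 : b = 0 := by
        rw [← norm_eq_zero]; nlinarith [norm_nonneg a, norm_nonneg b]
      simp [ha0, hb0]
    · set r := (‖a‖ + ‖b‖)⁻¹ with hrdef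
      have hrpos : 0 < r := inv_pos.mpr h
      have hmemS : (r • a, r • b) ∈ S := by
        refine ⟨hKsmul r hrpos.le a ha, hKsmul r hrpos.le b hb, ?_⟩
        rw [norm_smul, norm_smul, Real.norm_eq_abs, abs_of_pos hrpos]
        rw [← mul_add, inv_mul_cancel₀ (ne_of_gt h)]
      have h2 := hkey _ hmemS
      simp only [← smul_add, norm_smul, Real.norm_eq_abs, abs_of_pos hrpos] at h2
      have h3 : m * (‖a‖ + ‖b‖) ≤ r * ‖a + b‖ * (‖a‖ + ‖b‖) :=
        mul_le_mul_of_nonneg_right h2 h.le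
      have h4 : r * (‖a‖ + ‖b‖) = 1 := inv_mul_cancel₀ (ne_of_gt h)
      calc m * (‖a‖ + ‖b‖) ≤ r * ‖a + b‖ * (‖a‖ + ‖b‖) := h3
        _ = ‖a + b‖ * (r * (‖a‖ + ‖b‖)) := by ring
        _ = ‖a + b‖ := by rw [h4, mul_one]
  have hΛclosed : IsClosed Λ := by
    rw [← closure_subset_iff_isClosed]
    intro v hv
    obtain ⟨U, hU, hUsub⟩ := hΛdisc v
    have hmeets : ∀ W ∈ nhds v, (W ∩ Λ).Nonempty := mem_closure_iff_nhds.mp hv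
    obtain ⟨wpt, hw⟩ := hmeets U hU
    by_cases hvw : v = wpt
    · rw [hvw]; exact hw.2
    · exfalso
      have hU' : U ∩ {wpt}ᶜ ∈ nhds v :=
        Filter.inter_mem hU (isOpen_compl_singleton.mem_nhds (by simpa using hvw))
      obtain ⟨u, hu⟩ := hmeets _ hU'
      have : u = wpt := hUsub ⟨hu.1.1, hu.2⟩ ⟨hw.1, hw.2⟩
      exact hu.1.2 this
  have hhullK : convexHull ℝ Λ ⊆ K := convexHull_min hΛsub hKconv
  have hhullsubP : convexHull ℝ Λ ⊆ convexHull ℝ Λ + K :=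
    fun y hy => Set.mem_add.mpr ⟨y, hy, 0, hK0, add_zero y⟩
  rcases Λ.eq_empty_or_nonempty with rfl | ⟨l0, hl0⟩
  · rw [convexHull_empty, Set.empty_add]
    exact ⟨isClosed_empty, by simp [Set.extremePoints]⟩
  constructor
  · -- closedness
    rw [← isSeqClosed_iff_isClosed]
    intro x z hxmem hxz
    choose a ha b hb hab using fun n => Set.mem_add.mp (hxmem n)
    obtain ⟨M, hM⟩ : ∃ M : ℝ, ∀ n, ‖x n‖ ≤ M := by
      obtain ⟨M, hM⟩ := hxz.norm.bddAbove_range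
      exact ⟨M, fun n => hM (Set.mem_range_self n)⟩
    have haK : ∀ n, a n ∈ K := fun n => hhullK (ha n)
    have hanorm : ∀ n, ‖a n‖ ≤ M / c₀ := by
      intro n
      have h1 := hsep _ (haK n) _ (hb n)
      rw [hab n] at h1
      rw [le_div_iff₀ hc₀pos]
      nlinarith [norm_nonneg (b n), hM n]
    set N := Module.finrank ℝ V + 1 with hNdef
    choose w g hw0 hw1 hgΛ hsum using fun n => stmt3_pad hl0 (ha n)
    set B := M / c₀ / c₀ with hBdef
    have hterm : ∀ n i, ‖w n i • g n i‖ ≤ B := by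
      intro n i
      have hrest : ∑ j ∈ Finset.univ.erase i, w n j • g n j ∈ K :=
        Finset.sum_induction _ (· ∈ K) (fun u v hu hv => hKadd u hu v hv) hK0
          (fun j _ => hKsmul _ (hw0 n j) _ (hΛsub (hgΛ n j)))
      have hi : w n i • g n i ∈ K := hKsmul _ (hw0 n i) _ (hΛsub (hgΛ n i))
      have heq : w n i • g n i + ∑ j ∈ Finset.univ.erase i, w n j • g n j = a n :=
        (Finset.add_sum_erase _ (fun j => w n j • g n j) (Finset.mem_univ i)).trans (hsum n)
      have h1 := hsep _ hi _ hrest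
      rw [heq] at h1
      rw [hBdef, le_div_iff₀ hc₀pos]
      nlinarith [norm_nonneg (∑ j ∈ Finset.univ.erase i, w n j • g n j), hanorm n]
    have hKball : IsCompact (K ∩ Metric.closedBall 0 (M / c₀)) :=
      (isCompact_closedBall 0 (M / c₀)).inter_left hKclosed
    have h𝒦 : IsCompact ((K ∩ Metric.closedBall 0 (M / c₀)) ×ˢ
        (Set.pi Set.univ fun _ : Fin N => Set.Icc (0:ℝ) 1)) :=
      hKball.prod (isCompact_univ_pi fun _ => isCompact_Icc)
    have hqmem : ∀ n, (a n, w n) ∈ (K ∩ Metric.closedBall 0 (M / c₀)) ×ˢ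
        (Set.pi Set.univ fun _ : Fin N => Set.Icc (0:ℝ) 1) := by
      intro n
      refine ⟨⟨haK n, by simpa [Metric.mem_closedBall, dist_zero_right] using hanorm n⟩, ?_⟩
      intro i _
      refine ⟨hw0 n i, ?_⟩
      calc w n i ≤ ∑ j, w n j := Finset.single_le_sum (fun j _ => hw0 n j) (Finset.mem_univ i)
        _ = 1 := hw1 n
    obtain ⟨⟨α, t⟩, h𝒦mem, φ, hφmono, hφt⟩ := h𝒦.tendsto_subseq hqmem
    have hφa : Tendsto (fun n => a (φ n)) atTop (𝓝 α) := by
      have h1 := (continuous_fst.tendsto (α, t)).comp hφt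
      simpa [Function.comp_def] using h1
    have hφw : ∀ i, Tendsto (fun n => w (φ n) i) atTop (𝓝 (t i)) := by
      have h1 := (continuous_snd.tendsto (α, t)).comp hφt
      intro i
      exact tendsto_pi_nhds.mp (by simpa [Function.comp_def] using h1) i
    have ht0 : ∀ i, 0 ≤ t i := fun i => (h𝒦mem.2 i (Set.mem_univ i)).1
    have htsum : ∑ i, t i = 1 := by
      have h1 : Tendsto (fun n => ∑ i, w (φ n) i) atTop (𝓝 (∑ i, t i)) :=
        tendsto_finset_sum _ fun i _ => hφw i
      have h2 : (fun n => ∑ i, w (φ n) i) = fun _ => (1:ℝ) := funext fun n => hw1 (φ n)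
      rw [h2] at h1
      exact (tendsto_nhds_unique h1 tendsto_const_nhds)
    set NZ : Finset (Fin N) := Finset.univ.filter (fun i => t i ≠ 0) with hNZdef
    have hNZsum : ∑ i ∈ NZ, t i = 1 := by
      rw [hNZdef, Finset.sum_filter_ne_zero]; exact htsum
    have hev : ∀ᶠ n in atTop, ∀ i ∈ NZ, t i / 2 ≤ w (φ n) i := by
      rw [eventually_all_finset]
      intro i hi
      have hipos : 0 < t i := (ht0 i).lt_of_ne (Ne.symm (by simpa [hNZdef] using hi))
      exact (hφw i).eventually (eventually_ge_nhds (by linarith))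
    obtain ⟨n₀, hn₀⟩ := eventually_atTop.mp hev
    have hB0 : 0 ≤ B := le_trans (norm_nonneg _) (hterm 0 ⟨0, by omega⟩)
    set D : Fin N → Set V := fun i =>
      if t i = 0 then ({0} : Set V) else K ∩ Metric.closedBall 0 (2 * B / t i) with hDdef
    have hDcompact : ∀ i, IsCompact (D i) := by
      intro i
      simp only [hDdef]
      split_ifs
      exacts [isCompact_singleton, (isCompact_closedBall 0 _).inter_left hKclosed]
    have hhmem : ∀ n, (fun i => if t i = 0 then 0 else g (φ (n + n₀)) i) ∈ Set.pi Set.univ D := by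
      intro n i _
      simp only [hDdef]
      by_cases h : t i = 0
      · simp [h]
      · rw [if_neg h, if_neg h]
        refine ⟨hΛsub (hgΛ (φ (n + n₀)) i), ?_⟩
        have hwlow : t i / 2 ≤ w (φ (n + n₀)) i :=
          hn₀ (n + n₀) (Nat.le_add_left _ _) i (by simp [hNZdef, h])
        have htpos : 0 < t i := (ht0 i).lt_of_ne (Ne.symm h)
        have hwg := hterm (φ (n + n₀)) i
        rw [norm_smul, Real.norm_eq_abs, abs_of_nonneg (hw0 _ i)] at hwg
        simp only [Metric.mem_closedBall, dist_zero_right]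
        rw [le_div_iff₀ htpos]
        nlinarith [norm_nonneg (g (φ (n + n₀)) i),
          mul_le_mul_of_nonneg_left hwlow (norm_nonneg (g (φ (n + n₀)) i))]
    obtain ⟨μ, hμmem, φ₂, hφ₂mono, hμt⟩ := (isCompact_univ_pi hDcompact).tendsto_subseq hhmem
    have hmid : Tendsto (fun n => φ₂ n + n₀) atTop atTop :=
      tendsto_atTop_mono (fun n => le_trans hφ₂mono.le_apply (Nat.le_add_right _ _)) tendsto_id
    have haρ : Tendsto (fun n => a (φ (φ₂ n + n₀))) atTop (𝓝 α) := hφa.comp hmid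
    have hwρ : ∀ i, Tendsto (fun n => w (φ (φ₂ n + n₀)) i) atTop (𝓝 (t i)) :=
      fun i => (hφw i).comp hmid
    have hgρ : ∀ i, t i ≠ 0 → Tendsto (fun n => g (φ (φ₂ n + n₀)) i) atTop (𝓝 (μ i)) := by
      intro i hi
      have h1 := tendsto_pi_nhds.mp hμt i
      simpa [Function.comp, if_neg hi] using h1
    have hxρ : Tendsto (fun n => x (φ (φ₂ n + n₀))) atTop (𝓝 z) :=
      hxz.comp (hφmono.tendsto_atTop.comp hmid)
    have hμΛ : ∀ i, t i ≠ 0 → μ i ∈ Λ := fun i hi =>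
      hΛclosed.mem_of_tendsto (hgρ i hi) (Filter.Eventually.of_forall fun n => hgΛ _ i)
    set p := ∑ i ∈ NZ, t i • μ i with hpdef
    have hpΛ : p ∈ convexHull ℝ Λ := by
      have h1 : NZ.centerMass t μ ∈ convexHull ℝ Λ :=
        NZ.centerMass_mem_convexHull (fun i _ => ht0 i) (by rw [hNZsum]; norm_num)
          (fun i hi => hμΛ i (by simpa [hNZdef] using hi))
      rwa [Finset.centerMass_eq_of_sum_1 _ _ hNZsum] at h1
    have hS : Tendsto (fun n => ∑ i ∈ NZ, w (φ (φ₂ n + n₀)) i • g (φ (φ₂ n + n₀)) i)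
        atTop (𝓝 p) := by
      rw [hpdef]
      exact tendsto_finset_sum _ fun i hi =>
        (hwρ i).smul (hgρ i (by simpa [hNZdef] using hi))
    have hRK : ∀ n, a (φ (φ₂ n + n₀)) -
        ∑ i ∈ NZ, w (φ (φ₂ n + n₀)) i • g (φ (φ₂ n + n₀)) i ∈ K := by
      intro n
      have hsplit := Finset.sum_filter_add_sum_filter_not Finset.univ (fun i => t i ≠ 0)
        (fun i => w (φ (φ₂ n + n₀)) i • g (φ (φ₂ n + n₀)) i)
      have heq : a (φ (φ₂ n + n₀)) -
          ∑ i ∈ NZ, w (φ (φ₂ n + n₀)) i • g (φ (φ₂ n + n₀)) i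
          = ∑ i ∈ Finset.univ.filter (fun i => ¬ t i ≠ 0),
              w (φ (φ₂ n + n₀)) i • g (φ (φ₂ n + n₀)) i := by
        rw [← hsum (φ (φ₂ n + n₀)), ← hsplit, hNZdef]; abel
      rw [heq]
      exact Finset.sum_induction _ (· ∈ K) (fun u v hu hv => hKadd u hu v hv) hK0
        (fun j _ => hKsmul _ (hw0 _ j) _ (hΛsub (hgΛ _ j)))
    have hαp : α - p ∈ K :=
      hKclosed.mem_of_tendsto (haρ.sub hS) (Filter.Eventually.of_forall hRK)
    have hbρ : ∀ n, x (φ (φ₂ n + n₀)) - a (φ (φ₂ n + n₀)) ∈ K := by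
      intro n
      have h1 : x (φ (φ₂ n + n₀)) - a (φ (φ₂ n + n₀)) = b (φ (φ₂ n + n₀)) := by
        rw [← hab (φ (φ₂ n + n₀))]; abel
      rw [h1]; exact hb _
    have hzα : z - α ∈ K :=
      hKclosed.mem_of_tendsto (hxρ.sub haρ) (Filter.Eventually.of_forall hbρ)
    exact Set.mem_add.mpr ⟨p, hpΛ, (α - p) + (z - α), hKadd _ hαp _ hzα, by abel⟩
  · -- extreme points
    intro z hz
    rw [mem_extremePoints] at hz
    obtain ⟨a, haΛ, b, hbK, hab⟩ := Set.mem_add.mp hz.1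
    have hb0 : b = 0 := by
      by_contra hb0
      have h1 : a ∈ convexHull ℝ Λ + K := hhullsubP haΛ
      have h2 : a + (2:ℝ) • b ∈ convexHull ℝ Λ + K :=
        Set.mem_add.mpr ⟨a, haΛ, (2:ℝ) • b, hKsmul 2 (by norm_num) b hbK, rfl⟩
      have hseg : z ∈ openSegment ℝ a (a + (2:ℝ) • b) := by
        refine ⟨1/2, 1/2, by norm_num, by norm_num, by norm_num, ?_⟩
        rw [← hab]; module
      obtain ⟨h3, -⟩ := hz.2 a h1 _ h2 hseg
      have h4 : a + b = a := hab.trans h3.symm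
      exact hb0 (by rwa [add_eq_left] at h4)
    have hzhull : z ∈ convexHull ℝ Λ := by rw [← hab, hb0, add_zero]; exact haΛ
    refine extremePoints_convexHull_subset (mem_extremePoints.mpr ⟨hzhull, ?_⟩)
    intro x₁ h₁ x₂ h₂ hseg
    exact hz.2 x₁ (hhullsubP h₁) x₂ (hhullsubP h₂) hseg
end

section
/- Let V be a finite-dimensional real vector space with lattice L, and let Y be a nonempty convex subset of V whose affine span A equals a coset of its asymptotic space as(Y). Then the image of Y in the torus V/L is dense in the image of A in V/L. -/
open scoped Pointwise

open Bornology Filter Metric Module Submodule Topology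

theorem lattice_cocompact {V : Type*} [NormedAddCommGroup V] [NormedSpace ℝ V]
    [FiniteDimensional ℝ V] (L : AddSubgroup V) (hLdisc : DiscreteTopology L)
    (hLspan : Submodule.span ℝ (L : Set V) = ⊤) :
    ∃ C : ℝ, ∀ x : V, ∃ ℓ ∈ L, ‖x - ℓ‖ ≤ C := by
  set Lz : Submodule ℤ V := AddSubgroup.toIntSubmodule L with hLz
  haveI : DiscreteTopology Lz := hLdisc
  haveI : IsZLattice ℝ Lz := ⟨by rw [AddSubgroup.coe_toIntSubmodule]; exact hLspan⟩
  haveI := ZLattice.module_free ℝ Lz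
  haveI := ZLattice.module_finite ℝ Lz
  set b := Module.Free.chooseBasis ℤ Lz
  set bR := Basis.ofZLatticeBasis ℝ Lz b with hbR
  obtain ⟨C, hC⟩ := (isBounded_iff_forall_norm_le).1 (ZSpan.fundamentalDomain_isBounded bR)
  refine ⟨C, fun x => ?_⟩
  refine ⟨(ZSpan.floor bR x : V), ?_, ?_⟩
  · have h1 : (ZSpan.floor bR x : V) ∈ Submodule.span ℤ (Set.range bR) := (ZSpan.floor bR x).2
    exact (b.ofZLatticeBasis_span ℝ).le h1
  · have := hC _ (ZSpan.fract_mem_fundamentalDomain bR x)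
    rwa [ZSpan.fract_apply] at this

theorem line_of_small {V : Type*} [NormedAddCommGroup V] [NormedSpace ℝ V]
    [FiniteDimensional ℝ V] (G : AddSubgroup V) (hG : IsClosed (G : Set V))
    (q : ℕ → V) (hmem : ∀ n, q n ∈ G) (hne : ∀ n, q n ≠ 0)
    (hlim : Tendsto q atTop (𝓝 0)) :
    ∃ e : V, ‖e‖ = 1 ∧ ∀ t : ℝ, t • e ∈ G := by
  have hnorm : ∀ n, ‖q n‖ ≠ 0 := fun n => norm_ne_zero_iff.2 (hne n)
  set u : ℕ → V := fun n => ‖q n‖⁻¹ • q n with hu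
  have humem : ∀ n, u n ∈ sphere (0 : V) 1 := by
    intro n
    simp only [hu, mem_sphere_iff_norm, sub_zero, norm_smul, norm_inv, norm_norm]
    field_simp [hnorm n]
  obtain ⟨e, hesp, φ, hφ, hconv⟩ := (isCompact_sphere (0 : V) 1).tendsto_subseq humem
  have hne1 : ‖e‖ = 1 := by simpa [mem_sphere_iff_norm] using hesp
  refine ⟨e, hne1, fun t => ?_⟩
  have hqφ : Tendsto (fun n => q (φ n)) atTop (𝓝 0) := hlim.comp hφ.tendsto_atTop
  have hqn : Tendsto (fun n => ‖q (φ n)‖) atTop (𝓝 0) := by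
    simpa using hqφ.norm
  set k : ℕ → ℤ := fun n => ⌊t / ‖q (φ n)‖⌋ with hk
  have hmem2 : ∀ n, (k n : ℝ) • q (φ n) ∈ G := by
    intro n
    rw [Int.cast_smul_eq_zsmul]
    exact zsmul_mem (hmem (φ n)) _
  have hbound : ∀ n, ‖(k n : ℝ) • q (φ n) - t • e‖ ≤ ‖q (φ n)‖ + |t| * ‖u (φ n) - e‖ := by
    intro n
    have h1 : (k n : ℝ) • q (φ n) - t • e
        = ((k n : ℝ) - t / ‖q (φ n)‖) • q (φ n) + t • (u (φ n) - e) := by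
      have : (t / ‖q (φ n)‖) • q (φ n) = t • u (φ n) := by
        rw [hu, smul_smul, div_eq_mul_inv]
      rw [sub_smul, smul_sub, this]
      abel
    rw [h1]
    refine (norm_add_le _ _).trans ?_
    gcongr
    · rw [norm_smul]
      have h2 : |(k n : ℝ) - t / ‖q (φ n)‖| ≤ 1 := by
        rw [abs_le]
        constructor
        · have := Int.lt_floor_add_one (t / ‖q (φ n)‖); push_cast at this ⊢; linarith
        · have := Int.floor_le (t / ‖q (φ n)‖); push_cast at this ⊢; linarith
      calc |(k n : ℝ) - t / ‖q (φ n)‖| * ‖q (φ n)‖ ≤ 1 * ‖q (φ n)‖ := by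
            gcongr
        _ = ‖q (φ n)‖ := one_mul _
    · rw [norm_smul, Real.norm_eq_abs]
  have htend : Tendsto (fun n => (k n : ℝ) • q (φ n)) atTop (𝓝 (t • e)) := by
    rw [tendsto_iff_norm_sub_tendsto_zero]
    have hb : Tendsto (fun n => ‖q (φ n)‖ + |t| * ‖u (φ n) - e‖) atTop (𝓝 0) := by
      have h2 : Tendsto (fun n => ‖u (φ n) - e‖) atTop (𝓝 0) := by
        have := hconv.sub_const e
        simpa using this.norm
      have := hqn.add ((h2.const_mul |t|))
      simpa using this
    exact squeeze_zero_norm (fun n => by simpa using hbound n) hb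
  exact hG.mem_of_tendsto htend (Eventually.of_forall hmem2)

theorem recession_dir {V : Type*} [NormedAddCommGroup V] [NormedSpace ℝ V]
    [FiniteDimensional ℝ V] {Y : Set V} (hconv : Convex ℝ Y)
    (hunb : ¬ IsBounded Y) :
    ∃ e : V, ‖e‖ = 1 ∧ ∀ y ∈ Y, ∀ t : ℝ, 0 ≤ t → y + t • e ∈ closure Y := by
  have hYne : Y.Nonempty := by
    by_contra h
    exact hunb (by simp [Set.not_nonempty_iff_eq_empty.1 h])
  obtain ⟨y₀, hy₀⟩ := hYne
  have hbig : ∀ n : ℕ, ∃ x ∈ Y, (n : ℝ) + ‖y₀‖ < ‖x‖ := by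
    intro n
    by_contra h
    push_neg at h
    exact hunb (isBounded_iff_forall_norm_le.2 ⟨(n : ℝ) + ‖y₀‖, h⟩)
  choose yn hyn hyn' using hbig
  set d : ℕ → ℝ := fun n => ‖yn n - y₀‖ with hd
  have hdpos : ∀ n : ℕ, (n : ℝ) < d n := by
    intro n
    have h1 : ‖yn n‖ - ‖y₀‖ ≤ d n := norm_sub_norm_le (yn n) y₀
    have := hyn' n
    linarith
  have hdne : ∀ n, d n ≠ 0 := fun n =>
    (lt_of_le_of_lt (Nat.cast_nonneg n) (hdpos n)).ne'
  set u : ℕ → V := fun n => (d n)⁻¹ • (yn n - y₀) with hu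
  have humem : ∀ n, u n ∈ sphere (0 : V) 1 := by
    intro n
    simp only [hu, mem_sphere_iff_norm, sub_zero, norm_smul, norm_inv, norm_norm]
    field_simp [hdne n]
    exact (abs_of_nonneg (norm_nonneg _)).symm
  obtain ⟨e, hesp, φ, hφ, hconv'⟩ := (isCompact_sphere (0 : V) 1).tendsto_subseq humem
  have hne1 : ‖e‖ = 1 := by simpa [mem_sphere_iff_norm] using hesp
  refine ⟨e, hne1, fun y hy t ht => ?_⟩
  -- the convex combination points
  have hdφ : Tendsto (fun n => d (φ n)) atTop atTop := by
    apply tendsto_atTop_mono (fun n => (hdpos (φ n)).le.trans (le_refl _))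
    exact tendsto_natCast_atTop_atTop.comp hφ.tendsto_atTop
  have hdφpos : ∀ᶠ n in atTop, t ≤ d (φ n) := hdφ.eventually_ge_atTop t
  set p : ℕ → V := fun n => y + (t / d (φ n)) • (yn (φ n) - y) with hp
  have hpY : ∀ᶠ n in atTop, p n ∈ Y := by
    filter_upwards [hdφpos] with n hn
    have hd0 : 0 < d (φ n) := lt_of_le_of_lt (Nat.cast_nonneg _) (hdpos (φ n))
    have hl0 : 0 ≤ t / d (φ n) := div_nonneg ht hd0.le
    have hl1 : t / d (φ n) ≤ 1 := div_le_one_of_le₀ hn hd0.le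
    have := hconv hy (hyn (φ n)) (by linarith : (0:ℝ) ≤ 1 - t / d (φ n)) hl0 (by ring)
    convert this using 1
    rw [hp]
    simp only [smul_sub, sub_smul, one_smul]
    abel
  have hptend : Tendsto p atTop (𝓝 (y + t • e)) := by
    have h1 : ∀ n, p n = y + t • u (φ n) + (t / d (φ n)) • (y₀ - y) := by
      intro n
      rw [hp, hu]
      simp only
      have h2 : (t / d (φ n)) • (yn (φ n) - y₀) = t • ((d (φ n))⁻¹ • (yn (φ n) - y₀)) := by
        rw [smul_smul, div_eq_mul_inv]
      have h3 : yn (φ n) - y = (yn (φ n) - y₀) + (y₀ - y) := by abel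
      rw [h3, smul_add, h2]
      abel
    have hA : Tendsto (fun n => t • u (φ n)) atTop (𝓝 (t • e)) := hconv'.const_smul t
    have hB : Tendsto (fun n => (t / d (φ n)) • (y₀ - y)) atTop (𝓝 ((0:ℝ) • (y₀ - y))) := by
      apply Tendsto.smul_const
      simpa using (tendsto_const_nhds.div_atTop hdφ : Tendsto (fun n => t / d (φ n)) atTop (𝓝 0))
    have h4 := (tendsto_const_nhds (x := y)).add hA |>.add hB
    simp only [zero_smul, add_zero] at h4
    exact h4.congr (fun n => (h1 n).symm)
  exact mem_closure_of_tendsto hptend hpY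

theorem ray_approx {V : Type*} [NormedAddCommGroup V] [NormedSpace ℝ V]
    [FiniteDimensional ℝ V] (L : AddSubgroup V) (hLdisc : DiscreteTopology L)
    (hLspan : Submodule.span ℝ (L : Set V) = ⊤) (x : V) (c : ℝ) {δ : ℝ} (hδ : 0 < δ) :
    ∃ t : ℝ, 0 ≤ t ∧ ∃ ℓ ∈ L, ‖c • x - t • x - ℓ‖ < δ := by
  rcases le_or_gt 0 c with hc | hc
  · exact ⟨c, hc, 0, L.zero_mem, by simp [hδ]⟩
  set s : ℝ := -c with hs
  have hs0 : 0 < s := by simpa [hs] using hc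
  obtain ⟨C, hC⟩ := lattice_cocompact L hLdisc hLspan
  have hsel : ∀ n : ℕ, ∃ ℓ ∈ L, ‖(n : ℝ) • (s • x) - ℓ‖ ≤ C := fun n => hC _
  choose ℓf hℓf hℓfC using hsel
  set g : ℕ → V := fun n => (n : ℝ) • (s • x) - ℓf n with hg
  have hgball : ∀ n, g n ∈ Metric.closedBall (0 : V) C := by
    intro n; rw [Metric.mem_closedBall, dist_zero_right]; exact hℓfC n
  obtain ⟨a, -, φ, hφ, hconv⟩ :=
    tendsto_subseq_of_bounded (Metric.isBounded_closedBall (x := (0:V)) (r := C)) hgball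
  have hcauchy : ∀ᶠ n in atTop, dist (g (φ n)) a < δ / 2 :=
    hconv (Metric.ball_mem_nhds a (by positivity))
  obtain ⟨N, hN⟩ := hcauchy.exists_forall_of_atTop
  have h1 : dist (g (φ (N + 1))) (g (φ N)) < δ := by
    have := dist_triangle_right (g (φ (N+1))) (g (φ N)) a
    have hA := hN (N+1) (by omega)
    have hB := hN N le_rfl
    linarith
  have hmono : φ N < φ (N + 1) := hφ (by omega)
  set m : ℕ := φ (N + 1) - φ N with hm
  have hm1 : 1 ≤ m := by omega
  have hcast : (φ (N + 1) : ℝ) = (φ N : ℝ) + (m : ℝ) := by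
    rw [hm, Nat.cast_sub hmono.le]; ring
  have hm1' : (1:ℝ) ≤ (m:ℝ) := by exact_mod_cast hm1
  refine ⟨((m : ℝ) - 1) * s, by nlinarith, 
    ℓf (φ N) - ℓf (φ (N + 1)), sub_mem (hℓf _) (hℓf _), ?_⟩
  have key : c • x - (((m : ℝ) - 1) * s) • x - (ℓf (φ N) - ℓf (φ (N + 1)))
      = -(g (φ (N + 1)) - g (φ N)) := by
    rw [hg]
    simp only
    rw [hcast, hs]
    module
  rw [key, norm_neg, ← dist_eq_norm]
  exact h1

universe u

theorem stmt5_aux : ∀ (n : ℕ) (V : Type u) [NormedAddCommGroup V] [NormedSpace ℝ V]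
    [FiniteDimensional ℝ V], finrank ℝ V ≤ n →
    ∀ (L : AddSubgroup V), DiscreteTopology L → Submodule.span ℝ (L : Set V) = ⊤ →
    ∀ (Y : Set V), Y.Nonempty → Convex ℝ Y →
    ∀ (W : Submodule ℝ V), (∃ r : ℝ, ∀ y ∈ Y, ∃ w ∈ W, ‖y - w‖ ≤ r) →
    (∀ W' : Submodule ℝ V, (∃ r : ℝ, ∀ y ∈ Y, ∃ w ∈ W', ‖y - w‖ ≤ r) → W ≤ W') →
    (∃ a : V, (affineSpan ℝ Y : Set V) = a +ᵥ (W : Set V)) →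
    (QuotientAddGroup.mk (s := L)) '' (affineSpan ℝ Y : Set V) ⊆
      closure ((QuotientAddGroup.mk (s := L)) '' Y) := by
  intro n
  induction n using Nat.strong_induction_on with
  | _ n IH =>
  intro V _ _ _ hV L hLdisc hLspan Y hYne hYconv W hWbdd hWmin hcoset
  obtain ⟨a, hA⟩ := hcoset
  rintro x ⟨w, hw, rfl⟩
  by_cases hbd : IsBounded Y
  · -- bounded case : W = ⊥ and Y = {a}
    have hWbot : W = ⊥ := by
      refine le_bot_iff.1 (hWmin ⊥ ?_)
      obtain ⟨r, hr⟩ := isBounded_iff_forall_norm_le.1 hbd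
      exact ⟨r, fun y hy => ⟨0, Submodule.zero_mem ⊥, by simpa using hr y hy⟩⟩
    have hsing : (affineSpan ℝ Y : Set V) = {a} := by
      rw [hA, hWbot]
      ext z
      simp [Set.mem_vadd_set]
    have haY : a ∈ Y := by
      obtain ⟨y, hy⟩ := hYne
      have h1 := subset_affineSpan ℝ Y hy
      rw [hsing, Set.mem_singleton_iff] at h1
      rwa [h1] at hy
    have hwa : w = a := by
      rw [hsing, Set.mem_singleton_iff] at hw
      exact hw
    exact subset_closure ⟨w, by rw [hwa]; exact haY, rfl⟩
  · -- unbounded case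
    obtain ⟨e, hnorme, hrec⟩ := recession_dir hYconv hbd
    have hene : e ≠ 0 := fun h => by simp [h] at hnorme
    set Se : Submodule ℝ V := Submodule.span ℝ ({e} : Set V) with hSe
    set A : AddSubgroup V := L ⊔ Se.toAddSubgroup with hA'
    set F : AddSubgroup V := A.topologicalClosure with hF
    have hFclosed : IsClosed (F : Set V) := AddSubgroup.isClosed_topologicalClosure A
    set U : Submodule ℝ V :=
      { carrier := {x | ∀ t : ℝ, t • x ∈ F},
        add_mem' := fun {x y} hx hy t => by
          rw [smul_add]; exact F.add_mem (hx t) (hy t),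
        zero_mem' := fun t => by rw [smul_zero]; exact F.zero_mem,
        smul_mem' := fun c x hx t => by rw [smul_smul]; exact hx (t * c) } with hU
    have hUmem : ∀ x : V, x ∈ U ↔ ∀ t : ℝ, t • x ∈ F := fun x => Iff.rfl
    have hUF : (U : Set V) ⊆ (F : Set V) := fun x hx => by
      have := ((hUmem x).1 hx) 1
      rwa [one_smul] at this
    have heU : e ∈ U := by
      rw [hUmem]
      intro t
      exact A.le_topologicalClosure
        (AddSubgroup.mem_sup_right ((Submodule.mem_toAddSubgroup _).2
          (Submodule.smul_mem _ t (Submodule.mem_span_singleton_self e))))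
    have hLF : ∀ ℓ ∈ L, ℓ ∈ F := fun ℓ h =>
      A.le_topologicalClosure (AddSubgroup.mem_sup_left h)
    haveI hUclosed : IsClosed (U : Set V) := Submodule.closed_of_finiteDimensional U
    obtain ⟨U', hcompl⟩ := Submodule.exists_isCompl U
    have hU'closed : IsClosed (U' : Set V) := Submodule.closed_of_finiteDimensional U'
    -- claim 1 : small elements of F ∩ U' vanish
    have claim1 : ∃ ε : ℝ, 0 < ε ∧ ∀ x : V, x ∈ F → x ∈ U' → ‖x‖ < ε → x = 0 := by
      by_contra hcon
      push_neg at hcon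
      have hq : ∀ nn : ℕ, ∃ x : V, (x ∈ F ∧ x ∈ U') ∧ ‖x‖ < 1/((nn:ℝ)+1) ∧ x ≠ 0 := by
        intro nn
        obtain ⟨x, h1, h2, h3, h4⟩ := hcon (1/((nn:ℝ)+1)) (by positivity)
        exact ⟨x, ⟨h1, h2⟩, h3, h4⟩
      choose q hq12 hq3 hq4 using hq
      have hGclosed : IsClosed ((F ⊓ U'.toAddSubgroup : AddSubgroup V) : Set V) := by
        have : ((F ⊓ U'.toAddSubgroup : AddSubgroup V) : Set V)
            = (F : Set V) ∩ (U' : Set V) := rfl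
        rw [this]
        exact hFclosed.inter hU'closed
      have hqmem : ∀ nn, q nn ∈ (F ⊓ U'.toAddSubgroup : AddSubgroup V) := fun nn =>
        AddSubgroup.mem_inf.2 ⟨(hq12 nn).1, (Submodule.mem_toAddSubgroup _).2 (hq12 nn).2⟩
      have hqlim : Tendsto q atTop (𝓝 0) := by
        apply squeeze_zero_norm (fun nn => (hq3 nn).le)
        exact tendsto_one_div_add_atTop_nhds_zero_nat
      obtain ⟨e₁, he₁, hline⟩ := line_of_small _ hGclosed q hqmem hq4 hqlim
      have he₁U : e₁ ∈ U := by
        rw [hUmem]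
        intro t
        exact (AddSubgroup.mem_inf.1 (hline t)).1
      have he₁U' : e₁ ∈ U' := by
        have := (AddSubgroup.mem_inf.1 (hline 1)).2
        rw [one_smul] at this
        exact (Submodule.mem_toAddSubgroup _).1 this
      have : e₁ = 0 := Submodule.disjoint_def.1 hcompl.disjoint e₁ he₁U he₁U'
      rw [this] at he₁
      simp at he₁
    obtain ⟨ε₁, hε₁, hclaim1⟩ := claim1
    -- the projection onto U' along U
    set Pl : V →ₗ[ℝ] V := U'.subtype.comp (U'.linearProjOfIsCompl U hcompl.symm) with hPl
    set P : V →L[ℝ] V := LinearMap.toContinuousLinearMap Pl with hP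
    have hPval : ∀ x : V, P x = Pl x := fun x => rfl
    have hPU' : ∀ x : V, P x ∈ U' := fun x => (U'.linearProjOfIsCompl U hcompl.symm x).2
    have hPker : ∀ x : V, x - P x ∈ U := by
      intro x
      have h0 := Submodule.projection_add_projection_eq_self hcompl.symm x
      have h1 : x - P x = (U.linearProjOfIsCompl U' hcompl.symm.symm x : V) := by
        rw [hPval, hPl]
        simp only [LinearMap.coe_comp, Function.comp_apply, Submodule.coe_subtype]
        exact sub_eq_iff_eq_add'.2 h0.symm
      rw [h1]
      exact (U.linearProjOfIsCompl U' hcompl.symm.symm x).2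
    -- claim 2 : lattice elements close to U lie in U
    have claim2 : ∃ ε : ℝ, 0 < ε ∧ ∀ ℓ ∈ L, ∀ u ∈ U, ‖ℓ - u‖ < ε → ℓ ∈ U := by
      refine ⟨ε₁ / (‖P‖ + 1), by positivity, fun ℓ hℓ u hu hlt => ?_⟩
      have hlu : ℓ - u ∈ F := F.sub_mem (hLF ℓ hℓ) (hUF hu)
      have hPF : P (ℓ - u) ∈ F := by
        have h1 : (ℓ - u) - P (ℓ - u) ∈ U := hPker _
        have h2 : P (ℓ - u) = (ℓ - u) - ((ℓ - u) - P (ℓ - u)) := by abel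
        rw [h2]
        exact F.sub_mem hlu (hUF h1)
      have hnorm : ‖P (ℓ - u)‖ < ε₁ := by
        have h3 := P.le_opNorm (ℓ - u)
        have h4 : ‖P‖ * ‖ℓ - u‖ ≤ ‖P‖ * (ε₁ / (‖P‖ + 1)) := by
          apply mul_le_mul_of_nonneg_left hlt.le (norm_nonneg P)
        have h5 : ‖P‖ * (ε₁ / (‖P‖ + 1)) < ε₁ := by
          rw [mul_div_assoc']
          rw [div_lt_iff₀ (by positivity)]
          nlinarith [norm_nonneg P]
        linarith
      have hP0 : P (ℓ - u) = 0 := hclaim1 _ hPF (hPU' _) hnorm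
      have h6 : ℓ - u ∈ U := by
        have := hPker (ℓ - u)
        rwa [hP0, sub_zero] at this
      have : ℓ = (ℓ - u) + u := by abel
      rw [this]
      exact U.add_mem h6 hu
    obtain ⟨ε₂, hε₂, hclaim2⟩ := claim2
    -- quotient setup
    set π := U.mkQ with hπ
    set Lb : AddSubgroup (V ⧸ U) := AddSubgroup.map π.toAddMonoidHom L with hLb
    have hLbmem : ∀ z : V ⧸ U, z ∈ Lb ↔ ∃ ℓ ∈ L, π ℓ = z := by
      intro z
      rw [hLb, AddSubgroup.mem_map]
      rfl
    haveI hLbdisc : DiscreteTopology Lb := by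
      apply discreteTopology_of_isOpen_singleton_zero
      have hset : {(0 : Lb)} = (Subtype.val) ⁻¹' (Metric.ball (0 : V ⧸ U) ε₂) := by
        ext x
        simp only [Set.mem_singleton_iff, Set.mem_preimage, mem_ball_zero_iff]
        constructor
        · rintro rfl
          simpa using hε₂
        · intro hx
          obtain ⟨ℓ, hℓ, hπℓ⟩ := (hLbmem x.1).1 x.2
          have hπℓnorm : ‖π ℓ‖ < ε₂ := by rw [hπℓ]; exact hx
          have hlift : ∃ z : V, Submodule.Quotient.mk z = π ℓ ∧ ‖z‖ < ε₂ := by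
            obtain ⟨z, hz1, hz2⟩ :=
              Submodule.Quotient.norm_mk_lt (S := U) (π ℓ) (sub_pos.2 hπℓnorm)
            exact ⟨z, hz1, by linarith⟩
          obtain ⟨z, hz1, hz2⟩ := hlift
          have hzU : ℓ - z ∈ U := by
            rw [← Submodule.Quotient.eq]
            rw [hz1, hπ, Submodule.mkQ_apply]
          have hℓU : ℓ ∈ U := by
            apply hclaim2 ℓ hℓ (ℓ - z) hzU
            simpa using hz2
          apply Subtype.ext
          rw [← hπℓ]
          simpa [hπ, Submodule.mkQ_apply, Submodule.Quotient.mk_eq_zero] using hℓU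
      rw [hset]
      exact Metric.isOpen_ball.preimage continuous_subtype_val
    have hLbspan : Submodule.span ℝ (Lb : Set (V ⧸ U)) = ⊤ := by
      have h1 : (Lb : Set (V ⧸ U)) = π '' L := by
        rw [hLb, AddSubgroup.coe_map]
        rfl
      rw [h1, Submodule.span_image, hLspan, Submodule.map_top, Submodule.range_mkQ]
    -- transferred data
    have hYbne : (π '' Y).Nonempty := hYne.image π
    have hYbconv : Convex ℝ (π '' Y) := hYconv.linear_image π
    have hAffb : (affineSpan ℝ (π '' Y) : Set (V ⧸ U)) = π '' (affineSpan ℝ Y : Set V) := by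
      have h0 := AffineSubspace.map_span (π.toAffineMap) Y
      rw [LinearMap.coe_toAffineMap] at h0
      rw [← h0, AffineSubspace.coe_map, LinearMap.coe_toAffineMap]
    have hWbbdd : ∃ r : ℝ, ∀ y ∈ (π '' Y), ∃ w ∈ W.map π, ‖y - w‖ ≤ r := by
      obtain ⟨r, hr⟩ := hWbdd
      refine ⟨r, ?_⟩
      rintro yb ⟨y, hy, rfl⟩
      obtain ⟨w', hw', hww⟩ := hr y hy
      refine ⟨π w', Submodule.mem_map_of_mem hw', ?_⟩
      rw [← map_sub]
      calc ‖π (y - w')‖ ≤ ‖y - w'‖ := by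
            rw [hπ, Submodule.mkQ_apply]
            exact Submodule.Quotient.norm_mk_le U (y - w')
        _ ≤ r := hww
    have hWbmin : ∀ W' : Submodule ℝ (V ⧸ U),
        (∃ r : ℝ, ∀ y ∈ (π '' Y), ∃ w ∈ W', ‖y - w‖ ≤ r) → W.map π ≤ W' := by
      rintro W' ⟨r, hr⟩
      have hYW : W ≤ Submodule.comap π W' := by
        apply hWmin
        refine ⟨r + 1, fun y hy => ?_⟩
        obtain ⟨wb, hwb, hwbr⟩ := hr (π y) ⟨y, hy, rfl⟩
        obtain ⟨z, hz1, hz2⟩ :=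
          Submodule.Quotient.norm_mk_lt (S := U) (π y - wb) one_pos
        refine ⟨y - z, ?_, ?_⟩
        · rw [Submodule.mem_comap, map_sub]
          have : π z = π y - wb := by rw [hπ, Submodule.mkQ_apply]; exact hz1
          rw [this]
          simpa using hwb
        · have : ‖y - (y - z)‖ = ‖z‖ := by rw [sub_sub_cancel]
          rw [this]
          linarith
      calc W.map π ≤ Submodule.map π (Submodule.comap π W') := Submodule.map_mono hYW
        _ ≤ W' := Submodule.map_comap_le π W'
    have hcosetb : ∃ ab : V ⧸ U, (affineSpan ℝ (π '' Y) : Set (V ⧸ U)) = ab +ᵥ ((W.map π) : Set (V ⧸ U)) := by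
      refine ⟨π a, ?_⟩
      rw [hAffb, hA]
      ext z
      simp only [Set.mem_image, Set.mem_vadd_set]
      constructor
      · rintro ⟨v, ⟨w', hw', rfl⟩, rfl⟩
        exact ⟨π w', Submodule.mem_map_of_mem hw', by simp [vadd_eq_add, map_add]⟩
      · rintro ⟨wb, hwb, rfl⟩
        obtain ⟨w', hw', rfl⟩ := Submodule.mem_map.1 hwb
        exact ⟨a + w', ⟨w', hw', rfl⟩, by simp [vadd_eq_add, map_add]⟩
    -- rank decrease
    have hUnebot : U ≠ ⊥ := by
      intro h
      rw [h, Submodule.mem_bot] at heU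
      exact hene heU
    have hrank : finrank ℝ (V ⧸ U) < n := by
      have h1 := Submodule.finrank_quotient_add_finrank U
      have h2 : finrank ℝ U ≠ 0 := by
        intro h
        exact hUnebot (Submodule.finrank_eq_zero.1 h)
      omega
    have hIH := IH (finrank ℝ (V ⧸ U)) hrank (V ⧸ U) le_rfl Lb hLbdisc hLbspan
      (π '' Y) hYbne hYbconv (W.map π) hWbbdd hWbmin hcosetb
    -- now assemble the approximation
    suffices hsuff : w ∈ closure {v : V | ∃ y ∈ Y, ∃ ℓ ∈ L, v = y + ℓ} by
      have hcont : Continuous (QuotientAddGroup.mk (s := L)) := QuotientAddGroup.continuous_mk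
      have h1 : QuotientAddGroup.mk (s := L) w ∈
          closure ((QuotientAddGroup.mk (s := L)) '' {v : V | ∃ y ∈ Y, ∃ ℓ ∈ L, v = y + ℓ}) :=
        image_closure_subset_closure_image hcont ⟨w, hsuff, rfl⟩
      refine closure_mono ?_ h1
      rintro z ⟨v, ⟨y, hy, ℓ, hℓ, rfl⟩, rfl⟩
      refine ⟨y, hy, ?_⟩
      rw [QuotientAddGroup.mk_add, (QuotientAddGroup.eq_zero_iff ℓ).2 hℓ, add_zero]
    rw [Metric.mem_closure_iff]
    intro ε hε
    set δ := ε / 5 with hδdef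
    have hδ : 0 < δ := by positivity
    -- step 1 : use the induction hypothesis
    have hπw : π w ∈ (affineSpan ℝ (π '' Y) : Set (V ⧸ U)) := by
      rw [hAffb]
      exact ⟨w, hw, rfl⟩
    have h2 := hIH ⟨π w, hπw, rfl⟩
    rw [Metric.mem_closure_iff] at h2
    obtain ⟨b, hb, hdb⟩ := h2 δ hδ
    obtain ⟨yb, ⟨y, hyY, rfl⟩, rfl⟩ := hb
    rw [dist_eq_norm] at hdb
    have hdb' : ‖(QuotientAddGroup.mk (s := Lb) (π w - π y))‖ < δ := by
      rwa [QuotientAddGroup.mk_sub]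
    obtain ⟨m, hm1, hm2⟩ := QuotientAddGroup.exists_norm_mk_lt (QuotientAddGroup.mk (s := Lb) (π w - π y))
      (sub_pos.2 hdb')
    have hm2' : ‖m‖ < δ := by linarith
    have hmLb : (π w - π y) - m ∈ Lb := by
      have h3 := (QuotientAddGroup.eq (s := Lb)).1 hm1
      rw [neg_add_eq_sub] at h3
      exact h3
    obtain ⟨ℓ, hℓL, hπℓ⟩ := (hLbmem _).1 hmLb
    obtain ⟨z, hz1, hz2⟩ := Submodule.Quotient.norm_mk_lt (S := U) m hδ
    have hz2' : ‖z‖ < 2 * δ := by linarith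
    set u : V := w - y - ℓ - z with hu_def
    have huU : u ∈ U := by
      have hπz : π z = m := by rw [hπ, Submodule.mkQ_apply]; exact hz1
      have hπu : π u = 0 := by
        rw [hu_def]
        simp only [map_sub]
        rw [hπℓ, hπz]
        abel
      have := (Submodule.Quotient.mk_eq_zero U).1 (by rw [← Submodule.mkQ_apply]; exact hπu)
      exact this
    -- step 2 : approximate u by an element of L ⊔ ℝe
    have huF : u ∈ closure (A : Set V) := by
      have h4 : (F : Set V) = closure (A : Set V) := AddSubgroup.topologicalClosure_coe
      rw [← h4]
      exact hUF huU
    rw [Metric.mem_closure_iff] at huF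
    obtain ⟨α, hαA, hdα⟩ := huF δ hδ
    rw [dist_eq_norm] at hdα
    obtain ⟨ℓ', hℓ', sγ, hsγ, hsum⟩ := (AddSubgroup.mem_sup).1 hαA
    obtain ⟨c, hc⟩ := (Submodule.mem_span_singleton).1 ((Submodule.mem_toAddSubgroup _).1 hsγ)
    -- step 3 : replace c • e by a nonnegative multiple modulo L
    obtain ⟨t, ht0, ℓ'', hℓ'', h3⟩ := ray_approx L hLdisc hLspan e c hδ
    -- step 4 : recession direction
    have h4 := hrec y hyY t ht0
    rw [Metric.mem_closure_iff] at h4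
    obtain ⟨y', hy', hdy'⟩ := h4 δ hδ
    rw [dist_eq_norm] at hdy'
    refine ⟨y' + (ℓ + ℓ' + ℓ''), ⟨y', hy', ℓ + ℓ' + ℓ'',
      L.add_mem (L.add_mem hℓL hℓ') hℓ'', rfl⟩, ?_⟩
    rw [dist_eq_norm]
    have hkey : w - (y' + (ℓ + ℓ' + ℓ''))
        = z + (u - α) + (c • e - t • e - ℓ'') + (y + t • e - y') := by
      rw [← hsum, ← hc, hu_def]
      abel
    rw [hkey]
    have n1 : ‖z + (u - α) + (c • e - t • e - ℓ'') + (y + t • e - y')‖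
        ≤ ‖z‖ + ‖u - α‖ + ‖c • e - t • e - ℓ''‖ + ‖y + t • e - y'‖ := by
      refine (norm_add_le _ _).trans ?_
      refine add_le_add ((norm_add_le _ _).trans ?_) le_rfl
      exact add_le_add (norm_add_le _ _) le_rfl
    have hε5 : ε = 5 * δ := by rw [hδdef]; ring
    linarith


/-- Let `L` be a lattice in `V` and `Y` a nonempty convex set whose
affine span is a coset of its asymptotic space `W = as(Y)` (the smallest linear
subspace modulo which `Y` is bounded). Then the image of `Y` in `V ⧸ L` is dense
in the image of the affine span of `Y`. -/
theorem stmt_5 {V : Type*} [NormedAddCommGroup V] [NormedSpace ℝ V]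
    [FiniteDimensional ℝ V]
    (L : AddSubgroup V) (hLdisc : DiscreteTopology L)
    (hLspan : Submodule.span ℝ (L : Set V) = ⊤)
    (Y : Set V) (hYne : Y.Nonempty) (hYconv : Convex ℝ Y)
    (W : Submodule ℝ V)
    (hWbdd : ∃ r : ℝ, ∀ y ∈ Y, ∃ w ∈ W, ‖y - w‖ ≤ r)
    (hWmin : ∀ W' : Submodule ℝ V, (∃ r : ℝ, ∀ y ∈ Y, ∃ w ∈ W', ‖y - w‖ ≤ r) → W ≤ W')
    (hcoset : ∃ a : V, (affineSpan ℝ Y : Set V) = a +ᵥ (W : Set V)) :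
    (QuotientAddGroup.mk (s := L)) '' (affineSpan ℝ Y : Set V) ⊆
      closure ((QuotientAddGroup.mk (s := L)) '' Y) := by
  exact stmt5_aux (finrank ℝ V) V le_rfl L hLdisc hLspan Y hYne hYconv W hWbdd hWmin hcoset
end

section
/- Let V be a finite-dimensional real vector space, L ⊆ V a lattice, and C an open nondegenerate convex cone. Then [C ∩ L] + closure(C) = [C ∩ L]; that is, the convex hull of the lattice points in C is stable under addition of elements of the closed cone. -/
open scoped Pointwise
open Filter Topology Set

section Auxiliary

variable {V : Type*} [NormedAddCommGroup V] [NormedSpace ℝ V] [FiniteDimensional ℝ V]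

/-- Covering lemma: every point of the real span of a subgroup is within a bounded
distance of an element of the subgroup. -/
theorem aux_cover (Λ : AddSubgroup V) :
    ∃ R : ℝ, 0 < R ∧ ∀ x ∈ Submodule.span ℝ (Λ : Set V), ∃ g ∈ Λ, ‖x - g‖ ≤ R := by
  obtain ⟨b, hbΛ, hbspan, hbli⟩ := exists_linearIndependent ℝ (Λ : Set V)
  have hbfin : b.Finite := hbli.setFinite
  refine ⟨(∑ v ∈ hbfin.toFinset, ‖v‖) + 1, by positivity, ?_⟩
  intro x hx
  rw [← hbspan] at hx
  obtain ⟨f, hfsupp, hfsum⟩ := Submodule.mem_span_set.mp hx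
  refine ⟨∑ v ∈ f.support, (⌊f v⌋ : ℝ) • v, ?_, ?_⟩
  · apply AddSubgroup.sum_mem
    intro v hv
    have hvΛ : v ∈ Λ := hbΛ (hfsupp hv)
    have h1 : (⌊f v⌋ : ℝ) • v = ⌊f v⌋ • v := by
      rw [Int.cast_smul_eq_zsmul]
    rw [h1]
    exact AddSubgroup.zsmul_mem Λ hvΛ _
  · have hx' : x = ∑ v ∈ f.support, f v • v := by
      rw [← hfsum]; rfl
    rw [hx', ← Finset.sum_sub_distrib]
    calc ‖∑ v ∈ f.support, (f v • v - (⌊f v⌋ : ℝ) • v)‖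
        ≤ ∑ v ∈ f.support, ‖f v • v - (⌊f v⌋ : ℝ) • v‖ := norm_sum_le _ _
      _ ≤ ∑ v ∈ f.support, ‖v‖ := by
          apply Finset.sum_le_sum
          intro v hv
          rw [← sub_smul, norm_smul]
          have h1 : |f v - (⌊f v⌋ : ℝ)| < 1 := by
            have h2 := Int.fract_nonneg (f v)
            have h3 := Int.fract_lt_one (f v)
            rw [Int.self_sub_floor]
            rw [abs_of_nonneg h2]
            exact h3
          have : ‖f v - (⌊f v⌋ : ℝ)‖ ≤ 1 := by
            rw [Real.norm_eq_abs]; exact h1.le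
          calc ‖f v - (⌊f v⌋:ℝ)‖ * ‖v‖ ≤ 1 * ‖v‖ :=
                mul_le_mul_of_nonneg_right this (norm_nonneg v)
            _ = ‖v‖ := one_mul _
      _ ≤ ∑ v ∈ hbfin.toFinset, ‖v‖ := by
          apply Finset.sum_le_sum_of_subset_of_nonneg
          · intro v hv
            exact hbfin.mem_toFinset.mpr (hfsupp hv)
          · intro v _ _; exact norm_nonneg v
      _ ≤ _ := by linarith

/-- Tube lemma: arbitrarily large multiples of an element of the span of `Λ` are
approximated arbitrarily well by elements of `Λ`. -/
theorem aux_tube (Λ : AddSubgroup V) {c : V} (hc : c ∈ Submodule.span ℝ (Λ : Set V))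
    {δ : ℝ} (hδ : 0 < δ) (N : ℕ) :
    ∃ q : ℕ, N < q ∧ ∃ g ∈ Λ, ‖g - (q : ℝ) • c‖ < δ := by
  obtain ⟨R, hR, hcov⟩ := aux_cover Λ
  have h1 : ∀ m : ℕ, ∃ g ∈ Λ, ‖(m : ℝ) • c - g‖ ≤ R := fun m =>
    hcov _ (Submodule.smul_mem _ _ hc)
  choose g hgΛ hgR using h1
  set f : ℕ → V := fun m => (m : ℝ) • c - g m with hf
  have hbdd : ∀ m, f m ∈ Metric.closedBall (0 : V) R := fun m => by
    simpa [f, Metric.mem_closedBall, dist_eq_norm] using hgR m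
  obtain ⟨a, -, φ, hφ, hconv⟩ := tendsto_subseq_of_bounded Metric.isBounded_closedBall hbdd
  rw [Metric.tendsto_atTop] at hconv
  obtain ⟨J, hJ⟩ := hconv (δ / 2) (by positivity)
  have hmono : ∀ k : ℕ, φ J + k ≤ φ (J + k) := by
    intro k; induction k with
    | zero => simp
    | succ k ih =>
        have h2 : φ (J + k) < φ (J + (k + 1)) := hφ (by omega)
        omega
  have hlt : φ J < φ (J + (N + 1)) := hφ (by omega)
  refine ⟨φ (J + (N + 1)) - φ J, by have := hmono (N + 1); omega,
    g (φ (J + (N + 1))) - g (φ J), sub_mem (hgΛ _) (hgΛ _), ?_⟩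
  have hcast : ((φ (J + (N + 1)) - φ J : ℕ) : ℝ) = (φ (J + (N + 1)) : ℝ) - (φ J : ℝ) := by
    exact_mod_cast Nat.cast_sub hlt.le
  rw [hcast]
  have heq : g (φ (J + (N + 1))) - g (φ J) - ((φ (J + (N + 1)) : ℝ) - (φ J : ℝ)) • c
      = f (φ J) - f (φ (J + (N + 1))) := by
    simp only [hf, sub_smul]
    abel
  rw [heq]
  have d1 := hJ (J + (N + 1)) (by omega)
  have d2 := hJ J (le_refl J)
  simp only [Function.comp_apply, dist_eq_norm] at d1 d2
  calc ‖f (φ J) - f (φ (J + (N + 1)))‖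
      ≤ ‖f (φ J) - a‖ + ‖a - f (φ (J + (N + 1)))‖ := norm_sub_le_norm_sub_add_norm_sub _ _ _
    _ < δ / 2 + δ / 2 := by
        rw [norm_sub_rev (a := a)]
        exact add_lt_add d2 d1
    _ = δ := by ring

/-- Separation lemma: if `0 ∈ S`, `c` is in the span of `S` but not in its convex hull,
then there is a continuous linear functional `T` with `T c ≤ T y` for all `y ∈ S`,
the inequality being strict for at least one `y ∈ S`. -/
theorem aux_sep {S : Set V} (h0 : (0 : V) ∈ S) {c : V}
    (hcs : c ∈ Submodule.span ℝ S) (hc : c ∉ convexHull ℝ S) :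
    ∃ T : V →L[ℝ] ℝ, (∀ y ∈ S, T c ≤ T y) ∧ ∃ y ∈ S, T c < T y := by
  set W : Submodule ℝ V := Submodule.span ℝ S with hW
  have hSW : S ⊆ (W : Set V) := Submodule.subset_span
  set S' : Set W := Subtype.val ⁻¹' S with hS'
  have himg : Subtype.val '' S' = S := by
    ext v
    constructor
    · rintro ⟨⟨w, hw⟩, hmem, rfl⟩; exact hmem
    · intro hv; exact ⟨⟨v, hSW hv⟩, hv, rfl⟩
  have hspan' : Submodule.span ℝ S' = (⊤ : Submodule ℝ W) := by
    apply Submodule.map_injective_of_injective W.injective_subtype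
    rw [Submodule.map_span, Submodule.map_top, Submodule.range_subtype]
    rw [show ⇑W.subtype = (Subtype.val : W → V) from rfl, himg]
  have h0' : (0 : W) ∈ S' := by
    simp only [hS', Set.mem_preimage]
    exact h0
  have haff : affineSpan ℝ S' = ⊤ := by
    rw [AffineSubspace.affineSpan_eq_top_iff_vectorSpan_eq_top_of_nonempty ℝ W W ⟨0, h0'⟩]
    rw [vectorSpan_eq_span_vsub_set_right ℝ h0']
    have himg2 : (fun x : W => x -ᵥ 0) '' S' = S' := by
      ext x
      simp [vsub_eq_sub]
    rw [himg2, hspan']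
  set A : Set W := convexHull ℝ S' with hA
  have hAconv : Convex ℝ A := convex_convexHull ℝ S'
  have hint : (interior A).Nonempty := by
    rw [hAconv.interior_nonempty_iff_affineSpan_eq_top, hA, affineSpan_convexHull]
    exact haff
  have hcW : c ∈ W := hcs
  set c' : W := ⟨c, hcW⟩ with hc'
  have hc'A : c' ∉ interior A := by
    intro hmem
    apply hc
    have h1 : (c : V) ∈ Subtype.val '' A := ⟨c', interior_subset hmem, rfl⟩
    have h2 : Subtype.val '' A = convexHull ℝ S := by
      rw [hA, ← himg]
      exact W.subtype.image_convexHull S'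
    rwa [h2] at h1
  obtain ⟨F, hF⟩ := geometric_hahn_banach_open_point hAconv.interior isOpen_interior hc'A
  obtain ⟨d₀, hd₀⟩ := hint
  have hle : ∀ s ∈ A, F s ≤ F c' := by
    intro s hs
    have h1 : Tendsto (fun n : ℕ => (1 / (n + 1) : ℝ)) atTop (𝓝 0) :=
      tendsto_one_div_add_atTop_nhds_zero_nat
    have h2 : Tendsto (fun n : ℕ => (1 - (1 / (n + 1) : ℝ)) • s + (1 / (n + 1) : ℝ) • d₀)
        atTop (𝓝 ((1 - (0:ℝ)) • s + (0 : ℝ) • d₀)) := by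
      apply Tendsto.add
      · exact (tendsto_const_nhds.sub h1).smul_const s
      · exact h1.smul_const d₀
    have h3 : ((1 - (0:ℝ)) • s + (0 : ℝ) • d₀) = s := by simp
    rw [h3] at h2
    have hseq : Tendsto (fun n : ℕ =>
        F ((1 - (1 / (n + 1) : ℝ)) • s + (1 / (n + 1) : ℝ) • d₀)) atTop (𝓝 (F s)) :=
      (F.continuous.tendsto s).comp h2
    refine le_of_tendsto hseq (Eventually.of_forall fun n => ?_)
    refine (hF _ ?_).le
    have hn1 : (0:ℝ) < 1 / (n + 1) := by positivity
    have hn2 : (1 / (n + 1) : ℝ) ≤ 1 := by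
      rw [div_le_one (by positivity)]
      have : (0:ℝ) ≤ n := Nat.cast_nonneg n
      linarith
    exact hAconv.combo_self_interior_mem_interior hs hd₀ (by linarith) hn1 (by ring)
  have hstrict : ∃ y ∈ S', F y < F c' := by
    by_contra hcon
    push_neg at hcon
    have hsub : A ⊆ {x : W | F c' ≤ F x} := by
      rw [hA]
      apply convexHull_min hcon
      exact convex_halfSpace_ge (LinearMap.isLinear _) (F c')
    have h4 := hsub (interior_subset hd₀)
    exact absurd (hF _ hd₀) (not_lt.mpr h4)
  obtain ⟨y₁, hy₁S, hy₁⟩ := hstrict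
  obtain ⟨G, hG, -⟩ := exists_extension_norm_eq W F
  refine ⟨-G, ?_, ⟨(y₁ : V), hy₁S, ?_⟩⟩
  · intro y hy
    have hmem : (⟨y, hSW hy⟩ : W) ∈ S' := hy
    have h5 : F ⟨y, hSW hy⟩ ≤ F c' := hle _ (subset_convexHull ℝ S' hmem)
    have e1 : G y = F ⟨y, hSW hy⟩ := hG ⟨y, hSW hy⟩
    have e2 : G c = F c' := hG c'
    simp only [ContinuousLinearMap.neg_apply]
    rw [e1, e2]
    linarith
  · have e1 : G (y₁ : V) = F y₁ := hG y₁
    have e2 : G c = F c' := hG c'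
    simp only [ContinuousLinearMap.neg_apply]
    rw [e1, e2]
    linarith

/-- Main induction: a recession direction `c` (lying in the span of `Λ`) of a convex set `U`
containing a neighborhood of `0` within the span is in the convex hull of `U ∩ Λ`. -/
theorem aux_gen : ∀ (n : ℕ) (Λ : AddSubgroup V) (U : Set V) (c : V),
    Convex ℝ U →
    (∃ ε : ℝ, 0 < ε ∧ ∀ v ∈ Submodule.span ℝ (Λ : Set V), ‖v‖ < ε → v ∈ U) →
    (∀ u ∈ U, ∀ t : ℝ, 0 ≤ t → u + t • c ∈ U) →
    c ∈ Submodule.span ℝ (Λ : Set V) →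
    Module.finrank ℝ (Submodule.span ℝ (Λ : Set V)) ≤ n →
    c ∈ convexHull ℝ (U ∩ (Λ : Set V)) := by
  intro n
  induction n with
  | zero =>
    intro Λ U c hU hBE hrec hc hrank
    obtain ⟨ε, hε, hball⟩ := hBE
    have hbot : Submodule.span ℝ (Λ : Set V) = ⊥ := by
      have h1 : Module.finrank ℝ (Submodule.span ℝ (Λ : Set V)) = 0 := Nat.le_zero.mp hrank
      exact Submodule.finrank_eq_zero.mp h1
    have hc0 : c = 0 := by
      rw [hbot] at hc
      simpa using hc
    subst hc0
    apply subset_convexHull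
    exact ⟨hball 0 (Submodule.zero_mem _) (by simpa using hε), Λ.zero_mem⟩
  | succ n IH =>
    intro Λ U c hU hBE hrec hc hrank
    obtain ⟨ε, hε, hball⟩ := hBE
    have h0U : (0 : V) ∈ U := hball 0 (Submodule.zero_mem _) (by simpa using hε)
    have h0 : (0 : V) ∈ U ∩ (Λ : Set V) := ⟨h0U, Λ.zero_mem⟩
    by_cases hc0 : c = 0
    · subst hc0; exact subset_convexHull _ _ h0
    by_contra hQ
    -- Construct the tube sequence.
    have tub : ∀ N k : ℕ, ∃ p : ℕ × V,
        N < p.1 ∧ p.2 ∈ Λ ∧ ‖p.2 - (p.1 : ℝ) • c‖ < ε / (4 * (k + 1)) := by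
      intro N k
      obtain ⟨q, hq, g, hg, hn⟩ := aux_tube Λ hc (by positivity : (0:ℝ) < ε / (4 * (k + 1))) N
      exact ⟨(q, g), hq, hg, hn⟩
    choose P hP1 hP2 hP3 using tub
    set G : ℕ → ℕ × V := fun k => Nat.rec (P 0 0) (fun k ih => P ih.1 (k + 1)) k with hG
    set q : ℕ → ℕ := fun k => (G k).1 with hq
    set g : ℕ → V := fun k => (G k).2 with hg
    have hGs : ∀ k, G (k + 1) = P (q k) (k + 1) := fun k => rfl
    have hgΛ : ∀ k, g k ∈ Λ := by
      intro k
      cases k with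
      | zero => exact hP2 0 0
      | succ k => exact hP2 (q k) (k + 1)
    have hgnorm : ∀ k, ‖g k - (q k : ℝ) • c‖ < ε / (4 * (k + 1)) := by
      intro k
      cases k with
      | zero => exact hP3 0 0
      | succ k => simpa using hP3 (q k) (k + 1)
    have hqmono : StrictMono q := by
      apply strictMono_nat_of_lt_succ
      intro k
      exact hP1 (q k) (k + 1)
    have hq1 : ∀ k, k + 1 ≤ q k := by
      intro k
      induction k with
      | zero => exact hP1 0 0
      | succ k ih =>
        have h7 : q (k + 1) = (P (q k) (k + 1)).1 := rfl
        have h8 := hP1 (q k) (k + 1)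
        omega
    set η : ℕ → V := fun k => g k - (q k : ℝ) • c with hη
    have hηspan : ∀ k, η k ∈ Submodule.span ℝ (Λ : Set V) := fun k =>
      sub_mem (Submodule.subset_span (hgΛ k)) (Submodule.smul_mem _ _ hc)
    have hηnorm : ∀ k, ‖η k‖ < ε / (4 * (k + 1)) := hgnorm
    have hfrac : ∀ k : ℕ, ε / (4 * ((k:ℝ) + 1)) ≤ ε / 4 := by
      intro k
      apply div_le_div_of_nonneg_left hε.le (by norm_num)
      have : (0:ℝ) ≤ k := Nat.cast_nonneg k
      linarith
    have hηε : ∀ k, ‖η k‖ < ε := fun k =>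
      lt_of_lt_of_le (hηnorm k) (le_trans (hfrac k) (by linarith))
    have hgU : ∀ k, g k ∈ U := by
      intro k
      have h1 : η k ∈ U := hball _ (hηspan k) (hηε k)
      have h2 := hrec _ h1 (q k : ℝ) (by positivity)
      have h3 : η k + (q k : ℝ) • c = g k := by
        simp [hη]
      rwa [h3] at h2
    have hgS : ∀ k, g k ∈ U ∩ (Λ : Set V) := fun k => ⟨hgU k, hgΛ k⟩
    -- Bound sequence tends to zero.
    have hq_inv : Tendsto (fun k : ℕ => ((q k : ℝ))⁻¹) atTop (𝓝 0) := by
      refine squeeze_zero (fun k => by positivity) (fun k => ?_)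
        tendsto_one_div_add_atTop_nhds_zero_nat
      rw [one_div]
      apply inv_anti₀ (by positivity)
      exact_mod_cast hq1 k
    have hbound : Tendsto (fun k : ℕ => ε / (4 * ((k:ℝ) + 1))) atTop (𝓝 0) := by
      have h1 : (fun k : ℕ => ε / (4 * ((k:ℝ) + 1))) = fun k : ℕ => (ε / 4) * (1 / ((k:ℝ)+1)) := by
        funext k; field_simp
      rw [h1]
      simpa using tendsto_one_div_add_atTop_nhds_zero_nat.const_mul (ε / 4)
    have hηzero : Tendsto η atTop (𝓝 0) := by
      apply squeeze_zero_norm (fun k => (hηnorm k).le) hbound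
    -- the normalized sequence tends to c
    have hklim : Tendsto (fun k => ((q k : ℝ))⁻¹ • g k) atTop (𝓝 c) := by
      have h1 : ∀ k, ((q k : ℝ))⁻¹ • g k = c + ((q k : ℝ))⁻¹ • η k := by
        intro k
        have hqne : ((q k : ℝ)) ≠ 0 := by
          have := hq1 k
          exact Nat.cast_ne_zero.mpr (by omega)
        simp only [hη, smul_sub, smul_smul]
        rw [inv_mul_cancel₀ hqne, one_smul]
        abel
      simp only [h1]
      have h2 : Tendsto (fun k => ((q k : ℝ))⁻¹ • η k) atTop (𝓝 0) := by
        refine squeeze_zero_norm (fun k => ?_) hbound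
        have h3 : ‖((q k : ℝ))⁻¹‖ ≤ 1 := by
          rw [Real.norm_eq_abs, abs_of_nonneg (by positivity)]
          have h4 : (1:ℝ) ≤ (q k : ℝ) := by
            exact_mod_cast Nat.one_le_iff_ne_zero.mpr (by have := hq1 k; omega)
          rw [inv_le_one_iff₀]
          right; exact h4
        calc ‖((q k : ℝ))⁻¹ • η k‖ = ‖((q k : ℝ))⁻¹‖ * ‖η k‖ := norm_smul _ _
          _ ≤ 1 * ‖η k‖ := mul_le_mul_of_nonneg_right h3 (norm_nonneg _)
          _ = ‖η k‖ := one_mul _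
          _ ≤ ε / (4 * ((k:ℝ) + 1)) := (hηnorm k).le
      simpa using tendsto_const_nhds.add h2
    -- c is in the span of U ∩ Λ
    have hcspanU : c ∈ Submodule.span ℝ (U ∩ (Λ : Set V)) := by
      have hcl : IsClosed ((Submodule.span ℝ (U ∩ (Λ : Set V)) : Submodule ℝ V) : Set V) :=
        Submodule.closed_of_finiteDimensional _
      exact hcl.mem_of_tendsto hklim (Eventually.of_forall fun k =>
        Submodule.smul_mem _ _ (Submodule.subset_span (hgS k)))
    obtain ⟨T, hT, y₀, hy₀S, hy₀⟩ := aux_sep h0 hcspanU hQ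
    -- T c = 0
    have hTc_le : T c ≤ 0 := by simpa using hT 0 h0
    have hTc_ge : 0 ≤ T c := by
      have hTlim : Tendsto (fun k => T (((q k : ℝ))⁻¹ • g k)) atTop (𝓝 (T c)) :=
        (T.continuous.tendsto c).comp hklim
      have hlow : Tendsto (fun k => ((q k : ℝ))⁻¹ * T c) atTop (𝓝 0) := by
        simpa using hq_inv.mul_const (T c)
      refine le_of_tendsto_of_tendsto hlow hTlim (Eventually.of_forall fun k => ?_)
      show ((q k : ℝ))⁻¹ * T c ≤ T (((q k : ℝ))⁻¹ • g k)
      rw [T.map_smul, smul_eq_mul]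
      exact mul_le_mul_of_nonneg_left (hT _ (hgS k)) (by positivity)
    have hTc : T c = 0 := le_antisymm hTc_le hTc_ge
    set a : ℕ → ℝ := fun k => T (g k) with ha
    have ha0 : ∀ k, 0 ≤ a k := fun k => hTc ▸ hT _ (hgS k)
    have halim : Tendsto a atTop (𝓝 0) := by
      refine squeeze_zero (g := fun k : ℕ => ‖T‖ * (ε / (4 * ((k:ℝ) + 1)))) ha0
        (fun k => ?_) ?_
      · have h1 : a k = T (η k) + (q k : ℝ) * T c := by
          simp [ha, hη, map_sub, map_smul, smul_eq_mul]
        rw [h1, hTc, mul_zero, add_zero]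
        calc T (η k) ≤ ‖T (η k)‖ := le_abs_self _
          _ ≤ ‖T‖ * ‖η k‖ := T.le_opNorm _
          _ ≤ ‖T‖ * (ε / (4 * ((k:ℝ) + 1))) :=
              mul_le_mul_of_nonneg_left (hηnorm k).le (norm_nonneg T)
      · simpa using hbound.const_mul ‖T‖
    by_cases Hd : ∃ k l, k < l ∧ a l < a k
    · obtain ⟨k, l, hkl, hal⟩ := Hd
      set h : V := g l - g k with hh
      have hhΛ : h ∈ Λ := sub_mem (hgΛ l) (hgΛ k)
      have hqkl : (q k : ℝ) ≤ (q l : ℝ) := by exact_mod_cast (hqmono hkl).le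
      have hhU : h ∈ U := by
        have h1 : η l - η k ∈ U := by
          apply hball _ (sub_mem (hηspan l) (hηspan k))
          calc ‖η l - η k‖ ≤ ‖η l‖ + ‖η k‖ := norm_sub_le _ _
            _ < ε / (4 * (l + 1)) + ε / (4 * (k + 1)) := add_lt_add (hηnorm l) (hηnorm k)
            _ ≤ ε / 4 + ε / 4 := add_le_add (hfrac l) (hfrac k)
            _ < ε := by linarith
        have h2 := hrec _ h1 ((q l : ℝ) - (q k : ℝ)) (by linarith)
        have h3 : η l - η k + ((q l : ℝ) - (q k : ℝ)) • c = h := by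
          simp only [hη, hh, sub_smul]
          abel
        rwa [h3] at h2
      have h4 : T c ≤ T h := hT _ ⟨hhU, hhΛ⟩
      have h5 : T h = a l - a k := by simp [hh, ha, map_sub]
      rw [hTc, h5] at h4
      linarith
    · push_neg at Hd
      have hak0 : ∀ k, a k = 0 := by
        intro k
        refine le_antisymm ?_ (ha0 k)
        refine ge_of_tendsto halim ?_
        rw [eventually_atTop]
        exact ⟨k + 1, fun l hl => Hd k l (by omega)⟩
      set Λ₁ : AddSubgroup V := Λ ⊓ (LinearMap.ker (T : V →ₗ[ℝ] ℝ)).toAddSubgroup with hΛ₁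
      have hΛ₁mem : ∀ v : V, v ∈ Λ₁ ↔ v ∈ Λ ∧ T v = 0 := by
        intro v
        simp [hΛ₁, AddSubgroup.mem_inf, Submodule.mem_toAddSubgroup, LinearMap.mem_ker]
      have hgΛ₁ : ∀ k, g k ∈ Λ₁ := fun k => (hΛ₁mem _).mpr ⟨hgΛ k, hak0 k⟩
      have hΛ₁sub : (Λ₁ : Set V) ⊆ (Λ : Set V) := fun v hv => ((hΛ₁mem v).mp hv).1
      have hcspan₁ : c ∈ Submodule.span ℝ (Λ₁ : Set V) := by
        have hcl : IsClosed ((Submodule.span ℝ (Λ₁ : Set V) : Submodule ℝ V) : Set V) :=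
          Submodule.closed_of_finiteDimensional _
        exact hcl.mem_of_tendsto hklim (Eventually.of_forall fun k =>
          Submodule.smul_mem _ _ (Submodule.subset_span (hgΛ₁ k)))
      have hlt : Submodule.span ℝ (Λ₁ : Set V) < Submodule.span ℝ (Λ : Set V) := by
        refine lt_of_le_of_ne (Submodule.span_mono hΛ₁sub) ?_
        intro heq
        have hker : Submodule.span ℝ (Λ₁ : Set V) ≤ LinearMap.ker (T : V →ₗ[ℝ] ℝ) := by
          rw [Submodule.span_le]
          intro v hv
          exact ((hΛ₁mem v).mp hv).2
        have hy₀span : y₀ ∈ Submodule.span ℝ (Λ : Set V) := Submodule.subset_span hy₀S.2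
        rw [← heq] at hy₀span
        have : T y₀ = 0 := hker hy₀span
        rw [hTc] at hy₀
        rw [this] at hy₀
        exact lt_irrefl 0 hy₀
      have hrank₁ : Module.finrank ℝ (Submodule.span ℝ (Λ₁ : Set V)) ≤ n := by
        have h6 := Submodule.finrank_lt_finrank_of_lt hlt
        omega
      have hmem := IH Λ₁ U c hU ⟨ε, hε, fun v hv hnv =>
        hball v (Submodule.span_mono hΛ₁sub hv) hnv⟩ hrec hcspan₁ hrank₁
      exact hQ (convexHull_mono (Set.inter_subset_inter_right U hΛ₁sub) hmem)

end Auxiliary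

/-- For a lattice `L` and an open nondegenerate convex cone `C`,
the convex hull of the lattice points of `C` is stable under addition of the
closed cone: `[C ∩ L] + closure C = [C ∩ L]`. -/
theorem stmt_7 {V : Type*} [NormedAddCommGroup V] [NormedSpace ℝ V]
    [FiniteDimensional ℝ V]
    (L : AddSubgroup V) (hLdisc : DiscreteTopology L)
    (hLspan : Submodule.span ℝ (L : Set V) = ⊤)
    (C : Set V) (hCopen : IsOpen C) (hCconv : Convex ℝ C) (hCne : C.Nonempty)
    (hCcone : ∀ x ∈ C, ∀ t : ℝ, 0 < t → t • x ∈ C)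
    (hCnd : ∀ x v : V, v ≠ 0 → ¬ ∀ t : ℝ, x + t • v ∈ C) :
    convexHull ℝ (C ∩ (L : Set V)) + closure C = convexHull ℝ (C ∩ (L : Set V)) := by
  -- scaling of the closure by positive reals
  have hCcl_smul : ∀ t : ℝ, 0 < t → ∀ w ∈ closure C, t • w ∈ closure C := by
    intro t ht w hw
    have h1 : t • w ∈ (fun v : V => t • v) '' closure C := ⟨w, hw, rfl⟩
    have h2 : (fun v : V => t • v) '' closure C ⊆ closure ((fun v : V => t • v) '' C) :=
      image_closure_subset_closure_image (continuous_const_smul t)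
    have h3 : (fun v : V => t • v) '' C ⊆ C := by
      rintro _ ⟨v, hv, rfl⟩; exact hCcone v hv t ht
    exact closure_mono h3 (h2 h1)
  -- closure of C is closed under addition
  have hCadd_cl : ∀ u ∈ closure C, ∀ w ∈ closure C, u + w ∈ closure C := by
    intro u hu w hw
    have hconv : Convex ℝ (closure C) := hCconv.closure
    have hmid : (1/2 : ℝ) • u + (1/2 : ℝ) • w ∈ closure C :=
      hconv hu hw (by norm_num) (by norm_num) (by norm_num)
    have h2 := hCcl_smul 2 (by norm_num) _ hmid
    have h3 : (2:ℝ) • ((1/2 : ℝ) • u + (1/2 : ℝ) • w) = u + w := by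
      rw [smul_add, smul_smul, smul_smul]
      norm_num
    rwa [h3] at h2
  -- C absorbs the closure
  have hCC : ∀ z ∈ C, ∀ w ∈ closure C, z + w ∈ C := by
    intro z hz w hw
    have hy : z + (2:ℝ) • w ∈ closure C :=
      hCadd_cl z (subset_closure hz) _ (hCcl_smul 2 (by norm_num) w hw)
    have hx : z ∈ interior C := by rw [hCopen.interior_eq]; exact hz
    have hcombo := hCconv.combo_interior_closure_mem_interior hx hy
      (a := 1/2) (b := 1/2) (by norm_num) (by norm_num) (by norm_num)
    rw [hCopen.interior_eq] at hcombo
    have h3 : (1/2 : ℝ) • z + (1/2 : ℝ) • (z + (2:ℝ) • w) = z + w := by module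
    rwa [h3] at hcombo
  -- 0 is in the closure of C
  have h0cl : (0 : V) ∈ closure C := by
    obtain ⟨x₀, hx₀⟩ := hCne
    have h1 : Tendsto (fun n : ℕ => (1/(n+1) : ℝ) • x₀) atTop (𝓝 0) := by
      have h2 := (tendsto_one_div_add_atTop_nhds_zero_nat :
        Tendsto (fun n : ℕ => 1 / ((n : ℝ) + 1)) atTop (𝓝 0)).smul_const x₀
      simpa using h2
    exact mem_closure_of_tendsto h1 (Eventually.of_forall fun n =>
      hCcone _ hx₀ _ (by positivity))
  -- Claim B : each lattice point of C plus a closure element stays in the hull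
  have claimB : ∀ x ∈ C ∩ (L : Set V), ∀ w ∈ closure C,
      x + w ∈ convexHull ℝ (C ∩ (L : Set V)) := by
    intro x hx w hw
    obtain ⟨hxC, hxL⟩ := hx
    obtain ⟨ε, hε, hball⟩ := Metric.isOpen_iff.mp hCopen x hxC
    set U : Set V := (fun v => x + v) ⁻¹' C with hU
    have hUconv : Convex ℝ U := hCconv.translate_preimage_right x
    have hrec : ∀ u ∈ U, ∀ t : ℝ, 0 ≤ t → u + t • w ∈ U := by
      intro u hu t ht
      rcases ht.eq_or_lt with h|h
      · show x + (u + t • w) ∈ C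
        rw [← h, zero_smul, add_zero]
        exact hu
      · have htc : t • w ∈ closure C := hCcl_smul t h w hw
        show x + (u + t • w) ∈ C
        rw [← add_assoc]
        exact hCC (x + u) hu _ htc
    have hwspan : w ∈ Submodule.span ℝ (L : Set V) := by rw [hLspan]; trivial
    have hrank : Module.finrank ℝ (Submodule.span ℝ (L : Set V)) ≤ Module.finrank ℝ V :=
      Submodule.finrank_le _
    have hmem := aux_gen (Module.finrank ℝ V) L U w hUconv
      ⟨ε, hε, fun v _ hv => by
        show x + v ∈ C
        apply hball
        rw [Metric.mem_ball, dist_eq_norm]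
        have h9 : x + v - x = v := by abel
        rw [h9]
        exact hv⟩ hrec hwspan hrank
    have himg : (fun v => x + v) '' (U ∩ (L : Set V)) = C ∩ (L : Set V) := by
      ext z; constructor
      · rintro ⟨v, ⟨hvU, hvL⟩, rfl⟩
        exact ⟨hvU, AddSubgroup.add_mem L hxL hvL⟩
      · rintro ⟨hzC, hzL⟩
        refine ⟨z - x, ⟨?_, AddSubgroup.sub_mem L hzL hxL⟩, by module⟩
        show x + (z - x) ∈ C
        rwa [add_sub_cancel]
    have h5 : x + w ∈ (fun v => x + v) '' (convexHull ℝ (U ∩ (L : Set V))) := ⟨w, hmem, rfl⟩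
    have h6 : (fun v => x + v) '' (convexHull ℝ (U ∩ (L : Set V)))
        = convexHull ℝ ((fun v => x + v) '' (U ∩ (L : Set V))) := by
      have h7 : convexHull ℝ (x +ᵥ (U ∩ (L : Set V))) = x +ᵥ convexHull ℝ (U ∩ (L : Set V)) :=
        convexHull_vadd x _
      have h8 : ∀ s : Set V, x +ᵥ s = (fun v => x + v) '' s := fun s => by
        rw [← Set.image_vadd]; rfl
      rw [← h8, ← h8, h7]
    rw [h6, himg] at h5
    exact h5
  -- conclude
  apply Set.Subset.antisymm
  · rw [Set.add_subset_iff]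
    intro p hp w hw
    rw [convexHull_eq] at hp
    obtain ⟨ι, t, wt, z, hw0, hw1, hzS, hcm⟩ := hp
    have hcm' : p = ∑ i ∈ t, wt i • z i := by
      rw [← hcm, Finset.centerMass, hw1]
      simp
    have h1 : p + w = ∑ i ∈ t, wt i • (z i + w) := by
      rw [hcm']
      simp only [smul_add, Finset.sum_add_distrib, ← Finset.sum_smul, hw1, one_smul]
    rw [h1]
    apply (convex_convexHull ℝ (C ∩ (L : Set V))).sum_mem (fun i hi => hw0 i hi) hw1
    intro i hi
    exact claimB _ (hzS i hi) w hw
  · intro p hp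
    have := Set.add_mem_add hp h0cl
    simpa using this
end

section
/- Let V be a finite-dimensional real vector space with lattice L and open nondegenerate convex cone C. Let p ∈ C_+ := convex hull of (closure(C) ∩ ℚL) (the rational points of the closed cone). Then the set {ξ(p) : ξ ∈ C° ∩ L*} is a discrete subset of ℝ_{≥0}; in particular the function ξ ↦ ξ(p) attains a minimum on C° ∩ L*. -/
open scoped RealInnerProductSpace

private lemma aux_ratden {ι : Type*} [Fintype ι] (r : ι → ℚ) :
    ∃ (d : ℕ) (k : ι → ℤ), 0 < d ∧ ∀ i, (k i : ℚ) = (d : ℚ) * r i := by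
  have hden : ∀ s : ℚ, (s.den : ℚ) * s = (s.num : ℚ) := by
    intro s
    have h : (s.num : ℚ) / (s.den : ℚ) = s := Rat.num_div_den s
    have hd : (s.den : ℚ) ≠ 0 := by exact_mod_cast s.den_ne_zero
    calc (s.den : ℚ) * s = (s.den : ℚ) * ((s.num : ℚ) / (s.den : ℚ)) := by rw [h]
      _ = s.num := by field_simp
  have hdvd : ∀ i : ι, ∃ mm : ℕ, ∏ j, (r j).den = (r i).den * mm :=
    fun i => Finset.dvd_prod_of_mem (fun j => (r j).den) (Finset.mem_univ i)
  choose m hm using hdvd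
  refine ⟨∏ j, (r j).den, fun i => (r i).num * m i,
    Finset.prod_pos fun j _ => (r j).den_pos, ?_⟩
  intro i
  have hc : ((∏ j, (r j).den : ℕ) : ℚ) = ((r i).den : ℚ) * (m i : ℚ) := by exact_mod_cast hm i
  rw [hc, mul_comm ((r i).den : ℚ) ((m i : ℚ)), mul_assoc, hden]
  push_cast
  ring

private lemma aux_fin_vals {ι : Type*} [Fintype ι] (f : ι → ℝ) (K : ι → ℕ) :
    {x : ℝ | ∃ m : ι → ℕ, (∀ i, m i ≤ K i) ∧ x = ∑ i, f i * m i}.Finite := by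
  have h1 : {m : ι → ℕ | ∀ i, m i ≤ K i}.Finite := by
    have : {m : ι → ℕ | ∀ i, m i ≤ K i} = Set.pi Set.univ (fun i => Set.Iic (K i)) := by
      ext m; simp [Set.mem_pi, Pi.le_def]
    rw [this]
    exact Set.Finite.pi fun i => Set.finite_Iic _
  have h2 : {x : ℝ | ∃ m : ι → ℕ, (∀ i, m i ≤ K i) ∧ x = ∑ i, f i * m i}
      ⊆ (fun m : ι → ℕ => ∑ i, f i * m i) '' {m | ∀ i, m i ≤ K i} := by
    rintro x ⟨m, hm, rfl⟩
    exact ⟨m, hm, rfl⟩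
  exact (h1.image _).subset h2

private lemma aux_discrete (T : Set ℝ) (hT : ∀ M : ℝ, (T ∩ Set.Iic M).Finite) :
    (∀ r ∈ T, ∃ ε > (0:ℝ), ∀ r' ∈ T, |r' - r| < ε → r' = r) ∧
    (T.Nonempty → ∃ r₀ ∈ T, ∀ r ∈ T, r₀ ≤ r) := by
  constructor
  · intro r hr
    have hF : ((T ∩ Set.Iic (r + 1)) \ {r}).Finite := (hT (r + 1)).diff
    have hcl : IsClosed ((T ∩ Set.Iic (r + 1)) \ {r}) := hF.isClosed
    have hrmem : r ∈ ((T ∩ Set.Iic (r + 1)) \ {r})ᶜ := by simp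
    obtain ⟨ε, hε, hball⟩ := Metric.isOpen_iff.1 hcl.isOpen_compl r hrmem
    refine ⟨min ε 1, lt_min hε one_pos, ?_⟩
    intro r' hr' habs
    have h1 : |r' - r| < 1 := habs.trans_le (min_le_right _ _)
    have h2 : |r' - r| < ε := habs.trans_le (min_le_left _ _)
    have hle : r' ≤ r + 1 := by
      have := abs_lt.1 h1
      linarith [this.2]
    have : r' ∈ ((T ∩ Set.Iic (r + 1)) \ {r})ᶜ := by
      apply hball
      rw [Metric.mem_ball, Real.dist_eq]
      exact h2
    by_contra hne
    exact this ⟨⟨hr', hle⟩, hne⟩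
  · rintro ⟨a, ha⟩
    have hS : (T ∩ Set.Iic a).Finite := hT a
    have hSne : (T ∩ Set.Iic a).Nonempty := ⟨a, ha, le_refl a⟩
    have hne' : hS.toFinset.Nonempty := by
      rwa [Set.Finite.toFinset_nonempty]
    refine ⟨hS.toFinset.min' hne', ?_, ?_⟩
    · have := hS.toFinset.min'_mem hne'
      rw [Set.Finite.mem_toFinset] at this
      exact this.1
    · intro r hrT
      rcases le_or_gt r a with h | h
      · exact hS.toFinset.min'_le r (by rw [Set.Finite.mem_toFinset]; exact ⟨hrT, h⟩)
      · have : hS.toFinset.min' hne' ≤ a :=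
          hS.toFinset.min'_le a (by rw [Set.Finite.mem_toFinset]; exact ⟨ha, le_refl a⟩)
        linarith

private lemma aux_dual_int_ne {V : Type*} [NormedAddCommGroup V] [InnerProductSpace ℝ V]
    [FiniteDimensional ℝ V]
    (C : Set V) (hCopen : IsOpen C) (hCconv : Convex ℝ C) (hCne : C.Nonempty)
    (hCcone : ∀ x ∈ C, ∀ t : ℝ, 0 < t → t • x ∈ C)
    (hCnd : ∀ x v : V, v ≠ 0 → ¬ ∀ t : ℝ, x + t • v ∈ C) :
    (interior {ξ : V | ∀ x ∈ closure C, 0 ≤ ⟪ξ, x⟫}).Nonempty := by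
  obtain ⟨x₀, hx₀⟩ := hCne
  have h0K : (0 : V) ∈ closure C := by
    have htend : Filter.Tendsto (fun n : ℕ => (1 / ((n : ℝ) + 1)) • x₀)
        Filter.atTop (nhds 0) := by
      simpa using (tendsto_one_div_add_atTop_nhds_zero_nat (𝕜 := ℝ)).smul_const x₀
    exact mem_closure_of_tendsto htend
      (Filter.Eventually.of_forall fun n => hCcone x₀ hx₀ _ (by positivity))
  have hKsmul : ∀ t : ℝ, 0 < t → ∀ x ∈ closure C, t • x ∈ closure C := by
    intro t ht x hx
    have hmt : Set.MapsTo (fun y : V => t • y) C C := fun y hy => hCcone y hy t ht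
    exact hmt.closure (continuous_const_smul t) hx
  have hKadd : ∀ x ∈ closure C, ∀ y ∈ closure C, x + y ∈ closure C := by
    intro x hx y hy
    have hmid : (1/2 : ℝ) • x + (1/2 : ℝ) • y ∈ closure C :=
      hCconv.closure hx hy (by norm_num) (by norm_num) (by norm_num)
    have h2 := hKsmul 2 two_pos _ hmid
    have heq : (2:ℝ) • ((1/2:ℝ) • x + (1/2:ℝ) • y) = x + y := by
      rw [smul_add, smul_smul, smul_smul]; norm_num
    rwa [heq] at h2
  have hCadd : ∀ x ∈ C, ∀ y ∈ closure C, x + y ∈ C := by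
    intro x hx y hy
    have hxi : x ∈ interior C := by rwa [hCopen.interior_eq]
    have hmid : (1/2:ℝ) • x + (1/2:ℝ) • y ∈ interior C :=
      hCconv.combo_interior_closure_mem_interior hxi hy (by norm_num) (by norm_num) (by norm_num)
    rw [hCopen.interior_eq] at hmid
    have h2 := hCcone _ hmid 2 two_pos
    have heq : (2:ℝ) • ((1/2:ℝ) • x + (1/2:ℝ) • y) = x + y := by
      rw [smul_add, smul_smul, smul_smul]; norm_num
    rwa [heq] at h2
  set D : Set V := {ξ : V | ∀ x ∈ closure C, 0 ≤ ⟪ξ, x⟫} with hDdef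
  have hDconv : Convex ℝ D := by
    intro ξ hξ η hη a b ha hb hab x hx
    have h1 := hξ x hx
    have h2 := hη x hx
    rw [inner_add_left, real_inner_smul_left, real_inner_smul_left]
    have := mul_nonneg ha h1
    have := mul_nonneg hb h2
    linarith
  have hD0 : (0 : V) ∈ D := fun x _ => by rw [inner_zero_left]
  rw [hDconv.interior_nonempty_iff_affineSpan_eq_top]
  have hDspan : Submodule.span ℝ D = ⊤ := by
    by_contra hne
    have horth : (Submodule.span ℝ D)ᗮ ≠ ⊥ := fun h =>
      hne (Submodule.orthogonal_eq_bot_iff.1 h)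
    obtain ⟨v, hv, hv0⟩ := (Submodule.ne_bot_iff _).1 horth
    have hvD : ∀ ξ ∈ D, ⟪ξ, v⟫ = 0 := fun ξ hξ =>
      (Submodule.mem_orthogonal _ v).1 hv ξ (Submodule.subset_span hξ)
    set KC : ProperCone ℝ V :=
      { carrier := closure C
        smul_mem' := fun c x hx => by
          rcases (zero_le (a := c)).eq_or_lt with h | h
          · rw [← h, zero_smul]; exact h0K
          · exact hKsmul c.1 (show (0:ℝ) < c.1 from h) x hx
        add_mem' := fun hx hy => hKadd _ hx _ hy
        zero_mem' := h0K
        isClosed' := isClosed_closure } with hKCdef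
    have hKCcoe : (KC : Set V) = closure C := rfl
    have hbp := ProperCone.innerDual_innerDual KC
    have hdualD : ∀ y : V, y ∈ ProperCone.innerDual (KC : Set V) ↔ y ∈ D := by
      intro y
      rw [ProperCone.mem_innerDual]
      constructor
      · intro h x hx
        rw [real_inner_comm]
        exact h (x := x) (by rwa [hKCcoe])
      · intro h x hx
        rw [real_inner_comm]
        exact h x (by rwa [hKCcoe] at hx)
    have hvC : v ∈ closure C := by
      have hmem : v ∈ ProperCone.innerDual (ProperCone.innerDual (KC : Set V) : Set V) := by
        rw [ProperCone.mem_innerDual]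
        intro ξ hξ
        exact le_of_eq (hvD ξ ((hdualD ξ).1 hξ)).symm
      rw [hbp] at hmem
      exact hmem
    have hvC' : -v ∈ closure C := by
      have hmem : -v ∈ ProperCone.innerDual (ProperCone.innerDual (KC : Set V) : Set V) := by
        rw [ProperCone.mem_innerDual]
        intro ξ hξ
        rw [inner_neg_right, hvD ξ ((hdualD ξ).1 hξ), neg_zero]
      rw [hbp] at hmem
      exact hmem
    refine hCnd x₀ v hv0 fun t => ?_
    have htv : t • v ∈ closure C := by
      rcases lt_trichotomy t 0 with h | h | h
      · have := hKsmul (-t) (by linarith) (-v) hvC'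
        rwa [smul_neg, neg_smul, neg_neg] at this
      · rw [h, zero_smul]; exact h0K
      · exact hKsmul t h v hvC
    exact hCadd x₀ hx₀ _ htv
  have hle : Submodule.span ℝ D ≤ vectorSpan ℝ D := by
    rw [vectorSpan_def]
    apply Submodule.span_le.2
    intro x hx
    have hx0 : x -ᵥ (0:V) ∈ D -ᵥ D := Set.vsub_mem_vsub hx hD0
    have : x -ᵥ (0:V) = x := by simp [vsub_eq_sub]
    rw [this] at hx0
    exact Submodule.subset_span hx0
  rw [AffineSubspace.affineSpan_eq_top_iff_vectorSpan_eq_top_of_nonempty ℝ V V ⟨0, hD0⟩]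
  exact top_unique (hDspan ▸ hle)

private lemma aux_exists_dual_lattice {V : Type*} [NormedAddCommGroup V]
    [InnerProductSpace ℝ V] [FiniteDimensional ℝ V]
    (L : AddSubgroup V) (hLdisc : DiscreteTopology L)
    (hLspan : Submodule.span ℝ (L : Set V) = ⊤)
    (U : Set V) (hUopen : IsOpen U) (hUne : U.Nonempty)
    (hUcone : ∀ ξ ∈ U, ∀ t : ℝ, 0 < t → t • ξ ∈ U) :
    ∃ ξ : V, ξ ∈ U ∧ ∀ l ∈ L, ∃ n : ℤ, ⟪ξ, l⟫ = (n : ℝ) := by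
  classical
  set L' : Submodule ℤ V := AddSubgroup.toIntSubmodule L with hL'def
  haveI : DiscreteTopology L' := hLdisc
  haveI : IsZLattice ℝ L' := ⟨by rw [AddSubgroup.coe_toIntSubmodule]; exact hLspan⟩
  set b : Module.Basis (Module.Free.ChooseBasisIndex ℤ L') ℤ L' := Module.Free.chooseBasis ℤ L'
    with hbdef
  set bR := b.ofZLatticeBasis ℝ L' with hbRdef
  set g : Module.Free.ChooseBasisIndex ℤ L' → V := fun i =>
    (InnerProductSpace.toDual ℝ V).symm (LinearMap.toContinuousLinearMap (bR.dualBasis i))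
    with hgdef
  have hg : ∀ (i) (x : V), ⟪g i, x⟫ = bR.repr x i := by
    intro i x
    rw [hgdef]
    rw [InnerProductSpace.toDual_symm_apply]
    rw [LinearMap.coe_toContinuousLinearMap']
    rw [Module.Basis.dualBasis_apply]
  have hgL : ∀ (i), ∀ l ∈ L, ∃ n : ℤ, ⟪g i, l⟫ = (n : ℝ) := by
    intro i l hl
    refine ⟨b.repr (⟨l, hl⟩ : L') i, ?_⟩
    rw [hg]
    exact_mod_cast Module.Basis.ofZLatticeBasis_repr_apply (K := ℝ) (L := L') (b := b)
      (x := (⟨l, hl⟩ : L')) (i := i)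
  -- g spans V
  have hgspan : Submodule.span ℝ (Set.range g) = ⊤ := by
    by_contra hne
    have horth : (Submodule.span ℝ (Set.range g))ᗮ ≠ ⊥ := fun h =>
      hne (Submodule.orthogonal_eq_bot_iff.1 h)
    obtain ⟨y, hy, hy0⟩ := (Submodule.ne_bot_iff _).1 horth
    have hrep : ∀ i, bR.repr y i = 0 := by
      intro i
      rw [← hg i y]
      exact (Submodule.mem_orthogonal _ y).1 hy (g i)
        (Submodule.subset_span (Set.mem_range_self i))
    apply hy0
    have : bR.repr y = 0 := Finsupp.ext hrep
    have := bR.repr.injective (by rw [this, map_zero] : bR.repr y = bR.repr 0)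
    exact this
  -- pick a point of U
  obtain ⟨ξ₀, hξ₀⟩ := hUne
  have hξ₀span : ξ₀ ∈ Submodule.span ℝ (Set.range g) := by rw [hgspan]; trivial
  obtain ⟨c₀, hc₀⟩ := (Submodule.mem_span_range_iff_exists_fun ℝ).1 hξ₀span
  -- the evaluation map is continuous
  set F : (Module.Free.ChooseBasisIndex ℤ L' → ℝ) → V := fun c => ∑ i, c i • g i with hFdef
  have hFcont : Continuous F := by
    apply continuous_finset_sum
    intro i _
    exact (continuous_apply i).smul continuous_const
  have hc₀mem : c₀ ∈ F ⁻¹' U := by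
    simp only [Set.mem_preimage, hFdef]
    rwa [hc₀]
  obtain ⟨ε, hε, hball⟩ := Metric.isOpen_iff.1 (hUopen.preimage hFcont) c₀ hc₀mem
  -- rational approximation
  have hrat : ∀ i, ∃ s : ℚ, c₀ i < (s : ℝ) ∧ (s : ℝ) < c₀ i + ε :=
    fun i => exists_rat_btwn (lt_add_of_pos_right (c₀ i) hε)
  choose r hr1 hr2 using hrat
  have hrball : (fun i => (r i : ℝ)) ∈ Metric.ball c₀ ε := by
    rw [Metric.mem_ball]
    rw [dist_pi_lt_iff hε]
    intro i
    rw [Real.dist_eq, abs_of_pos (by linarith [hr1 i])]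
    linarith [hr2 i]
  have hξ₁U : F (fun i => (r i : ℝ)) ∈ U := hball hrball
  obtain ⟨d, k, hd, hk⟩ := aux_ratden r
  refine ⟨(d : ℝ) • F (fun i => (r i : ℝ)), hUcone _ hξ₁U d (by exact_mod_cast hd), ?_⟩
  intro l hl
  choose n hn using fun i => hgL i l hl
  refine ⟨∑ i, k i * n i, ?_⟩
  rw [real_inner_smul_left, hFdef]
  simp only
  rw [sum_inner]
  push_cast
  rw [Finset.mul_sum]
  apply Finset.sum_congr rfl
  intro i _
  rw [real_inner_smul_left, hn i]
  have hki : ((k i : ℝ)) = (d : ℝ) * (r i : ℝ) := by exact_mod_cast hk i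
  rw [hki]
  ring

/-- Let `L` be a lattice in `V`, `C` an open nondegenerate convex
cone and `p ∈ C_+`, the convex hull of the rational points of `closure C`
(rational = rational multiples of lattice vectors). Identifying `V*` with `V`
via the inner product, the set `{ξ(p) : ξ ∈ C° ∩ L*}` is a discrete subset of
`ℝ≥0`, and in particular `ξ ↦ ξ(p)` attains a minimum on `C° ∩ L*`. -/
theorem stmt_9 {V : Type*} [NormedAddCommGroup V] [InnerProductSpace ℝ V]
    [FiniteDimensional ℝ V]
    (L : AddSubgroup V) (hLdisc : DiscreteTopology L)
    (hLspan : Submodule.span ℝ (L : Set V) = ⊤)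
    (C : Set V) (hCopen : IsOpen C) (hCconv : Convex ℝ C) (hCne : C.Nonempty)
    (hCcone : ∀ x ∈ C, ∀ t : ℝ, 0 < t → t • x ∈ C)
    (hCnd : ∀ x v : V, v ≠ 0 → ¬ ∀ t : ℝ, x + t • v ∈ C)
    (Cdeg : Set V) (hCdeg : Cdeg = interior {ξ : V | ∀ x ∈ closure C, 0 ≤ ⟪ξ, x⟫})
    (Lstar : Set V) (hLstar : Lstar = {ξ : V | ∀ l ∈ L, ∃ n : ℤ, ⟪ξ, l⟫ = (n : ℝ)})
    (p : V)
    (hp : p ∈ convexHull ℝ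
      (closure C ∩ {v : V | ∃ (q : ℚ) (l : V), l ∈ L ∧ v = (q : ℝ) • l})) :
    {r : ℝ | ∃ ξ ∈ Cdeg ∩ Lstar, r = ⟪ξ, p⟫} ⊆ Set.Ici (0 : ℝ) ∧
      (∀ r ∈ {r : ℝ | ∃ ξ ∈ Cdeg ∩ Lstar, r = ⟪ξ, p⟫},
        ∃ ε > (0 : ℝ), ∀ r' ∈ {r : ℝ | ∃ ξ ∈ Cdeg ∩ Lstar, r = ⟪ξ, p⟫},
          |r' - r| < ε → r' = r) ∧
      ∃ ξ₀ ∈ Cdeg ∩ Lstar, ∀ ξ ∈ Cdeg ∩ Lstar, ⟪ξ₀, p⟫ ≤ ⟪ξ, p⟫ := by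
  classical
  set S := {r : ℝ | ∃ ξ ∈ Cdeg ∩ Lstar, r = ⟪ξ, p⟫} with hSdef
  -- decompose p as a convex combination of rational points
  rw [convexHull_eq] at hp
  obtain ⟨κ, t, w, z, hw0, hw1, hz, hcm⟩ := hp
  have hpsum : p = ∑ i ∈ t, w i • z i := by
    rw [← hcm, Finset.centerMass_eq_of_sum_1 _ _ hw1]
  set t' := t.filter (fun i => w i ≠ 0) with ht'
  have hpsum' : p = ∑ i ∈ t', w i • z i := by
    rw [hpsum]
    exact (Finset.sum_filter_of_ne (p := fun i => w i ≠ 0) (f := fun i => w i • z i)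
      (fun i hi hne hw => hne (by simp [hw]))).symm
  have hz' : ∀ i : {i // i ∈ t'}, z (i : κ) ∈ closure C ∧
      ∃ s : ℚ, ∃ lvv, lvv ∈ L ∧ z (i : κ) = (s : ℝ) • lvv := by
    rintro ⟨i, hi⟩
    have hit : i ∈ t := (Finset.mem_filter.1 hi).1
    obtain ⟨h1, s, lvv, hlvv, heq⟩ := hz i hit
    exact ⟨h1, s, lvv, hlvv, heq⟩
  choose hzC q lv hlvL hzeq using hz'
  obtain ⟨N, k, hN, hkq⟩ := aux_ratden q
  have hNpos : (0:ℝ) < N := by exact_mod_cast hN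
  have hNne : (N:ℝ) ≠ 0 := hNpos.ne'
  have hwpos : ∀ i : {i // i ∈ t'}, 0 < w (i : κ) := by
    rintro ⟨i, hi⟩
    obtain ⟨hit, hne⟩ := Finset.mem_filter.1 hi
    exact lt_of_le_of_ne (hw0 i hit) (Ne.symm hne)
  have hinner_nonneg : ∀ ξ ∈ Cdeg, ∀ x ∈ closure C, 0 ≤ ⟪ξ, x⟫ := by
    intro ξ hξ x hx
    rw [hCdeg] at hξ
    exact interior_subset hξ x hx
  -- representation of values
  have hrep : ∀ ξ, ξ ∈ Cdeg ∩ Lstar → ∃ m : {i // i ∈ t'} → ℕ,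
      (∀ i, (m i : ℝ) = (N : ℝ) * ⟪ξ, z i.1⟫) ∧
      ⟪ξ, p⟫ = ∑ i : {i // i ∈ t'}, (w i.1 / N) * (m i : ℝ) := by
    rintro ξ ⟨hξC, hξL⟩
    rw [hLstar] at hξL
    choose n hn using fun i : {i // i ∈ t'} => hξL (lv i) (hlvL i)
    have hzval : ∀ i : {i // i ∈ t'}, ⟪ξ, z (i:κ)⟫ = (q i : ℝ) * (n i : ℝ) := by
      intro i
      rw [hzeq i, real_inner_smul_right, hn i]
    have hint : ∀ i, ((k i * n i : ℤ) : ℝ) = (N:ℝ) * ⟪ξ, z (i:κ)⟫ := by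
      intro i
      rw [hzval i]
      have hki : ((k i : ℝ)) = (N:ℝ) * (q i : ℝ) := by exact_mod_cast hkq i
      push_cast
      rw [hki]
      ring
    have hge : ∀ i, 0 ≤ k i * n i := by
      intro i
      have h1 : (0:ℝ) ≤ (N:ℝ) * ⟪ξ, z (i:κ)⟫ :=
        mul_nonneg hNpos.le (hinner_nonneg ξ hξC _ (hzC i))
      rw [← hint i] at h1
      exact_mod_cast h1
    have hmval : ∀ i, (((k i * n i).toNat : ℕ) : ℝ) = (N:ℝ) * ⟪ξ, z (i:κ)⟫ := by
      intro i
      rw [← hint i]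
      exact_mod_cast congrArg (Int.cast : ℤ → ℝ) (Int.toNat_of_nonneg (hge i))
    refine ⟨fun i => (k i * n i).toNat, hmval, ?_⟩
    calc ⟪ξ, p⟫ = ∑ i ∈ t', w i * ⟪ξ, z i⟫ := by
          rw [hpsum', inner_sum]
          exact Finset.sum_congr rfl fun i _ => real_inner_smul_right _ _ _
      _ = ∑ i : {i // i ∈ t'}, w (i:κ) * ⟪ξ, z (i:κ)⟫ :=
          (Finset.sum_coe_sort t' (fun i => w i * ⟪ξ, z i⟫)).symm
      _ = ∑ i : {i // i ∈ t'}, (w (i:κ) / N) * ((k i * n i).toNat : ℝ) := by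
          refine Finset.sum_congr rfl fun i _ => ?_
          rw [hmval i]
          field_simp
  -- the set of values is nonnegative
  have hge0 : S ⊆ Set.Ici (0:ℝ) := by
    rintro r ⟨ξ, hξ, rfl⟩
    obtain ⟨m, hmval, hmsum⟩ := hrep ξ hξ
    rw [hmsum]
    exact Set.mem_Ici.2 (Finset.sum_nonneg fun i _ =>
      mul_nonneg (div_nonneg (hwpos i).le hNpos.le) (Nat.cast_nonneg _))
  -- finiteness of bounded pieces
  have hfin : ∀ M : ℝ, (S ∩ Set.Iic M).Finite := by
    intro M
    apply (aux_fin_vals (fun i : {i // i ∈ t'} => w (i:κ) / N)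
      (fun i => ⌈M * N / w (i:κ)⌉₊)).subset
    rintro r ⟨hrS, hrM⟩
    obtain ⟨ξ, hξ, rfl⟩ := hrS
    obtain ⟨m, hmval, hmsum⟩ := hrep ξ hξ
    refine ⟨m, ?_, hmsum⟩
    intro i
    have hterm_nonneg : ∀ j : {i // i ∈ t'}, 0 ≤ (w (j:κ)/N) * m j := fun j =>
      mul_nonneg (div_nonneg (hwpos j).le hNpos.le) (Nat.cast_nonneg _)
    have hle : (w (i:κ)/N) * m i ≤ M := by
      have h1 := Finset.single_le_sum (f := fun j : {i // i ∈ t'} => (w (j:κ)/N) * m j)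
        (fun j _ => hterm_nonneg j) (Finset.mem_univ i)
      rw [← hmsum] at h1
      exact h1.trans (Set.mem_Iic.1 hrM)
    have hwp := hwpos i
    have hmb : (m i : ℝ) ≤ M * N / w (i:κ) := by
      rw [div_mul_eq_mul_div, div_le_iff₀ hNpos] at hle
      rw [le_div_iff₀ hwp]
      nlinarith
    exact_mod_cast hmb.trans (Nat.le_ceil _)
  -- nonemptiness of Cdeg ∩ Lstar
  have hCdegopen : IsOpen Cdeg := by rw [hCdeg]; exact isOpen_interior
  have hCdegne : Cdeg.Nonempty := by
    rw [hCdeg]; exact aux_dual_int_ne C hCopen hCconv hCne hCcone hCnd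
  have hCdegcone : ∀ ξ ∈ Cdeg, ∀ c : ℝ, 0 < c → c • ξ ∈ Cdeg := by
    intro ξ hξ c hc
    rw [hCdeg] at hξ ⊢
    have hmap := (isOpenMap_smul₀ hc.ne')
      (interior {ξ : V | ∀ x ∈ closure C, 0 ≤ ⟪ξ, x⟫}) isOpen_interior
    have hsub : (fun y : V => c • y) '' interior {ξ : V | ∀ x ∈ closure C, 0 ≤ ⟪ξ, x⟫}
        ⊆ {ξ : V | ∀ x ∈ closure C, 0 ≤ ⟪ξ, x⟫} := by
      rintro _ ⟨η, hη, rfl⟩ x hx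
      rw [real_inner_smul_left]
      exact mul_nonneg hc.le (interior_subset hη x hx)
    exact interior_maximal hsub hmap ⟨ξ, hξ, rfl⟩
  obtain ⟨ξs, hξsU, hξsL⟩ :=
    aux_exists_dual_lattice L hLdisc hLspan Cdeg hCdegopen hCdegne hCdegcone
  have hξs : ξs ∈ Cdeg ∩ Lstar := ⟨hξsU, by rw [hLstar]; exact hξsL⟩
  have hSne : S.Nonempty := ⟨⟪ξs, p⟫, ξs, hξs, rfl⟩
  obtain ⟨hiso, hmin⟩ := aux_discrete S hfin
  refine ⟨hge0, hiso, ?_⟩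
  obtain ⟨r₀, hr₀S, hr₀min⟩ := hmin hSne
  obtain ⟨ξ₀, hξ₀, hr₀eq⟩ := hr₀S
  refine ⟨ξ₀, hξ₀, fun ξ hξ => ?_⟩
  rw [← hr₀eq]
  exact hr₀min _ ⟨ξ, hξ, rfl⟩
end

section
/- Let V be a finite-dimensional real vector space, C an open nondegenerate convex cone, and Γ ≤ GL(V) a group preserving C and a lattice L ⊆ V. Then Γ acts properly discontinuously on C: for every compact K ⊆ C, the set {γ ∈ Γ : γK ∩ K ≠ ∅} is finite. -/
open Set Metric

theorem stmt10_aux {V : Type*} [NormedAddCommGroup V] [NormedSpace ℝ V] [FiniteDimensional ℝ V]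
    (C : Set V) (hCopen : IsOpen C) (hCconv : Convex ℝ C) (hCne : C.Nonempty)
    (hCcone : ∀ x ∈ C, ∀ t : ℝ, 0 < t → t • x ∈ C)
    (hCnd : ∀ x v : V, v ≠ 0 → ¬ ∀ t : ℝ, x + t • v ∈ C) :
    ∃ (ℓ : V →L[ℝ] ℝ) (c : ℝ), 0 < c ∧ ∀ z ∈ closure C, c * ‖z‖ ≤ ℓ z := by
  obtain ⟨x₀, hx₀⟩ := hCne
  have hsmul : ∀ (t : ℝ), 0 < t → ∀ z ∈ closure C, t • z ∈ closure C := by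
    intro t ht z hz
    exact map_mem_closure (continuous_const_smul t) hz (fun x hx => hCcone x hx t ht)
  have h0 : (0 : V) ∈ closure C := by
    have h1 : Filter.Tendsto (fun n : ℕ => (1 / (n + 1) : ℝ) • x₀) Filter.atTop (nhds 0) := by
      have := (tendsto_one_div_add_atTop_nhds_zero_nat (𝕜 := ℝ)).smul_const x₀
      simpa using this
    exact mem_closure_of_tendsto h1 (Filter.Eventually.of_forall fun n =>
      hCcone x₀ hx₀ _ (by positivity))
  have hclconv : Convex ℝ (closure C) := hCconv.closure
  have haddC : ∀ a ∈ C, ∀ b ∈ C, a + b ∈ C := by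
    intro a ha b hb
    have hmid : (1/2 : ℝ) • a + (1/2 : ℝ) • b ∈ C :=
      hCconv ha hb (by norm_num) (by norm_num) (by norm_num)
    have h2 := hCcone _ hmid 2 (by norm_num)
    rw [smul_add, smul_smul, smul_smul] at h2
    norm_num at h2
    exact h2
  have habs : ∀ a ∈ C, ∀ z ∈ closure C, a + z ∈ C := by
    intro a ha z hz
    obtain ⟨ε, hε, hball⟩ := Metric.isOpen_iff.mp hCopen a ha
    obtain ⟨z', hz'C, hz'⟩ := Metric.mem_closure_iff.mp hz ε hε
    have h1 : a + (z - z') ∈ C := by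
      apply hball
      simp only [mem_ball, dist_eq_norm]
      simpa [dist_eq_norm] using hz'
    have h2 := haddC _ h1 _ hz'C
    have h3 : a + (z - z') + z' = a + z := by abel
    rwa [h3] at h2
  have hpointed : ∀ z ∈ closure C, -z ∈ closure C → z = 0 := by
    intro z hz hnz
    by_contra hz0
    refine hCnd x₀ z hz0 (fun t => ?_)
    rcases lt_trichotomy t 0 with h | h | h
    · have h1 : (-t) • (-z) ∈ closure C := hsmul (-t) (by linarith) _ hnz
      have h2 : t • z ∈ closure C := by
        rw [smul_neg, neg_smul, neg_neg] at h1; exact h1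
      exact habs x₀ hx₀ _ h2
    · simpa [h] using hx₀
    · exact habs x₀ hx₀ _ (hsmul t h z hz)
  set D : Set V := closure C ∩ sphere (0:V) 1 with hD
  rcases D.eq_empty_or_nonempty with hDe | hDne
  · refine ⟨0, 1, one_pos, fun z hz => ?_⟩
    have hz0 : z = 0 := by
      by_contra h
      have hn : (0:ℝ) < ‖z‖ := norm_pos_iff.mpr h
      have : ‖z‖⁻¹ • z ∈ D := by
        refine ⟨hsmul _ (by positivity) z hz, ?_⟩
        rw [mem_sphere_zero_iff_norm, norm_smul, norm_inv, norm_norm]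
        field_simp
      rw [hDe] at this
      exact this
    simp [hz0]
  · have hsep : ∀ z : V, ∃ f : V →L[ℝ] ℝ, (∀ y ∈ closure C, 0 ≤ f y) ∧
        (z ∈ D → 0 < f z) := by
      intro z
      by_cases hz : z ∈ D
      · have hz1 : ‖z‖ = 1 := mem_sphere_zero_iff_norm.mp hz.2
        have hzne : z ≠ 0 := by intro h; rw [h] at hz1; simp at hz1
        have hnz : -z ∉ closure C := fun h => hzne (hpointed z hz.1 h)
        obtain ⟨f, u, hfu, hfC⟩ := geometric_hahn_banach_point_closed hclconv
          isClosed_closure hnz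
        have hu0 : u < 0 := by have := hfC 0 h0; simpa using this
        refine ⟨f, fun y hy => ?_, fun _ => ?_⟩
        · by_contra hneg
          push_neg at hneg
          have hqpos : (0:ℝ) < 2 * u / f y := by
            apply div_pos_of_neg_of_neg (by linarith) hneg
          have := hfC _ (hsmul _ hqpos y hy)
          rw [map_smul, smul_eq_mul] at this
          rw [div_mul_cancel₀] at this
          · linarith
          · exact ne_of_lt hneg
        · have : f (-z) = -f z := by rw [map_neg]
          linarith [hfu.trans hu0, this ▸ hfu]
      · exact ⟨0, by simp, fun h => absurd h hz⟩
    choose F hF0 hF1 using hsep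
    have hDcomp : IsCompact D := (isCompact_sphere 0 1).inter_left isClosed_closure
    obtain ⟨t, ht⟩ := hDcomp.elim_finite_subcover (fun z => {y | 0 < F z y})
      (fun z => isOpen_lt continuous_const (F z).continuous)
      (fun w hw => Set.mem_iUnion.mpr ⟨w, hF1 w hw⟩)
    set ℓ : V →L[ℝ] ℝ := ∑ z ∈ t, F z with hℓ
    have hℓapp : ∀ y, ℓ y = ∑ z ∈ t, F z y := by
      intro y; rw [hℓ]; simp
    have hℓnn : ∀ y ∈ closure C, 0 ≤ ℓ y := by
      intro y hy; rw [hℓapp]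
      exact Finset.sum_nonneg fun z _ => hF0 z y hy
    have hℓpos : ∀ w ∈ D, 0 < ℓ w := by
      intro w hw
      obtain ⟨z, hzt, hzw⟩ := Set.mem_iUnion₂.mp (ht hw)
      rw [hℓapp]
      exact Finset.sum_pos' (fun z _ => hF0 z w hw.1) ⟨z, hzt, hzw⟩
    obtain ⟨w₀, hw₀D, hmin⟩ := hDcomp.exists_isMinOn hDne ℓ.continuous.continuousOn
    refine ⟨ℓ, ℓ w₀, hℓpos _ hw₀D, fun z hz => ?_⟩
    rcases eq_or_ne z 0 with rfl | hzne
    · simp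
    · have hn : (0:ℝ) < ‖z‖ := norm_pos_iff.mpr hzne
      have hwD : ‖z‖⁻¹ • z ∈ D := by
        refine ⟨hsmul _ (by positivity) z hz, ?_⟩
        rw [mem_sphere_zero_iff_norm, norm_smul, norm_inv, norm_norm]
        field_simp
      have h1 : ℓ w₀ ≤ ℓ (‖z‖⁻¹ • z) := hmin hwD
      rw [map_smul, smul_eq_mul] at h1
      calc ℓ w₀ * ‖z‖ ≤ (‖z‖⁻¹ * ℓ z) * ‖z‖ := by nlinarith
        _ = ℓ z := by field_simp



/-- A subgroup `Γ` of `GL(V)` preserving an open nondegenerate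
convex cone `C` and a lattice `L` acts properly discontinuously on `C`: for
every compact `K ⊆ C`, only finitely many `γ ∈ Γ` satisfy `γK ∩ K ≠ ∅`. -/
theorem stmt_10 {V : Type*} [NormedAddCommGroup V] [NormedSpace ℝ V]
    [FiniteDimensional ℝ V]
    (L : AddSubgroup V) (hLdisc : DiscreteTopology L)
    (hLspan : Submodule.span ℝ (L : Set V) = ⊤)
    (C : Set V) (hCopen : IsOpen C) (hCconv : Convex ℝ C) (hCne : C.Nonempty)
    (hCcone : ∀ x ∈ C, ∀ t : ℝ, 0 < t → t • x ∈ C)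
    (hCnd : ∀ x v : V, v ≠ 0 → ¬ ∀ t : ℝ, x + t • v ∈ C)
    (Γ : Subgroup (LinearMap.GeneralLinearGroup ℝ V))
    (hΓC : ∀ γ ∈ Γ, (γ : V →ₗ[ℝ] V) '' C = C)
    (hΓL : ∀ γ ∈ Γ, (γ : V →ₗ[ℝ] V) '' (L : Set V) = (L : Set V)) :
    ∀ K : Set V, IsCompact K → K ⊆ C →
      {γ : Γ | (((γ : LinearMap.GeneralLinearGroup ℝ V) : V →ₗ[ℝ] V) '' K ∩ K).Nonempty}.Finite := by
  intro K hK hKC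
  obtain ⟨ℓ, c, hc, hℓ⟩ := stmt10_aux C hCopen hCconv hCne hCcone hCnd
  obtain ⟨δ, hδ, hthick⟩ := hK.exists_thickening_subset_open hCopen hKC
  have hball : ∀ x ∈ K, ∀ y : V, dist y x < δ → y ∈ C := fun x hx y hy =>
    hthick (Metric.mem_thickening_iff.mpr ⟨x, hx, hy⟩)
  obtain ⟨c₂, hc₂⟩ := hK.exists_bound_of_continuousOn ℓ.continuous.continuousOn
  obtain ⟨s, hsL, hspan, hli⟩ := exists_linearIndependent ℝ (L : Set V)
  rw [hLspan] at hspan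
  haveI : Finite s := hli.finite
  let b : Module.Basis s ℝ V := Module.Basis.mk hli (by rw [Subtype.range_coe]; exact hspan.ge)
  have hLclosed : IsClosed (L : Set V) := AddSubgroup.isClosed_of_discrete
  set T : s → Set V := fun i => (L : Set V) ∩ closedBall 0 (8 * c₂ * ‖(i : V)‖ / (c * δ))
    with hT
  have hTfin : ∀ i, (T i).Finite := by
    intro i
    have hcomp : IsCompact (T i) := (isCompact_closedBall _ _).inter_left hLclosed
    have hdisc : DiscreteTopology (T i) :=
      DiscreteTopology.of_subset hLdisc inter_subset_left
    exact hcomp.finite (isDiscrete_iff_discreteTopology.mpr hdisc)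
  have key : ∀ γ : Γ, (((γ : LinearMap.GeneralLinearGroup ℝ V) : V →ₗ[ℝ] V) '' K ∩ K).Nonempty →
      ∀ i : s, ((γ : LinearMap.GeneralLinearGroup ℝ V) : V →ₗ[ℝ] V) (i : V) ∈ T i := by
    intro γ hγ i
    set g : V →ₗ[ℝ] V := ((γ : LinearMap.GeneralLinearGroup ℝ V) : V →ₗ[ℝ] V) with hg
    obtain ⟨y, ⟨x, hxK, rfl⟩, hyK⟩ := hγ
    set e : V := (i : V) with he
    have heL : e ∈ L := hsL i.2
    have he0 : e ≠ 0 := by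
      have := b.ne_zero i
      rwa [show b i = e by simp [b, Module.Basis.coe_mk, he]] at this
    have hne : (0:ℝ) < ‖e‖ := norm_pos_iff.mpr he0
    set t₀ : ℝ := δ / (2 * ‖e‖) with ht₀def
    have ht₀ : 0 < t₀ := by positivity
    have ht₀e : ‖t₀ • e‖ = δ / 2 := by
      rw [norm_smul, Real.norm_eq_abs, abs_of_pos ht₀, ht₀def]
      field_simp
    have hx1 : x + t₀ • e ∈ C := by
      apply hball x hxK
      rw [dist_eq_norm, add_sub_cancel_left, ht₀e]
      linarith
    have hx2 : x - t₀ • e ∈ C := by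
      apply hball x hxK
      rw [dist_eq_norm, sub_sub_cancel_left, norm_neg, ht₀e]
      linarith
    have hgC : ∀ w ∈ C, g w ∈ C := by
      intro w hw
      rw [← hΓC _ γ.2]
      exact mem_image_of_mem _ hw
    have hA : c * ‖g x‖ ≤ ℓ (g x) := hℓ _ (subset_closure (hKC hyK))
    have hB : ℓ (g x) ≤ c₂ := by
      have := hc₂ _ hyK
      rw [Real.norm_eq_abs] at this
      exact (le_abs_self _).trans this
    have hP1 : c * ‖g (x + t₀ • e)‖ ≤ ℓ (g (x + t₀ • e)) :=
      hℓ _ (subset_closure (hgC _ hx1))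
    have hP2 : 0 ≤ ℓ (g (x - t₀ • e)) := by
      have h1 : c * ‖g (x - t₀ • e)‖ ≤ ℓ (g (x - t₀ • e)) :=
        hℓ _ (subset_closure (hgC _ hx2))
      nlinarith [norm_nonneg (g (x - t₀ • e))]
    have hsum : ℓ (g (x + t₀ • e)) + ℓ (g (x - t₀ • e)) = 2 * ℓ (g x) := by
      have h1 : (x + t₀ • e) + (x - t₀ • e) = (2:ℝ) • x := by module
      rw [← map_add, ← map_add, h1, map_smul, map_smul, smul_eq_mul]
    have hc₂0 : 0 ≤ c₂ := le_trans (mul_nonneg hc.le (norm_nonneg (g x))) (hA.trans hB)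
    have hnorm1 : ‖g (x + t₀ • e)‖ ≤ 3 * c₂ / c := by
      rw [le_div_iff₀ hc]
      nlinarith
    have hnormx : ‖g x‖ ≤ c₂ / c := by
      rw [le_div_iff₀ hc]
      nlinarith
    have hdiff : g (x + t₀ • e) - g x = t₀ • g e := by
      rw [map_add, map_smul]; abel
    have hge : t₀ * ‖g e‖ ≤ 4 * c₂ / c := by
      have h1 : ‖g (x + t₀ • e) - g x‖ ≤ 3 * c₂ / c + c₂ / c :=
        (norm_sub_le _ _).trans (by linarith)
      rw [hdiff, norm_smul, Real.norm_eq_abs, abs_of_pos ht₀] at h1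
      have h2 : 3 * c₂ / c + c₂ / c = 4 * c₂ / c := by ring
      linarith
    refine ⟨?_, ?_⟩
    · show g e ∈ (L : Set V)
      rw [← hΓL _ γ.2]
      exact mem_image_of_mem _ heL
    · show g e ∈ closedBall 0 (8 * c₂ * ‖e‖ / (c * δ))
      rw [mem_closedBall, dist_zero_right, le_div_iff₀ (by positivity)]
      have h2 : t₀ * ‖g e‖ * (2 * ‖e‖) ≤ 4 * c₂ / c * (2 * ‖e‖) :=
        mul_le_mul_of_nonneg_right hge (by positivity)
      have h3 : t₀ * (2 * ‖e‖) = δ := by rw [ht₀def]; field_simp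
      have h4 : ‖g e‖ * δ ≤ 8 * c₂ * ‖e‖ / c := by
        calc ‖g e‖ * δ = t₀ * ‖g e‖ * (2 * ‖e‖) := by rw [mul_comm t₀, mul_assoc, h3]
          _ ≤ 4 * c₂ / c * (2 * ‖e‖) := h2
          _ = 8 * c₂ * ‖e‖ / c := by ring
      have h5 : ‖g e‖ * δ * c ≤ 8 * c₂ * ‖e‖ := by
        have := mul_le_mul_of_nonneg_right h4 hc.le
        calc ‖g e‖ * δ * c ≤ 8 * c₂ * ‖e‖ / c * c := this
          _ = 8 * c₂ * ‖e‖ := by field_simp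
      calc ‖g e‖ * (c * δ) = ‖g e‖ * δ * c := by ring
        _ ≤ 8 * c₂ * ‖e‖ := h5
  have hpi : (Set.pi univ T).Finite := Set.Finite.pi hTfin
  apply Set.Finite.of_finite_image
    (f := fun γ : Γ => fun i : s => ((γ : LinearMap.GeneralLinearGroup ℝ V) : V →ₗ[ℝ] V) (i : V))
  · apply hpi.subset
    rintro _ ⟨γ, hγ, rfl⟩
    intro i _
    exact key γ hγ i
  · intro γ₁ _ γ₂ _ h
    have heq : ((γ₁ : LinearMap.GeneralLinearGroup ℝ V) : V →ₗ[ℝ] V)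
        = ((γ₂ : LinearMap.GeneralLinearGroup ℝ V) : V →ₗ[ℝ] V) := by
      apply b.ext
      intro i
      have := congrFun h i
      simpa [b, Module.Basis.coe_mk] using this
    exact Subtype.ext (Units.ext heq)
end

section
/- Let C be an open nondegenerate convex cone in a finite-dimensional real vector space V, Γ ≤ GL(V) a group preserving C and a lattice L. Then for every y ∈ C, the set U₀ of ξ in the open dual cone C° such that ξ(y') > ξ(y) for all y' ∈ Γy \ {y}, is an open convex cone in C°, and it is nonempty. -/
set_option maxHeartbeats 1000000

open scoped RealInnerProductSpace
set_option linter.unusedSectionVars false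



section Aux
variable {V : Type*} [NormedAddCommGroup V] [InnerProductSpace ℝ V] [FiniteDimensional ℝ V]

lemma aux_exists_inner_ne (W : Finset V) (hW : ∀ w ∈ W, w ≠ 0) :
    ∃ u : V, ∀ w ∈ W, ⟪u, w⟫ ≠ 0 := by
  classical
  induction W using Finset.induction_on with
  | empty => exact ⟨0, by simp⟩
  | @insert w s hw ih =>
    obtain ⟨u, hu⟩ := ih (fun w' hw' => hW w' (Finset.mem_insert_of_mem hw'))
    have hw0 : w ≠ 0 := hW w (Finset.mem_insert_self _ _)
    set B : Finset ℝ := (insert w s).image (fun w' => -⟪u, w'⟫ / ⟪w, w'⟫) with hB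
    obtain ⟨t, ht⟩ := Infinite.exists_notMem_finset B
    refine ⟨u + t • w, fun w' hw' => ?_⟩
    rw [inner_add_left, real_inner_smul_left]
    by_cases hww' : ⟪w, w'⟫ = 0
    · have hw's : w' ∈ s := by
        rcases Finset.mem_insert.1 hw' with h | h
        · exfalso; apply hw0; subst h
          exact inner_self_eq_zero.mp hww'
        · exact h
      rw [hww', mul_zero, add_zero]
      exact hu w' hw's
    · intro hcontra
      apply ht
      rw [hB]
      refine Finset.mem_image.2 ⟨w', hw', ?_⟩
      field_simp
      linarith [hcontra]

lemma aux_perturb (ξ : V) {δ : ℝ} (hδ : 0 < δ) (W : Finset V) (hW : ∀ w ∈ W, w ≠ 0) :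
    ∃ ξ' : V, ‖ξ' - ξ‖ < δ ∧ ∀ w ∈ W, ⟪ξ', w⟫ ≠ 0 := by
  classical
  rcases W.eq_empty_or_nonempty with rfl | ⟨w₀, hw₀⟩
  · exact ⟨ξ, by simpa using hδ, by simp⟩
  obtain ⟨u, hu⟩ := aux_exists_inner_ne W hW
  have hu0 : u ≠ 0 := by
    intro h; exact hu w₀ hw₀ (by simp [h])
  have hun : 0 < ‖u‖ := norm_pos_iff.2 hu0
  set B : Finset ℝ := W.image (fun w => -⟪ξ, w⟫ / ⟪u, w⟫) with hB
  have hIoo : (Set.Ioo (0:ℝ) (δ / ‖u‖)).Infinite :=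
    Set.Ioo_infinite (by positivity)
  obtain ⟨t, htmem, htB⟩ := hIoo.exists_notMem_finset B
  refine ⟨ξ + t • u, ?_, fun w hw => ?_⟩
  · have : ‖(ξ + t • u) - ξ‖ = |t| * ‖u‖ := by
      simp [norm_smul]
    rw [this, abs_of_pos htmem.1]
    calc t * ‖u‖ < (δ / ‖u‖) * ‖u‖ := by
          exact mul_lt_mul_of_pos_right htmem.2 hun
      _ = δ := by field_simp
  · rw [inner_add_left, real_inner_smul_left]
    intro hcontra
    apply htB
    rw [hB]
    refine Finset.mem_image.2 ⟨w, hw, ?_⟩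
    have huw := hu w hw
    field_simp
    linarith [hcontra]

end Aux



section Cone2
variable {V : Type*} [NormedAddCommGroup V] [InnerProductSpace ℝ V] [FiniteDimensional ℝ V]
variable {C : Set V}



/-- the dual cone as a set -/
def dualSet' (C : Set V) : Set V := {ξ : V | ∀ x ∈ C, 0 ≤ ⟪ξ, x⟫}

lemma cone_add_mem (hCconv : Convex ℝ C)
    (hCcone : ∀ x ∈ C, ∀ t : ℝ, 0 < t → t • x ∈ C) :
    ∀ x ∈ C, ∀ z ∈ C, x + z ∈ C := by
  intro x hx z hz
  have h2 : ((1:ℝ)/2) • x + ((1:ℝ)/2) • z ∈ C :=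
    hCconv hx hz (by norm_num) (by norm_num) (by norm_num)
  have := hCcone _ h2 2 (by norm_num)
  convert this using 1
  rw [smul_add, smul_smul, smul_smul]
  norm_num

lemma cone_add_closure (hCopen : IsOpen C) (hCconv : Convex ℝ C)
    (hCcone : ∀ x ∈ C, ∀ t : ℝ, 0 < t → t • x ∈ C) :
    ∀ x ∈ C, ∀ z ∈ closure C, x + z ∈ C := by
  intro x hx z hz
  obtain ⟨r, hr, hball⟩ := Metric.isOpen_iff.1 hCopen x hx
  obtain ⟨z', hz', hdist⟩ := Metric.mem_closure_iff.1 hz r hr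
  have h1 : x + (z - z') ∈ C := by
    apply hball
    rw [Metric.mem_ball, dist_eq_norm]
    simpa [dist_eq_norm] using hdist
  have := cone_add_mem hCconv hCcone _ h1 _ hz'
  convert this using 1
  abel

lemma cone_zero_not_mem [Nontrivial V] (hCopen : IsOpen C)
    (hCcone : ∀ x ∈ C, ∀ t : ℝ, 0 < t → t • x ∈ C)
    (hCnd : ∀ x v : V, v ≠ 0 → ¬ ∀ t : ℝ, x + t • v ∈ C) :
    (0:V) ∉ C := by
  intro h0
  obtain ⟨v, hv⟩ := exists_ne (0:V)
  apply hCnd 0 v hv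
  intro t
  -- C = univ
  obtain ⟨r, hr, hball⟩ := Metric.isOpen_iff.1 hCopen 0 h0
  have huniv : ∀ w : V, w ∈ C := by
    intro w
    rcases eq_or_ne w 0 with rfl | hw
    · exact h0
    · have hwn : 0 < ‖w‖ := norm_pos_iff.2 hw
      have hmem : (r / (2 * ‖w‖)) • w ∈ C := by
        apply hball
        rw [Metric.mem_ball, dist_zero_right, norm_smul]
        rw [Real.norm_eq_abs, abs_of_pos (by positivity)]
        rw [div_mul_eq_mul_div, mul_comm]
        rw [div_lt_iff₀ (by positivity)]
        nlinarith
      have := hCcone _ hmem (2 * ‖w‖ / r) (by positivity)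
      rwa [smul_smul, div_mul_div_comm, mul_comm (2*‖w‖) r, div_self (by positivity), one_smul] at this
  exact huniv _

lemma isClosed_dualSet' : IsClosed (dualSet' C) := by
  have : dualSet' C = ⋂ x ∈ C, {ξ : V | 0 ≤ ⟪ξ, x⟫} := by
    ext ξ; simp [dualSet']
  rw [this]
  refine isClosed_biInter (fun x hx => ?_)
  exact isClosed_le continuous_const (Continuous.inner continuous_id continuous_const)

lemma convex_dualSet' : Convex ℝ (dualSet' C) := by
  intro ξ hξ η hη a b ha hb hab
  intro x hx
  rw [inner_add_left, real_inner_smul_left, real_inner_smul_left]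
  have := hξ x hx
  have := hη x hx
  positivity

lemma mem_closure_of_forall_dual (hCconv : Convex ℝ C) (hCne : C.Nonempty)
    (hCcone : ∀ x ∈ C, ∀ t : ℝ, 0 < t → t • x ∈ C)
    {v : V} (hv : ∀ ξ ∈ dualSet' C, 0 ≤ ⟪ξ, v⟫) : v ∈ closure C := by
  by_contra hvc
  obtain ⟨f, u, hfs, hfv⟩ :=
    geometric_hahn_banach_closed_point (hCconv.closure) isClosed_closure hvc
  -- u ≥ 0
  obtain ⟨x₀, hx₀⟩ := hCne
  have hu : 0 ≤ u := by
    by_contra hu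
    push_neg at hu
    -- small multiples of x₀
    have hf : ∀ t : ℝ, 0 < t → t * f x₀ < u := by
      intro t ht
      have : f (t • x₀) < u := hfs _ (subset_closure (hCcone _ hx₀ t ht))
      simpa [map_smul, smul_eq_mul] using this
    have hneg : 0 < -u := by linarith
    have htpos : 0 < min 1 (-u / (2 * (|f x₀| + 1))) :=
      lt_min one_pos (by positivity)
    have h1 := hf (min 1 (-u / (2 * (|f x₀| + 1)))) htpos
    set t := min 1 (-u / (2 * (|f x₀| + 1))) with htdef
    have ht1 : t ≤ 1 := min_le_left _ _
    have ht2 : t ≤ -u / (2 * (|f x₀| + 1)) := min_le_right _ _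
    have ht0 : 0 < t := htpos
    have : t * f x₀ ≥ -(t * (|f x₀| + 1)) := by
      have : f x₀ ≥ -(|f x₀| + 1) := by
        have := abs_nonneg (f x₀); have := neg_abs_le (f x₀); linarith
      nlinarith
    have : t * (|f x₀| + 1) ≤ -u / 2 := by
      rw [le_div_iff₀ (by positivity)] at ht2
      nlinarith [abs_nonneg (f x₀)]
    linarith
  -- f ≤ 0 on C
  have hfx : ∀ x ∈ C, f x ≤ 0 := by
    intro x hx
    by_contra hfx
    push_neg at hfx
    have : f (((u+1) / f x) • x) < u := hfs _ (subset_closure (hCcone _ hx _ (by positivity)))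
    rw [map_smul, smul_eq_mul, div_mul_cancel₀ _ (ne_of_gt hfx)] at this
    linarith
  -- representing vector
  set w := (InnerProductSpace.toDual ℝ V).symm f with hw
  have hwx : ∀ x : V, ⟪w, x⟫ = f x := fun x => InnerProductSpace.toDual_symm_apply
  have hmem : -w ∈ dualSet' C := by
    intro x hx
    rw [inner_neg_left, hwx]
    linarith [hfx x hx]
  have := hv _ hmem
  rw [inner_neg_left, hwx] at this
  linarith



lemma dual_nonneg_closure {ξ : V} (hξ : ξ ∈ dualSet' C) :
    ∀ x ∈ closure C, 0 ≤ ⟪ξ, x⟫ := by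
  intro x hx
  have hset : IsClosed {x : V | 0 ≤ ⟪ξ, x⟫} := by
    apply isClosed_le continuous_const
    exact Continuous.inner (continuous_const : Continuous fun _ : V => ξ) continuous_id
  exact closure_minimal (fun a ha => hξ a ha) hset hx

lemma mem_interior_dualSet_of_eps {ξ : V} {ε : ℝ} (hε0 : 0 < ε)
    (hε : ∀ x ∈ C, ε * ‖x‖ ≤ ⟪ξ, x⟫) : ξ ∈ interior (dualSet' C) := by
  rw [mem_interior]
  refine ⟨Metric.ball ξ ε, ?_, Metric.isOpen_ball, Metric.mem_ball_self hε0⟩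
  intro ξ' hξ' x hx
  have hd : ‖ξ' - ξ‖ < ε := by
    rw [Metric.mem_ball, dist_eq_norm] at hξ'; exact hξ'
  have h1 : |⟪ξ' - ξ, x⟫| ≤ ‖ξ' - ξ‖ * ‖x‖ := abs_real_inner_le_norm _ _
  have h2 : ⟪ξ', x⟫ = ⟪ξ, x⟫ + ⟪ξ' - ξ, x⟫ := by
    rw [← inner_add_left]; congr 1; abel
  rw [h2]
  have h3 : ‖ξ' - ξ‖ * ‖x‖ ≤ ε * ‖x‖ := mul_le_mul_of_nonneg_right hd.le (norm_nonneg _)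
  have := hε x hx
  have := neg_abs_le ⟪ξ' - ξ, x⟫
  linarith

lemma eps_of_mem_interior_dualSet {ξ : V} (h0 : ∀ x ∈ C, x ≠ (0:V))
    (hξ : ξ ∈ interior (dualSet' C)) :
    ∃ ε : ℝ, 0 < ε ∧ ∀ x ∈ C, ε * ‖x‖ ≤ ⟪ξ, x⟫ := by
  obtain ⟨ε, hε0, hball⟩ := Metric.mem_nhds_iff.1 (mem_interior_iff_mem_nhds.1 hξ)
  refine ⟨ε/2, by positivity, fun x hx => ?_⟩
  have hx0 : x ≠ 0 := h0 x hx
  have hxn : 0 < ‖x‖ := norm_pos_iff.2 hx0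
  set ζ := ξ - ((ε/2) * ‖x‖⁻¹) • x with hζ
  have hζmem : ζ ∈ dualSet' C := by
    apply hball
    rw [Metric.mem_ball, dist_eq_norm, hζ]
    have : ξ - ((ε/2) * ‖x‖⁻¹) • x - ξ = -(((ε/2) * ‖x‖⁻¹) • x) := by abel
    rw [this, norm_neg, norm_smul, Real.norm_eq_abs, abs_of_pos (by positivity)]
    rw [mul_assoc, inv_mul_cancel₀ (ne_of_gt hxn), mul_one]
    linarith
  have := hζmem x hx
  rw [hζ, inner_sub_left, real_inner_smul_left, real_inner_self_eq_norm_mul_norm] at this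
  have hsimp : (ε/2) * ‖x‖⁻¹ * (‖x‖ * ‖x‖) = (ε/2) * ‖x‖ := by
    field_simp
  rw [hsimp] at this
  linarith

lemma exists_eps_interior_dualSet [Nontrivial V] (hCopen : IsOpen C) (hCconv : Convex ℝ C)
    (hCne : C.Nonempty)
    (hCcone : ∀ x ∈ C, ∀ t : ℝ, 0 < t → t • x ∈ C)
    (hCnd : ∀ x v : V, v ≠ 0 → ¬ ∀ t : ℝ, x + t • v ∈ C)
    (hdualclosure : ∀ v : V, (∀ ξ ∈ dualSet' C, 0 ≤ ⟪ξ, v⟫) → v ∈ closure C)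
    (h0 : (0:V) ∉ C) :
    ∃ ξ : V, ∃ ε : ℝ, 0 < ε ∧ ∀ x ∈ C, ε * ‖x‖ ≤ ⟪ξ, x⟫ := by
  classical
  -- scaling closure
  have hclcone : ∀ z ∈ closure C, ∀ t : ℝ, 0 < t → t • z ∈ closure C := by
    intro z hz t ht
    exact map_mem_closure (continuous_const_smul t) hz (fun a ha => hCcone a ha t ht)
  -- span of dual is top
  have hspan : Submodule.span ℝ (dualSet' C) = ⊤ := by
    by_contra hne
    have hbot : (Submodule.span ℝ (dualSet' C))ᗮ ≠ ⊥ := by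
      intro h
      exact hne (Submodule.orthogonal_eq_bot_iff.1 h)
    obtain ⟨v, hvmem, hv0⟩ := Submodule.exists_mem_ne_zero_of_ne_bot hbot
    have hv : ∀ ξ ∈ dualSet' C, ⟪ξ, v⟫ = 0 := by
      intro ξ hξ
      exact (Submodule.mem_orthogonal _ v).1 hvmem ξ (Submodule.subset_span hξ)
    have hvcl : v ∈ closure C := hdualclosure v (fun ξ hξ => (hv ξ hξ).ge)
    have hvcl' : -v ∈ closure C := by
      apply hdualclosure
      intro ξ hξ
      rw [inner_neg_right, hv ξ hξ, neg_zero]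
    obtain ⟨x₀, hx₀⟩ := hCne
    apply hCnd x₀ v hv0
    intro t
    rcases lt_trichotomy t 0 with ht | rfl | ht
    · have : x₀ + t • v = x₀ + (-t) • (-v) := by rw [neg_smul, smul_neg, neg_neg]
      rw [this]
      exact cone_add_closure hCopen hCconv hCcone x₀ hx₀ _ (hclcone _ hvcl' _ (by linarith))
    · simpa using hx₀
    · exact cone_add_closure hCopen hCconv hCcone x₀ hx₀ _ (hclcone _ hvcl _ ht)
  -- independent spanning subset
  obtain ⟨b, hbsub, hbspan, hbind⟩ := exists_linearIndependent ℝ (dualSet' C)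
  rw [hspan] at hbspan
  have hbfin : b.Finite := hbind.setFinite
  set ξ := ∑ w ∈ hbfin.toFinset, w with hξdef
  have hξnn : ∀ x ∈ closure C, 0 ≤ ⟪ξ, x⟫ := by
    intro x hx
    rw [hξdef, sum_inner]
    apply Finset.sum_nonneg
    intro w hw
    exact dual_nonneg_closure (hbsub (hbfin.mem_toFinset.1 hw)) x hx
  have hξpos : ∀ x ∈ closure C, x ≠ 0 → 0 < ⟪ξ, x⟫ := by
    intro x hx hx0
    rcases lt_or_eq_of_le (hξnn x hx) with h | h
    · exact h
    exfalso
    apply hx0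
    -- all terms zero
    have hterms : ∀ w ∈ hbfin.toFinset, ⟪w, x⟫ = 0 := by
      have hsum : ∑ w ∈ hbfin.toFinset, ⟪w, x⟫ = 0 := by
        rw [← sum_inner, ← hξdef, ← h]
      intro w hw
      have := (Finset.sum_eq_zero_iff_of_nonneg (fun w hw =>
        dual_nonneg_closure (hbsub (hbfin.mem_toFinset.1 hw)) x hx)).1 hsum
      exact this w hw
    have hxorth : x ∈ (Submodule.span ℝ b)ᗮ := by
      apply (Submodule.mem_orthogonal _ _).2
      intro u hu
      induction hu using Submodule.span_induction with
      | mem u hu => exact hterms u (hbfin.mem_toFinset.2 hu)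
      | zero => simp
      | add u v _ _ hu hv => rw [inner_add_left, hu, hv, add_zero]
      | smul a u _ hu => rw [real_inner_smul_left, hu, mul_zero]
    rw [hbspan, Submodule.top_orthogonal_eq_bot] at hxorth
    simpa using hxorth
  -- compact minimum
  set K := closure C ∩ Metric.sphere (0:V) 1 with hK
  have hKcomp : IsCompact K := (isCompact_sphere 0 1).inter_left isClosed_closure
  obtain ⟨x₀, hx₀⟩ := hCne
  have hx₀0 : x₀ ≠ 0 := fun h => h0 (h ▸ hx₀)
  have hx₀n : 0 < ‖x₀‖ := norm_pos_iff.2 hx₀0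
  have hKne : K.Nonempty := by
    refine ⟨‖x₀‖⁻¹ • x₀, subset_closure (hCcone _ hx₀ _ (by positivity)), ?_⟩
    rw [mem_sphere_zero_iff_norm, norm_smul, Real.norm_eq_abs, abs_of_pos (by positivity),
      inv_mul_cancel₀ (ne_of_gt hx₀n)]
  have hcont : Continuous fun x : V => ⟪ξ, x⟫ :=
    Continuous.inner continuous_const continuous_id
  obtain ⟨z, hzK, hzmin⟩ := hKcomp.exists_isMinOn hKne hcont.continuousOn
  have hz0 : z ≠ 0 := by
    intro h
    have := hzK.2
    rw [h, mem_sphere_zero_iff_norm, norm_zero] at this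
    norm_num at this
  have hε0 : 0 < ⟪ξ, z⟫ := hξpos z hzK.1 hz0
  refine ⟨ξ, ⟪ξ, z⟫, hε0, fun x hx => ?_⟩
  have hxx0 : x ≠ 0 := fun h => h0 (h ▸ hx)
  have hxn : 0 < ‖x‖ := norm_pos_iff.2 hxx0
  have hmem : ‖x‖⁻¹ • x ∈ K := by
    refine ⟨subset_closure (hCcone _ hx _ (by positivity)), ?_⟩
    rw [mem_sphere_zero_iff_norm, norm_smul, Real.norm_eq_abs, abs_of_pos (by positivity),
      inv_mul_cancel₀ (ne_of_gt hxn)]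
  have := hzmin hmem
  rw [Set.mem_setOf_eq] at this  -- maybe not needed
  have h2 : ⟪ξ, ‖x‖⁻¹ • x⟫ = ‖x‖⁻¹ * ⟪ξ, x⟫ := real_inner_smul_right _ _ _
  have h3 : ⟪ξ, z⟫ ≤ ‖x‖⁻¹ * ⟪ξ, x⟫ := by rw [← h2]; exact this
  calc ⟪ξ, z⟫ * ‖x‖ ≤ (‖x‖⁻¹ * ⟪ξ, x⟫) * ‖x‖ := mul_le_mul_of_nonneg_right h3 (norm_nonneg _)
    _ = ⟪ξ, x⟫ := by field_simp

end Cone2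



section Fin
variable {V : Type*} [NormedAddCommGroup V] [InnerProductSpace ℝ V] [FiniteDimensional ℝ V]

lemma lattice_inter_finite (L : AddSubgroup V) (hLdisc : DiscreteTopology L) (R : ℝ) :
    ((L : Set V) ∩ Metric.closedBall 0 R).Finite := by
  haveI : DiscreteTopology ((L : Set V) : Set V) := hLdisc
  have hclosed : IsClosed (L : Set V) := AddSubgroup.isClosed_of_discrete
  have := Metric.finite_isBounded_inter_isClosed
    (K := Metric.closedBall (0:V) R) (s := (L : Set V))
    DiscreteTopology.isDiscrete Metric.isBounded_closedBall hclosed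
  exact Set.Finite.subset this (by rw [Set.inter_comm])

lemma finite_orbit_sublevel
    (L : AddSubgroup V) (hLdisc : DiscreteTopology L)
    (hLspan : Submodule.span ℝ (L : Set V) = ⊤)
    {C : Set V}
    (Γ : Subgroup (LinearMap.GeneralLinearGroup ℝ V))
    (hΓC : ∀ γ ∈ Γ, (γ : V →ₗ[ℝ] V) '' C = C)
    (hΓL : ∀ γ ∈ Γ, (γ : V →ₗ[ℝ] V) '' (L : Set V) = (L : Set V))
    {y : V} (hy : y ∈ C) {r : ℝ} (hr : 0 < r) (hball : Metric.closedBall y r ⊆ C)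
    {ξ : V} {ε : ℝ} (hε0 : 0 < ε) (hε : ∀ x ∈ C, ε * ‖x‖ ≤ ⟪ξ, x⟫)
    (M : ℝ) :
    {z : V | (∃ γ ∈ Γ, (γ : V →ₗ[ℝ] V) y = z) ∧ ⟪ξ, z⟫ ≤ M}.Finite := by
  classical
  set B : ℝ := 3 * M / (r * ε) with hB
  set G : Set (V →ₗ[ℝ] V) :=
    {g | (∃ γ ∈ Γ, ((γ : V →ₗ[ℝ] V) : V →ₗ[ℝ] V) = g) ∧ ⟪ξ, g y⟫ ≤ M} with hG
  -- norm bound on G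
  have hGnorm : ∀ g ∈ G, ∀ v : V, ‖g v‖ ≤ B * ‖v‖ := by
    rintro g ⟨⟨γ, hγΓ, rfl⟩, hgM⟩ v
    set g : V →ₗ[ℝ] V := (γ : V →ₗ[ℝ] V) with hgdef
    have hgC : ∀ x ∈ C, g x ∈ C := by
      intro x hx
      rw [← hΓC γ hγΓ]
      exact Set.mem_image_of_mem _ hx
    have hgy : g y ∈ C := hgC y hy
    have h0gy : ε * ‖g y‖ ≤ ⟪ξ, g y⟫ := hε _ hgy
    have hM0 : 0 ≤ M := le_trans (by positivity) (le_trans h0gy hgM)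
    rcases eq_or_ne v 0 with rfl | hv0
    · simp
    have hvn : 0 < ‖v‖ := norm_pos_iff.2 hv0
    set u : V := (r / ‖v‖) • v with hu
    have hun : ‖u‖ = r := by
      rw [hu, norm_smul, Real.norm_eq_abs, abs_of_pos (by positivity)]
      field_simp
    have hyu1 : y + u ∈ C := by
      apply hball
      rw [Metric.mem_closedBall, dist_eq_norm]
      simp [hun]
    have hyu2 : y - u ∈ C := by
      apply hball
      rw [Metric.mem_closedBall, dist_eq_norm]
      have : y - u - y = -u := by abel
      rw [this, norm_neg, hun]
    have e1 : ε * ‖g y + g u‖ ≤ ⟪ξ, g y⟫ + ⟪ξ, g u⟫ := by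
      have := hε _ (hgC _ hyu1)
      rwa [map_add, inner_add_right] at this
    have e2 : ε * ‖g y - g u‖ ≤ ⟪ξ, g y⟫ - ⟪ξ, g u⟫ := by
      have := hε _ (hgC _ hyu2)
      rwa [map_sub, inner_sub_right] at this
    have hgu_lb : -M ≤ ⟪ξ, g u⟫ := by nlinarith [norm_nonneg (g y + g u)]
    have hgy_ub : ‖g y‖ ≤ M / ε := by
      rw [le_div_iff₀ hε0]; nlinarith
    have hgyu_ub : ‖g y - g u‖ ≤ 2 * M / ε := by
      rw [le_div_iff₀ hε0]; nlinarith
    have hgu_ub : ‖g u‖ ≤ 3 * M / ε := by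
      have h : g u = g y - (g y - g u) := by abel
      rw [h]
      calc ‖g y - (g y - g u)‖ ≤ ‖g y‖ + ‖g y - g u‖ := norm_sub_le _ _
        _ ≤ M / ε + 2 * M / ε := add_le_add hgy_ub hgyu_ub
        _ = 3 * M / ε := by ring
    have hgu_eq : ‖g u‖ = r / ‖v‖ * ‖g v‖ := by
      rw [hu, map_smul, norm_smul, Real.norm_eq_abs, abs_of_pos (by positivity)]
    rw [hgu_eq, div_mul_eq_mul_div, div_le_div_iff₀ hvn hε0] at hgu_ub
    rw [hB, div_mul_eq_mul_div, le_div_iff₀ (by positivity : (0:ℝ) < r * ε)]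
    nlinarith
  -- spanning subset of the lattice
  obtain ⟨b, hbsub, hbspan, hbind⟩ := exists_linearIndependent ℝ ((L : Set V))
  rw [hLspan] at hbspan
  have hbfin : b.Finite := hbind.setFinite
  -- G is finite
  have hGfin : G.Finite := by
    set F : (V →ₗ[ℝ] V) → (↥hbfin.toFinset → V) := fun g i => g (i : V) with hF
    have hinj : Set.InjOn F G := by
      intro g₁ hg₁ g₂ hg₂ h
      apply LinearMap.ext_on (s := b) (by rw [hbspan])
      intro x hx
      exact congrFun h ⟨x, hbfin.mem_toFinset.2 hx⟩
    have himg : F '' G ⊆ Set.pi Set.univ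
        (fun i : ↥hbfin.toFinset => (L : Set V) ∩ Metric.closedBall 0 (B * ‖(i : V)‖)) := by
      rintro _ ⟨g, hg, rfl⟩
      rw [Set.mem_univ_pi]
      intro i
      constructor
      · obtain ⟨⟨γ, hγΓ, rfl⟩, -⟩ := hg
        rw [← hΓL γ hγΓ]
        exact Set.mem_image_of_mem _ (hbsub (hbfin.mem_toFinset.1 i.2))
      · rw [Metric.mem_closedBall, dist_zero_right]
        exact hGnorm g hg _
    have hpifin : (Set.pi Set.univ fun i : ↥hbfin.toFinset =>
        (L : Set V) ∩ Metric.closedBall 0 (B * ‖(i : V)‖)).Finite :=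
      Set.Finite.pi (fun i => lattice_inter_finite L hLdisc _)
    exact Set.Finite.of_finite_image (hpifin.subset himg) hinj
  have heq : {z : V | (∃ γ ∈ Γ, ((γ : V →ₗ[ℝ] V)) y = z) ∧ ⟪ξ, z⟫ ≤ M}
      = (fun g : V →ₗ[ℝ] V => g y) '' G := by
    ext z
    constructor
    · rintro ⟨⟨γ, hγΓ, rfl⟩, hM⟩
      exact ⟨(γ : V →ₗ[ℝ] V), ⟨⟨γ, hγΓ, rfl⟩, hM⟩, rfl⟩
    · rintro ⟨g, ⟨⟨γ, hγΓ, rfl⟩, hM⟩, rfl⟩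
      exact ⟨⟨γ, hγΓ, rfl⟩, hM⟩
  rw [heq]
  exact hGfin.image _

end Fin

/-- Let `Γ ≤ GL(V)` preserve an open nondegenerate convex cone `C`
and a lattice `L`. Identifying `V*` with `V` via the inner product, for every
`y ∈ C` the set `U₀` of `ξ` in the open dual cone `C°` with `ξ(y') > ξ(y)` for
all `y' ∈ Γy \ {y}` is a nonempty open convex cone contained in `C°`. -/
theorem stmt_11 {V : Type*} [NormedAddCommGroup V] [InnerProductSpace ℝ V]
    [FiniteDimensional ℝ V]
    (L : AddSubgroup V) (hLdisc : DiscreteTopology L)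
    (hLspan : Submodule.span ℝ (L : Set V) = ⊤)
    (C : Set V) (hCopen : IsOpen C) (hCconv : Convex ℝ C) (hCne : C.Nonempty)
    (hCcone : ∀ x ∈ C, ∀ t : ℝ, 0 < t → t • x ∈ C)
    (hCnd : ∀ x v : V, v ≠ 0 → ¬ ∀ t : ℝ, x + t • v ∈ C)
    (Γ : Subgroup (LinearMap.GeneralLinearGroup ℝ V))
    (hΓC : ∀ γ ∈ Γ, (γ : V →ₗ[ℝ] V) '' C = C)
    (hΓL : ∀ γ ∈ Γ, (γ : V →ₗ[ℝ] V) '' (L : Set V) = (L : Set V))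
    (y : V) (hy : y ∈ C)
    (Cdeg : Set V) (hCdeg : Cdeg = interior {ξ : V | ∀ x ∈ C, 0 ≤ ⟪ξ, x⟫})
    (U₀ : Set V)
    (hU₀ : U₀ = {ξ ∈ Cdeg | ∀ γ ∈ Γ, (γ : V →ₗ[ℝ] V) y ≠ y →
      ⟪ξ, y⟫ < ⟪ξ, (γ : V →ₗ[ℝ] V) y⟫}) :
    IsOpen U₀ ∧ Convex ℝ U₀ ∧ (∀ ξ ∈ U₀, ∀ t : ℝ, 0 < t → t • ξ ∈ U₀) ∧
      U₀ ⊆ Cdeg ∧ U₀.Nonempty := by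
  classical
  subst hCdeg hU₀
  rcases subsingleton_or_nontrivial V with hV | hV
  · -- trivial case
    have h1 : {ξ : V | ∀ x ∈ C, 0 ≤ ⟪ξ, x⟫} = Set.univ := by
      ext ξ
      simp only [Set.mem_setOf_eq, Set.mem_univ, iff_true]
      intro x hx
      have hξ : ξ = 0 := Subsingleton.elim _ _
      simp [hξ]
    have h2 : {ξ ∈ interior {ξ : V | ∀ x ∈ C, 0 ≤ ⟪ξ, x⟫} |
        ∀ γ ∈ Γ, (γ : V →ₗ[ℝ] V) y ≠ y →
          ⟪ξ, y⟫ < ⟪ξ, (γ : V →ₗ[ℝ] V) y⟫} = Set.univ := by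
      rw [h1, interior_univ]
      ext ξ
      simp only [Set.mem_setOf_eq, Set.mem_univ, true_and, iff_true, Set.sep_univ]
      intro γ hγ hne
      exact absurd (Subsingleton.elim _ _) hne
    rw [h2, h1, interior_univ]
    exact ⟨isOpen_univ, convex_univ, fun _ _ t _ => Set.mem_univ _, Set.subset_univ _,
      ⟨0, Set.mem_univ 0⟩⟩
  -- main case
  have h0 : (0:V) ∉ C := cone_zero_not_mem hCopen hCcone hCnd
  have hne0 : ∀ x ∈ C, x ≠ (0:V) := fun x hx h => h0 (h ▸ hx)
  have hdualRW : {ξ : V | ∀ x ∈ C, 0 ≤ ⟪ξ, x⟫} = dualSet' C := rfl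
  rw [hdualRW]
  have hy0 : y ≠ 0 := hne0 y hy
  have hyn : 0 < ‖y‖ := norm_pos_iff.2 hy0
  -- closed ball around y inside C
  obtain ⟨r₁, hr₁0, hr₁⟩ := Metric.isOpen_iff.1 hCopen y hy
  have hrc : Metric.closedBall y (r₁/2) ⊆ C :=
    le_trans (Metric.closedBall_subset_ball (by linarith)) hr₁
  have hrc0 : 0 < r₁/2 := by linarith
  -- orbit points are in C
  have horbC : ∀ γ ∈ Γ, (γ : V →ₗ[ℝ] V) y ∈ C := by
    intro γ hγ
    rw [← hΓC γ hγ]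
    exact Set.mem_image_of_mem _ hy
  -- U₀ ⊆ Cdeg
  have hsub : {ξ ∈ interior (dualSet' C) | ∀ γ ∈ Γ, (γ : V →ₗ[ℝ] V) y ≠ y →
      ⟪ξ, y⟫ < ⟪ξ, (γ : V →ₗ[ℝ] V) y⟫} ⊆ interior (dualSet' C) :=
    fun ξ hξ => hξ.1
  -- cone property
  have hconeU : ∀ ξ ∈ {ξ ∈ interior (dualSet' C) | ∀ γ ∈ Γ, (γ : V →ₗ[ℝ] V) y ≠ y →
      ⟪ξ, y⟫ < ⟪ξ, (γ : V →ₗ[ℝ] V) y⟫}, ∀ t : ℝ, 0 < t →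
      t • ξ ∈ {ξ ∈ interior (dualSet' C) | ∀ γ ∈ Γ, (γ : V →ₗ[ℝ] V) y ≠ y →
        ⟪ξ, y⟫ < ⟪ξ, (γ : V →ₗ[ℝ] V) y⟫} := by
    rintro ξ ⟨hdeg, hlt⟩ t ht
    constructor
    · obtain ⟨ε, hε0, hε⟩ := eps_of_mem_interior_dualSet hne0 hdeg
      apply mem_interior_dualSet_of_eps (ε := t * ε) (by positivity)
      intro x hx
      rw [real_inner_smul_left, mul_assoc]
      exact mul_le_mul_of_nonneg_left (hε x hx) ht.le
    · intro γ hγ hne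
      rw [real_inner_smul_left, real_inner_smul_left]
      exact mul_lt_mul_of_pos_left (hlt γ hγ hne) ht
  -- convexity
  have hconvU : Convex ℝ {ξ ∈ interior (dualSet' C) | ∀ γ ∈ Γ, (γ : V →ₗ[ℝ] V) y ≠ y →
      ⟪ξ, y⟫ < ⟪ξ, (γ : V →ₗ[ℝ] V) y⟫} := by
    rintro ξ₁ ⟨hdeg₁, hlt₁⟩ ξ₂ ⟨hdeg₂, hlt₂⟩ a b ha hb hab
    constructor
    · exact (convex_dualSet' (C := C)).interior hdeg₁ hdeg₂ ha hb hab
    · intro γ hγ hne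
      rw [inner_add_left, inner_add_left, real_inner_smul_left, real_inner_smul_left,
        real_inner_smul_left, real_inner_smul_left]
      rcases ha.lt_or_eq with ha' | ha'
      · exact add_lt_add_of_lt_of_le (mul_lt_mul_of_pos_left (hlt₁ γ hγ hne) ha')
          (mul_le_mul_of_nonneg_left (hlt₂ γ hγ hne).le hb)
      · have hb' : 0 < b := by rw [← ha'] at hab; linarith
        exact add_lt_add_of_le_of_lt (mul_le_mul_of_nonneg_left (hlt₁ γ hγ hne).le ha)
          (mul_lt_mul_of_pos_left (hlt₂ γ hγ hne) hb')
  -- openness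
  have hopenU : IsOpen {ξ ∈ interior (dualSet' C) | ∀ γ ∈ Γ, (γ : V →ₗ[ℝ] V) y ≠ y →
      ⟪ξ, y⟫ < ⟪ξ, (γ : V →ₗ[ℝ] V) y⟫} := by
    rw [Metric.isOpen_iff]
    rintro ξ ⟨hdeg, hlt⟩
    obtain ⟨ε, hε0, hε⟩ := eps_of_mem_interior_dualSet hne0 hdeg
    have hξy : 0 < ⟪ξ, y⟫ := lt_of_lt_of_le (by positivity) (hε y hy)
    have hξ0 : ξ ≠ 0 := by
      intro h
      rw [h, inner_zero_left] at hξy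
      exact lt_irrefl _ hξy
    have hξn : 0 < ‖ξ‖ := norm_pos_iff.2 hξ0
    set c₁ : ℝ := ⟪ξ, y⟫ + ‖y‖ with hc₁
    set M : ℝ := ‖ξ‖ * (2 * c₁ / ε) with hM
    have hF : {z : V | (∃ γ ∈ Γ, (γ : V →ₗ[ℝ] V) y = z) ∧ ⟪ξ, z⟫ ≤ M}.Finite :=
      finite_orbit_sublevel L hLdisc hLspan Γ hΓC hΓL hy hrc0 hrc hε0 hε M
    set D : Finset V := hF.toFinset.erase y with hD
    have hDpos : ∀ z ∈ D, 0 < ⟪ξ, z - y⟫ := by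
      intro z hz
      obtain ⟨hzy, hzF⟩ := Finset.mem_erase.1 hz
      rw [Set.Finite.mem_toFinset] at hzF
      obtain ⟨⟨γ, hγ, rfl⟩, -⟩ := hzF
      rw [inner_sub_right, sub_pos]
      exact hlt γ hγ hzy
    set E : Finset ℝ :=
      insert (min (ε/2) 1) (D.image fun z => ⟪ξ, z - y⟫ / (2 * (‖z - y‖ + 1))) with hE
    have hEne : E.Nonempty := ⟨_, Finset.mem_insert_self _ _⟩
    set δ : ℝ := E.min' hEne with hδ
    have hδpos : 0 < δ := by
      apply (Finset.lt_min'_iff E hEne).2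
      intro e he
      rcases Finset.mem_insert.1 he with rfl | he
      · exact lt_min (by positivity) one_pos
      · obtain ⟨z, hz, rfl⟩ := Finset.mem_image.1 he
        have := hDpos z hz
        positivity
    have hδle : δ ≤ min (ε/2) 1 := Finset.min'_le _ _ (Finset.mem_insert_self _ _)
    refine ⟨δ, hδpos, fun ξ' hξ' => ?_⟩
    rw [Metric.mem_ball, dist_eq_norm] at hξ'
    have hd1 : ‖ξ' - ξ‖ < ε/2 := lt_of_lt_of_le hξ' (hδle.trans (min_le_left _ _))
    have hd2 : ‖ξ' - ξ‖ < 1 := lt_of_lt_of_le hξ' (hδle.trans (min_le_right _ _))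
    -- ε/2 bound for ξ'
    have hε' : ∀ x ∈ C, ε/2 * ‖x‖ ≤ ⟪ξ', x⟫ := by
      intro x hx
      have h2 : ⟪ξ', x⟫ = ⟪ξ, x⟫ + ⟪ξ' - ξ, x⟫ := by
        rw [← inner_add_left]; congr 1; abel
      have h3 : |⟪ξ' - ξ, x⟫| ≤ ‖ξ' - ξ‖ * ‖x‖ := abs_real_inner_le_norm _ _
      have h4 : ‖ξ' - ξ‖ * ‖x‖ ≤ ε/2 * ‖x‖ :=
        mul_le_mul_of_nonneg_right hd1.le (norm_nonneg _)
      have := hε x hx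
      have := neg_abs_le ⟪ξ' - ξ, x⟫
      rw [h2]; linarith
    constructor
    · exact mem_interior_dualSet_of_eps (by positivity) hε'
    · intro γ hγ hne
      set z := (γ : V →ₗ[ℝ] V) y with hz
      have hzC : z ∈ C := horbC γ hγ
      have hb1 : ⟪ξ', y⟫ ≤ c₁ := by
        have h2 : ⟪ξ', y⟫ = ⟪ξ, y⟫ + ⟪ξ' - ξ, y⟫ := by
          rw [← inner_add_left]; congr 1; abel
        have h3 : |⟪ξ' - ξ, y⟫| ≤ ‖ξ' - ξ‖ * ‖y‖ := abs_real_inner_le_norm _ _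
        have h4 : ‖ξ' - ξ‖ * ‖y‖ ≤ 1 * ‖y‖ :=
          mul_le_mul_of_nonneg_right hd2.le (norm_nonneg _)
        have := abs_le.1 h3
        rw [h2, hc₁]; nlinarith [this.2]
      by_cases hzF : z ∈ hF.toFinset
      · have hzD : z ∈ D := Finset.mem_erase.2 ⟨hne, hzF⟩
        have hpos := hDpos z hzD
        have hδle2 : δ ≤ ⟪ξ, z - y⟫ / (2 * (‖z - y‖ + 1)) :=
          Finset.min'_le _ _ (Finset.mem_insert_of_mem (Finset.mem_image_of_mem _ hzD))
        have hkey : 0 < ⟪ξ', z - y⟫ := by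
          have h2 : ⟪ξ', z - y⟫ = ⟪ξ, z - y⟫ + ⟪ξ' - ξ, z - y⟫ := by
            rw [← inner_add_left]; congr 1; abel
          have h3 : |⟪ξ' - ξ, z - y⟫| ≤ ‖ξ' - ξ‖ * ‖z - y‖ := abs_real_inner_le_norm _ _
          have h5 : ‖ξ' - ξ‖ * ‖z - y‖ ≤ ⟪ξ, z - y⟫ / (2 * (‖z - y‖ + 1)) * ‖z - y‖ :=
            mul_le_mul_of_nonneg_right (le_of_lt (lt_of_lt_of_le hξ' hδle2)) (norm_nonneg _)
          have h6 : ⟪ξ, z - y⟫ / (2 * (‖z - y‖ + 1)) * ‖z - y‖ ≤ ⟪ξ, z - y⟫ / 2 := by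
            rw [div_mul_eq_mul_div, div_le_div_iff₀ (by positivity) (by norm_num)]
            nlinarith [norm_nonneg (z - y)]
          have := abs_le.1 h3
          rw [h2]; nlinarith [this.1]
        rw [inner_sub_right, sub_pos] at hkey
        exact hkey
      · -- far away points
        have hzM : M < ⟪ξ, z⟫ := by
          by_contra hcon
          push_neg at hcon
          exact hzF (Set.Finite.mem_toFinset _ |>.2 ⟨⟨γ, hγ, rfl⟩, hcon⟩)
        have hzn : 2 * c₁ / ε < ‖z‖ := by
          have h7 : ⟪ξ, z⟫ ≤ ‖ξ‖ * ‖z‖ := real_inner_le_norm _ _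
          have h8 : ‖ξ‖ * (2 * c₁ / ε) < ‖ξ‖ * ‖z‖ := lt_of_lt_of_le (hM ▸ hzM) h7
          exact lt_of_mul_lt_mul_left h8 (norm_nonneg _)
        have h9 : c₁ < ε/2 * ‖z‖ := by
          have := mul_lt_mul_of_pos_left hzn (by positivity : (0:ℝ) < ε/2)
          calc c₁ = ε/2 * (2 * c₁ / ε) := by field_simp
            _ < ε/2 * ‖z‖ := this
        exact lt_of_le_of_lt hb1 (lt_of_lt_of_le h9 (hε' z hzC))
  -- nonemptiness
  refine ⟨hopenU, hconvU, hconeU, hsub, ?_⟩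
  obtain ⟨ξs, εs, hεs0, hεs⟩ := exists_eps_interior_dualSet hCopen hCconv hCne hCcone hCnd
    (fun v hv => mem_closure_of_forall_dual hCconv hCne hCcone hv) h0
  set c : ℝ := ⟪ξs, y⟫ + εs/2 * ‖y‖ with hc
  have hcy : εs * ‖y‖ ≤ ⟪ξs, y⟫ := hεs y hy
  have hipy : 0 < ⟪ξs, y⟫ := lt_of_lt_of_le (mul_pos hεs0 hyn) hcy
  have hc0 : 0 < c := by
    rw [hc]
    have h2 : 0 ≤ εs / 2 * ‖y‖ := by positivity
    linarith
  set M : ℝ := ‖ξs‖ * (2 * c / εs) with hM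
  -- sublevel transfer
  have hsublevel : ∀ ξ' : V, ‖ξ' - ξs‖ ≤ εs/2 → ∀ z ∈ C, ⟪ξ', z⟫ ≤ c → ⟪ξs, z⟫ ≤ M := by
    intro ξ' hd z hzC hzc
    have h2 : ⟪ξ', z⟫ = ⟪ξs, z⟫ + ⟪ξ' - ξs, z⟫ := by
      rw [← inner_add_left]; congr 1; abel
    have h3 : |⟪ξ' - ξs, z⟫| ≤ ‖ξ' - ξs‖ * ‖z‖ := abs_real_inner_le_norm _ _
    have h4 : ‖ξ' - ξs‖ * ‖z‖ ≤ εs/2 * ‖z‖ := mul_le_mul_of_nonneg_right hd (norm_nonneg _)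
    have h5 := hεs z hzC
    have h6 : εs/2 * ‖z‖ ≤ ⟪ξ', z⟫ := by
      have := abs_le.1 h3
      rw [h2]; nlinarith [this.1]
    have h7 : ‖z‖ ≤ 2 * c / εs := by
      rw [le_div_iff₀ hεs0]; nlinarith
    calc ⟪ξs, z⟫ ≤ ‖ξs‖ * ‖z‖ := real_inner_le_norm _ _
      _ ≤ ‖ξs‖ * (2 * c / εs) := mul_le_mul_of_nonneg_left h7 (norm_nonneg _)
  -- the finite sublevel set of the orbit
  have hS : {z : V | (∃ γ ∈ Γ, (γ : V →ₗ[ℝ] V) y = z) ∧ ⟪ξs, z⟫ ≤ M}.Finite :=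
    finite_orbit_sublevel L hLdisc hLspan Γ hΓC hΓL hy hrc0 hrc hεs0 hεs M
  have hyS : y ∈ {z : V | (∃ γ ∈ Γ, (γ : V →ₗ[ℝ] V) y = z) ∧ ⟪ξs, z⟫ ≤ M} := by
    refine ⟨⟨1, one_mem Γ, ?_⟩, ?_⟩
    · simp
    · have h7 : ‖y‖ ≤ 2 * c / εs := by
        rw [hc, le_div_iff₀ hεs0]; nlinarith [hcy, hipy]
      calc ⟪ξs, y⟫ ≤ ‖ξs‖ * ‖y‖ := real_inner_le_norm _ _
        _ ≤ ‖ξs‖ * (2 * c / εs) := mul_le_mul_of_nonneg_left h7 (norm_nonneg _)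
  -- perturb to get distinct values on S
  set W : Finset V := ((hS.toFinset ×ˢ hS.toFinset).image fun p => p.1 - p.2).filter
    (· ≠ 0) with hW
  have hWne : ∀ w ∈ W, w ≠ 0 := fun w hw => (Finset.mem_filter.1 hw).2
  obtain ⟨ξ, hξd, hξW⟩ := aux_perturb ξs (by positivity : (0:ℝ) < εs/2) W hWne
  have hξd' : ‖ξ - ξs‖ ≤ εs/2 := hξd.le
  have hξb : ∀ x ∈ C, εs/2 * ‖x‖ ≤ ⟪ξ, x⟫ := by
    intro x hx
    have h2 : ⟪ξ, x⟫ = ⟪ξs, x⟫ + ⟪ξ - ξs, x⟫ := by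
      rw [← inner_add_left]; congr 1; abel
    have h3 : |⟪ξ - ξs, x⟫| ≤ ‖ξ - ξs‖ * ‖x‖ := abs_real_inner_le_norm _ _
    have h4 : ‖ξ - ξs‖ * ‖x‖ ≤ εs/2 * ‖x‖ := mul_le_mul_of_nonneg_right hξd' (norm_nonneg _)
    have := hεs x hx
    have := abs_le.1 h3
    rw [h2]; nlinarith [this.1]
  have hdistinct : ∀ z ∈ hS.toFinset, ∀ z' ∈ hS.toFinset, z ≠ z' → ⟪ξ, z⟫ ≠ ⟪ξ, z'⟫ := by
    intro z hz z' hz' hne heq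
    have hmem : z - z' ∈ W := by
      rw [hW, Finset.mem_filter]
      exact ⟨Finset.mem_image.2 ⟨(z, z'), Finset.mem_product.2 ⟨hz, hz'⟩, rfl⟩,
        sub_ne_zero.2 hne⟩
    apply hξW _ hmem
    rw [inner_sub_right, heq, sub_self]
  -- minimize over S
  have hSne : hS.toFinset.Nonempty := ⟨y, hS.mem_toFinset.2 hyS⟩
  obtain ⟨z₀, hz₀S, hz₀min⟩ := hS.toFinset.exists_min_image (fun z => ⟪ξ, z⟫) hSne
  have hz₀S' := hS.mem_toFinset.1 hz₀S
  obtain ⟨⟨γ₀, hγ₀Γ, hγ₀y⟩, -⟩ := hz₀S'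
  -- strict minimality over the whole orbit
  have hyc : ⟪ξ, y⟫ ≤ c := by
    have h2 : ⟪ξ, y⟫ = ⟪ξs, y⟫ + ⟪ξ - ξs, y⟫ := by
      rw [← inner_add_left]; congr 1; abel
    have h3 : |⟪ξ - ξs, y⟫| ≤ ‖ξ - ξs‖ * ‖y‖ := abs_real_inner_le_norm _ _
    have h4 : ‖ξ - ξs‖ * ‖y‖ ≤ εs/2 * ‖y‖ := mul_le_mul_of_nonneg_right hξd' (norm_nonneg _)
    have := abs_le.1 h3
    rw [h2, hc]; nlinarith [this.2]
  have hstrict : ∀ z : V, (∃ γ ∈ Γ, (γ : V →ₗ[ℝ] V) y = z) → z ≠ z₀ →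
      ⟪ξ, z₀⟫ < ⟪ξ, z⟫ := by
    intro z hzorb hzne
    by_cases hzS : z ∈ hS.toFinset
    · exact lt_of_le_of_ne (hz₀min z hzS) (hdistinct z₀ hz₀S z hzS (Ne.symm hzne))
    · obtain ⟨γ, hγ, rfl⟩ := hzorb
      have hzC : (γ : V →ₗ[ℝ] V) y ∈ C := horbC γ hγ
      have hzc : c < ⟪ξ, (γ : V →ₗ[ℝ] V) y⟫ := by
        by_contra hcon
        push_neg at hcon
        exact hzS (hS.mem_toFinset.2 ⟨⟨γ, hγ, rfl⟩, hsublevel ξ hξd' _ hzC hcon⟩)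
      calc ⟪ξ, z₀⟫ ≤ ⟪ξ, y⟫ := hz₀min y (hS.mem_toFinset.2 hyS)
        _ ≤ c := hyc
        _ < _ := hzc
  -- pull back by γ₀ via the adjoint
  set g₀ : V →ₗ[ℝ] V := (γ₀ : V →ₗ[ℝ] V) with hg₀
  set ξ₂ : V := LinearMap.adjoint g₀ ξ with hξ₂
  have hadj : ∀ x : V, ⟪ξ₂, x⟫ = ⟪ξ, g₀ x⟫ := by
    intro x
    rw [hξ₂, LinearMap.adjoint_inner_left]
  have hginv : ∀ w : V, ((γ₀⁻¹ : LinearMap.GeneralLinearGroup ℝ V) : V →ₗ[ℝ] V) (g₀ w) = w := by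
    intro w
    rw [hg₀, ← Module.End.mul_apply, ← Units.val_mul, inv_mul_cancel, Units.val_one,
      Module.End.one_apply]
  have hg₀C : ∀ x ∈ C, g₀ x ∈ C := by
    intro x hx
    rw [hg₀, ← hΓC γ₀ hγ₀Γ]
    exact Set.mem_image_of_mem _ hx
  set N : ℝ := ‖LinearMap.toContinuousLinearMap
    ((γ₀⁻¹ : LinearMap.GeneralLinearGroup ℝ V) : V →ₗ[ℝ] V)‖ with hN
  have hN0 : 0 ≤ N := norm_nonneg _
  have hNbound : ∀ x : V, ‖x‖ ≤ (N + 1) * ‖g₀ x‖ := by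
    intro x
    have h1 : ‖((γ₀⁻¹ : LinearMap.GeneralLinearGroup ℝ V) : V →ₗ[ℝ] V) (g₀ x)‖ ≤ N * ‖g₀ x‖ :=
      (LinearMap.toContinuousLinearMap
        ((γ₀⁻¹ : LinearMap.GeneralLinearGroup ℝ V) : V →ₗ[ℝ] V)).le_opNorm (g₀ x)
    rw [hginv x] at h1
    nlinarith [norm_nonneg (g₀ x)]
  have hξ₂deg : ξ₂ ∈ interior (dualSet' C) := by
    have hpos : (0:ℝ) < N + 1 := by linarith
    apply mem_interior_dualSet_of_eps (ε := εs/2/(N+1)) (div_pos (by positivity) hpos)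
    intro x hx
    rw [hadj]
    have h1 := hξb (g₀ x) (hg₀C x hx)
    have h2 : ‖x‖ / (N+1) ≤ ‖g₀ x‖ := by
      rw [div_le_iff₀ hpos]
      nlinarith [hNbound x]
    calc εs/2/(N+1) * ‖x‖ = εs/2 * (‖x‖/(N+1)) := by ring
      _ ≤ εs/2 * ‖g₀ x‖ := mul_le_mul_of_nonneg_left h2 (by positivity)
      _ ≤ ⟪ξ, g₀ x⟫ := h1
  refine ⟨ξ₂, hξ₂deg, ?_⟩
  intro γ hγ hne
  rw [hadj, hadj]
  have hz₀eq : g₀ y = z₀ := hγ₀y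
  rw [hz₀eq]
  apply hstrict
  · refine ⟨γ₀ * γ, mul_mem hγ₀Γ hγ, ?_⟩
    rw [Units.val_mul, Module.End.mul_apply]
  · intro h
    apply hne
    have := congrArg (((γ₀⁻¹ : LinearMap.GeneralLinearGroup ℝ V) : V →ₗ[ℝ] V)) h
    rw [hginv, ← hz₀eq, hginv] at this
    exact this
end
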